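/- arXiv:1102.1952 — 8 statements merged into one kernel-verified Lean document; each statement's English description precedes it below -/
import Mathlib

section
/- Let M : (0,∞) → (0,∞) be continuous and nonincreasing with M(t) → +∞ as t → 0⁺. Define the Legendre transform L(M)(x) := inf_{τ>0} (xτ + M(τ)) and the Köhlbecker transform K(M)(x) := −log( x · ∫₀^∞ e^{−(xt + M(t))} dt ). Then K(M)(x)/L(M)(x) → 1 as x → +∞. -/
open MeasureTheory Filter

private lemma kohlbecker_integral_exp_neg_mul {b : ℝ} (hb : 0 < b) :
    ∫ t in Set.Ioi (0:ℝ), Real.exp (-(b * t)) = b⁻¹ := by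
  have h := integral_comp_mul_left_Ioi (fun x => Real.exp (-x)) 0 hb
  simp only [mul_zero, integral_exp_neg_Ioi, neg_zero, Real.exp_zero, smul_eq_mul,
    mul_one] at h
  exact h

/-- Proposition 2.2(1): the Köhlbecker transform
`K(M)(x) = -log(x ∫₀^∞ e^{-(xt+M(t))} dt)` is asymptotically equivalent at `+∞`
to the Legendre transform `L(M)(x) = inf_{τ>0} (xτ + M(τ))`. -/
theorem stmt_1 (M : ℝ → ℝ)
    (hpos : ∀ t > (0 : ℝ), 0 < M t)
    (hcont : ContinuousOn M (Set.Ioi 0))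
    (hanti : AntitoneOn M (Set.Ioi 0))
    (hlim : Tendsto M (nhdsWithin 0 (Set.Ioi 0)) atTop)
    (L K : ℝ → ℝ)
    (hL : ∀ x : ℝ, L x = ⨅ τ : Set.Ioi (0 : ℝ), (x * (τ : ℝ) + M τ))
    (hK : ∀ x : ℝ, K x =
      -Real.log (x * ∫ t in Set.Ioi (0 : ℝ), Real.exp (-(x * t + M t)))) :
    Tendsto (fun x => K x / L x) atTop (nhds 1) := by
  open Set in
  -- boundedness below of the defining family of `L`
  have hBdd : ∀ x : ℝ, 0 ≤ x →
      BddBelow (Set.range fun τ : Set.Ioi (0:ℝ) => x * (τ:ℝ) + M τ) := by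
    intro x hx
    refine ⟨0, ?_⟩
    rintro y ⟨τ, rfl⟩
    dsimp only
    have h1 := hpos τ τ.2
    have h2 : (0:ℝ) < τ := τ.2
    nlinarith [mul_nonneg hx h2.le]
  have hLle : ∀ x : ℝ, 0 ≤ x → ∀ τ : ℝ, 0 < τ → L x ≤ x * τ + M τ := by
    intro x hx τ hτ
    rw [hL]
    exact ciInf_le (hBdd x hx) ⟨τ, hτ⟩
  -- `L` tends to infinity
  have hLtop : Tendsto L atTop atTop := by
    rw [tendsto_atTop]
    intro b
    obtain ⟨t₀, ht₀pos, ht₀⟩ : ∃ t₀ > (0:ℝ), ∀ t, 0 < t → t ≤ t₀ → b ≤ M t := by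
      have h := hlim.eventually (eventually_ge_atTop b)
      rw [eventually_nhdsWithin_iff, Metric.eventually_nhds_iff] at h
      obtain ⟨δ, hδ, hball⟩ := h
      refine ⟨δ/2, by linarith, fun t ht ht' => ?_⟩
      refine hball ?_ ht
      rw [Real.dist_eq, sub_zero, abs_of_pos ht]
      linarith
    filter_upwards [eventually_ge_atTop (b / t₀), eventually_ge_atTop 0] with x hx hx0
    rw [hL]
    refine le_ciInf fun τ => ?_
    have hτ : (0:ℝ) < τ := τ.2
    have hMτ := hpos τ hτ
    rcases le_or_gt (τ:ℝ) t₀ with h | h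
    · have := ht₀ τ hτ h
      nlinarith [mul_nonneg hx0 hτ.le]
    · have hb : b ≤ x * t₀ := by
        rw [div_le_iff₀ ht₀pos] at hx; linarith
      nlinarith
  -- integrability
  have hme : AEMeasurable M (volume.restrict (Ioi (0:ℝ))) :=
    hcont.aemeasurable measurableSet_Ioi
  have hint : ∀ x : ℝ, 0 < x →
      IntegrableOn (fun t => Real.exp (-(x*t + M t))) (Ioi 0) := by
    intro x hx
    have hae : AEMeasurable (fun t => Real.exp (-(x*t + M t)))
        (volume.restrict (Ioi 0)) :=
      (Real.measurable_exp.comp_aemeasurable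
        (((aemeasurable_id.const_mul x).add hme).neg))
    refine Integrable.mono (exp_neg_integrableOn_Ioi 0 hx) hae.aestronglyMeasurable ?_
    filter_upwards [ae_restrict_mem measurableSet_Ioi] with t ht
    have hMt := hpos t ht
    rw [Real.norm_eq_abs, Real.norm_eq_abs, abs_of_pos (Real.exp_pos _),
      abs_of_pos (Real.exp_pos _)]
    exact Real.exp_le_exp.2 (by linarith)
  -- lower bound for the integral
  have hlow : ∀ x : ℝ, 0 < x → ∀ τ : ℝ, 0 < τ →
      Real.exp (-(x*τ + M τ) - 1) ≤ x * ∫ t in Ioi (0:ℝ), Real.exp (-(x*t + M t)) := by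
    intro x hx τ hτ
    have hsub : Ioc τ (τ + 1/x) ⊆ Ioi (0:ℝ) := fun t ht => lt_trans hτ ht.1
    have h1 : ∫ _t in Ioc τ (τ + 1/x), Real.exp (-(x*τ + M τ) - 1)
        ≤ ∫ t in Ioc τ (τ + 1/x), Real.exp (-(x*t + M t)) := by
      refine setIntegral_mono_on (integrableOn_const measure_Ioc_lt_top.ne)
        ((hint x hx).mono_set hsub) measurableSet_Ioc ?_
      intro t ht
      have ht1 : τ < t := ht.1
      have ht2 : t ≤ τ + 1/x := ht.2
      have hMt : M t ≤ M τ := hanti (mem_Ioi.2 hτ) (mem_Ioi.2 (hτ.trans ht1)) ht1.le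
      have hxt : x * t ≤ x * τ + 1 := by
        have := mul_le_mul_of_nonneg_left ht2 hx.le
        rw [mul_add, mul_one_div, div_self hx.ne'] at this
        linarith
      exact Real.exp_le_exp.2 (by linarith)
    have h2 : ∫ t in Ioc τ (τ + 1/x), Real.exp (-(x*t + M t))
        ≤ ∫ t in Ioi (0:ℝ), Real.exp (-(x*t + M t)) := by
      refine setIntegral_mono_set (hint x hx) ?_ (HasSubset.Subset.eventuallyLE hsub)
      filter_upwards with t using (Real.exp_pos _).le
    have h3 : ∫ _t in Ioc τ (τ + 1/x), Real.exp (-(x*τ + M τ) - 1)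
        = (1/x) * Real.exp (-(x*τ + M τ) - 1) := by
      rw [setIntegral_const, measureReal_def, Real.volume_Ioc, smul_eq_mul]
      congr 1
      rw [ENNReal.toReal_ofReal
        (by have h := one_div_pos.mpr hx; linarith : (0:ℝ) ≤ τ + 1/x - τ)]
      ring
    have h4 : (1/x) * Real.exp (-(x*τ + M τ) - 1)
        ≤ ∫ t in Ioi (0:ℝ), Real.exp (-(x*t + M t)) := by
      rw [← h3]; exact h1.trans h2
    calc Real.exp (-(x*τ + M τ) - 1) = x * ((1/x) * Real.exp (-(x*τ + M τ) - 1)) := by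
          field_simp
      _ ≤ x * ∫ t in Ioi (0:ℝ), Real.exp (-(x*t + M t)) :=
          mul_le_mul_of_nonneg_left h4 hx.le
  -- upper bound for the integral
  have hupp : ∀ ε : ℝ, ε ∈ Ioo (0:ℝ) 1 → ∀ x : ℝ, 0 < x →
      x * ∫ t in Ioi (0:ℝ), Real.exp (-(x*t + M t))
        ≤ ε⁻¹ * Real.exp (-(L ((1-ε)*x))) := by
    intro ε hε x hx
    obtain ⟨hε0, hε1⟩ := hε
    have hεx : 0 < ε * x := by positivity
    have h1ε : (0:ℝ) ≤ (1-ε)*x := by nlinarith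
    have hptw : ∀ t ∈ Ioi (0:ℝ), Real.exp (-(x*t + M t))
        ≤ Real.exp (-(ε*x*t)) * Real.exp (-(L ((1-ε)*x))) := by
      intro t ht
      rw [← Real.exp_add]
      refine Real.exp_le_exp.2 ?_
      have := hLle ((1-ε)*x) h1ε t ht
      nlinarith
    have hintR : IntegrableOn
        (fun t => Real.exp (-(ε*x*t)) * Real.exp (-(L ((1-ε)*x)))) (Ioi 0) := by
      refine Integrable.mul_const ?_ _
      have := exp_neg_integrableOn_Ioi 0 hεx
      simp only [neg_mul, mul_assoc] at this ⊢
      exact this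
    have hI : ∫ t in Ioi (0:ℝ), Real.exp (-(x*t + M t))
        ≤ ∫ t in Ioi (0:ℝ), Real.exp (-(ε*x*t)) * Real.exp (-(L ((1-ε)*x))) :=
      setIntegral_mono_on (hint x hx) hintR measurableSet_Ioi hptw
    have hval : ∫ t in Ioi (0:ℝ), Real.exp (-(ε*x*t)) * Real.exp (-(L ((1-ε)*x)))
        = (ε*x)⁻¹ * Real.exp (-(L ((1-ε)*x))) := by
      rw [integral_mul_const]
      congr 1
      rw [← kohlbecker_integral_exp_neg_mul hεx]
    calc x * ∫ t in Ioi (0:ℝ), Real.exp (-(x*t + M t))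
        ≤ x * ((ε*x)⁻¹ * Real.exp (-(L ((1-ε)*x)))) := by
          rw [← hval]; exact mul_le_mul_of_nonneg_left hI hx.le
      _ = ε⁻¹ * Real.exp (-(L ((1-ε)*x))) := by
          field_simp
  -- positivity of x * ∫
  have hIpos : ∀ x : ℝ, 0 < x →
      0 < x * ∫ t in Ioi (0:ℝ), Real.exp (-(x*t + M t)) := by
    intro x hx
    exact lt_of_lt_of_le (Real.exp_pos _) (hlow x hx 1 one_pos)
  -- upper bound for K
  have hKle : ∀ x : ℝ, 0 < x → K x ≤ L x + 2 := by
    intro x hx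
    have hlt : ⨅ τ : Set.Ioi (0:ℝ), (x * (τ:ℝ) + M τ) < L x + 1 := by
      rw [← hL]; linarith
    obtain ⟨τ, hτ⟩ := exists_lt_of_ciInf_lt hlt
    have hτ0 : (0:ℝ) < τ := τ.2
    have hb : Real.exp (-(L x + 2))
        ≤ x * ∫ t in Ioi (0:ℝ), Real.exp (-(x*t + M t)) := by
      refine le_trans ?_ (hlow x hx τ hτ0)
      exact Real.exp_le_exp.2 (by linarith)
    have hlog : -(L x + 2) ≤ Real.log (x * ∫ t in Ioi (0:ℝ), Real.exp (-(x*t + M t))) :=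
      (Real.le_log_iff_exp_le (hIpos x hx)).2 hb
    rw [hK]
    linarith
  -- lower bound for K
  have hKge : ∀ ε : ℝ, ε ∈ Ioo (0:ℝ) 1 → ∀ x : ℝ, 0 < x →
      (1-ε) * L x + Real.log ε ≤ K x := by
    intro ε hε x hx
    obtain ⟨hε0, hε1⟩ := hε
    have hub := hupp ε ⟨hε0, hε1⟩ x hx
    have hlog : Real.log (x * ∫ t in Ioi (0:ℝ), Real.exp (-(x*t + M t)))
        ≤ -Real.log ε - L ((1-ε)*x) := by
      have := Real.log_le_log (hIpos x hx) hub
      rwa [Real.log_mul (by positivity) (Real.exp_ne_zero _), Real.log_exp,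
        Real.log_inv, ← sub_eq_add_neg] at this
    have hLL : (1-ε) * L x ≤ L ((1-ε)*x) := by
      rw [hL ((1-ε)*x)]
      refine le_ciInf fun τ => ?_
      have hτ : (0:ℝ) < τ := τ.2
      have h := hLle x hx.le τ hτ
      have hM := hpos τ hτ
      nlinarith
    rw [hK]
    linarith
  -- conclusion via squeezing
  rw [tendsto_order]
  constructor
  · intro a ha
    have haa : a < 1 := ha
    set ε := min (1/2) ((1-a)/2) with hεdef
    have hε0 : 0 < ε := lt_min (by norm_num) (by linarith)
    have hε1 : ε < 1 := lt_of_le_of_lt (min_le_left _ _) (by norm_num)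
    have haε : a < 1 - ε := by
      have h := min_le_right (1/2 : ℝ) ((1-a)/2)
      rw [← hεdef] at h
      linarith
    have htend : Tendsto (fun x => (1-ε) + Real.log ε / L x) atTop (nhds (1-ε)) := by
      have h := (tendsto_const_nhds (x := Real.log ε) (f := atTop)).div_atTop hLtop
      simpa using tendsto_const_nhds.add h
    filter_upwards [htend.eventually (eventually_gt_nhds haε),
      hLtop.eventually_gt_atTop 0, eventually_gt_atTop 0] with x h1 h2 hx
    have hKb := hKge ε ⟨hε0, hε1⟩ x hx
    calc a < (1-ε) + Real.log ε / L x := h1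
      _ = ((1-ε) * L x + Real.log ε) / L x := by
          field_simp
      _ ≤ K x / L x := (div_le_div_iff_of_pos_right h2).2 hKb
  · intro a ha
    have htend : Tendsto (fun x => 1 + 2 / L x) atTop (nhds 1) := by
      have h := (tendsto_const_nhds (x := (2:ℝ)) (f := atTop)).div_atTop hLtop
      simpa using tendsto_const_nhds.add h
    filter_upwards [htend.eventually (eventually_lt_nhds ha),
      hLtop.eventually_gt_atTop 0, eventually_gt_atTop 0] with x h1 h2 hx
    calc K x / L x ≤ (L x + 2) / L x := (div_le_div_iff_of_pos_right h2).2 (hKle x hx)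
      _ = 1 + 2 / L x := by field_simp
      _ < a := h1
end

section
/- Let M : (0,∞) → (0,∞) be continuous and strictly decreasing with M(t) → +∞ as t → 0⁺. Then the function t ↦ M(t)/t is a continuous strictly decreasing bijection from (0,∞) onto (0,∞); denote its inverse by (M/id)⁻¹. For every t > 0, writing x* := (M/id)⁻¹(t) (the unique x > 0 with M(x) = t·x), one has M(x*) ≤ inf_{τ>0} (tτ + M(τ)) ≤ 2·M(x*). In particular the Legendre transform L(M)(t) := inf_{τ>0}(tτ + M(τ)) satisfies M∘(M/id)⁻¹ ≤ L(M) ≤ 2·M∘(M/id)⁻¹ on (0,∞). -/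
open Filter

/-- Proposition 2.2(3) with explicit constants: for `M` continuous, strictly
decreasing on `(0,∞)` with `M(0⁺) = +∞`, the map `t ↦ M(t)/t` is a continuous
strictly decreasing bijection of `(0,∞)` onto itself, and for each `t > 0`, the
unique `x* > 0` with `M(x*) = t·x*` satisfies
`M(x*) ≤ inf_{τ>0}(tτ + M(τ)) ≤ 2·M(x*)`. -/
theorem stmt_2 (M : ℝ → ℝ)
    (hpos : ∀ t > (0 : ℝ), 0 < M t)
    (hcont : ContinuousOn M (Set.Ioi 0))
    (hanti : StrictAntiOn M (Set.Ioi 0))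
    (hlim : Tendsto M (nhdsWithin 0 (Set.Ioi 0)) atTop) :
    (ContinuousOn (fun t => M t / t) (Set.Ioi 0) ∧
      StrictAntiOn (fun t => M t / t) (Set.Ioi 0) ∧
      Set.BijOn (fun t => M t / t) (Set.Ioi 0) (Set.Ioi 0)) ∧
    ∀ t > (0 : ℝ), ∃ x : ℝ, 0 < x ∧ M x = t * x ∧
      (∀ y : ℝ, 0 < y → M y = t * y → y = x) ∧
      M x ≤ (⨅ τ : Set.Ioi (0 : ℝ), (t * (τ : ℝ) + M τ)) ∧
      (⨅ τ : Set.Ioi (0 : ℝ), (t * (τ : ℝ) + M τ)) ≤ 2 * M x := by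
  set f : ℝ → ℝ := fun t => M t / t with hf
  have hfc : ContinuousOn f (Set.Ioi 0) := by
    apply hcont.div continuousOn_id
    intro x hx; exact ne_of_gt hx
  have hfa : StrictAntiOn f (Set.Ioi 0) := by
    intro a ha b hb hab
    have ha' : (0:ℝ) < a := ha
    have hb' : (0:ℝ) < b := hb
    simp only [hf]
    rw [div_lt_div_iff₀ hb' ha']
    have h1 : M b * a < M a * a := by
      have := hanti ha hb hab
      exact mul_lt_mul_of_pos_right this ha'
    have h2 : M a * a < M a * b := by
      exact mul_lt_mul_of_pos_left hab (hpos a ha')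
    linarith
  -- surjectivity
  have hsurj : ∀ y > (0:ℝ), ∃ x > (0:ℝ), f x = y := by
    intro y hy
    -- find a small with f a > y
    have : ∀ᶠ x in nhdsWithin 0 (Set.Ioi 0), M x ≥ y + 1 := hlim.eventually_ge_atTop (y + 1)
    rw [eventually_nhdsWithin_iff] at this
    rcases Metric.eventually_nhds_iff.mp this with ⟨ε, hε, hball⟩
    set a : ℝ := min (ε / 2) (1/2) with hadef
    have ha0 : 0 < a := lt_min (by positivity) (by norm_num)
    have ha1 : a ≤ 1/2 := min_le_right _ _
    have haM : M a ≥ y + 1 := by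
      apply hball (by
        rw [Real.dist_eq, sub_zero, abs_of_pos ha0]
        exact lt_of_le_of_lt (min_le_left _ _) (by linarith)) ha0
    have hfa_gt : f a > y := by
      have h1 : f a ≥ M a := by
        rw [hf]
        rw [ge_iff_le, le_div_iff₀ ha0]
        nlinarith [hpos a ha0]
      linarith
    -- find b large with f b < y
    set b : ℝ := max (a + 1) (M 1 / y + 1) with hbdef
    have hb1 : (1:ℝ) ≤ b := le_trans (by linarith) (le_max_left _ _)
    have hb0 : 0 < b := by linarith
    have hab : a < b := lt_of_lt_of_le (by linarith) (le_max_left _ _)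
    have hMb : M b ≤ M 1 := by
      rcases eq_or_lt_of_le hb1 with h | h
      · rw [← h]
      · exact le_of_lt (hanti (by norm_num) (by exact hb0) h)
    have hfb_lt : f b < y := by
      rw [hf]
      rw [div_lt_iff₀ hb0]
      have hb2 : M 1 / y + 1 ≤ b := le_max_right _ _
      have : M 1 / y < b := by linarith
      have := (div_lt_iff₀ hy).mp this
      nlinarith
    -- IVT
    have hsub : Set.Icc a b ⊆ Set.Ioi 0 := fun x hx => lt_of_lt_of_le ha0 hx.1
    have := intermediate_value_Icc' (le_of_lt hab) (hfc.mono hsub)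
    have hymem : y ∈ Set.Icc (f b) (f a) := ⟨le_of_lt hfb_lt, le_of_lt hfa_gt⟩
    rcases this hymem with ⟨x, hx, hfx⟩
    exact ⟨x, hsub hx, hfx⟩
  have hinj : Set.InjOn f (Set.Ioi 0) := hfa.injOn
  have hmaps : Set.MapsTo f (Set.Ioi 0) (Set.Ioi 0) := by
    intro x hx
    have hx' : (0:ℝ) < x := hx
    exact div_pos (hpos x hx') hx'
  refine ⟨⟨hfc, hfa, hmaps, hinj, ?_⟩, ?_⟩
  · intro y hy
    rcases hsurj y hy with ⟨x, hx0, hfx⟩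
    exact ⟨x, hx0, hfx⟩
  · intro t ht
    rcases hsurj t ht with ⟨x, hx0, hfx⟩
    have hMx : M x = t * x := by
      simp only [hf] at hfx; rw [div_eq_iff (ne_of_gt hx0)] at hfx
      linarith [hfx]
    refine ⟨x, hx0, hMx, ?_, ?_, ?_⟩
    · intro y hy0 hMy
      apply hinj hy0 hx0
      simp only [hf]
      rw [hMy, hMx, mul_div_assoc, mul_div_assoc,
        div_self (ne_of_gt hy0), div_self (ne_of_gt hx0)]
    · -- lower bound
      apply le_ciInf
      rintro ⟨τ, hτ⟩
      have hτ0 : (0:ℝ) < τ := hτ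
      rcases le_or_gt x τ with h | h
      · have : t * x ≤ t * τ := mul_le_mul_of_nonneg_left h (le_of_lt ht)
        have := hpos τ hτ0
        simp only []
        linarith [hMx]
      · have : M x ≤ M τ := le_of_lt (hanti hτ0 hx0 h)
        have htτ : 0 ≤ t * τ := le_of_lt (mul_pos ht hτ0)
        simp only []
        linarith
    · -- upper bound
      have hbdd : BddBelow (Set.range fun τ : Set.Ioi (0:ℝ) => t * (τ : ℝ) + M τ) := by
        refine ⟨0, ?_⟩
        rintro z ⟨⟨τ, hτ⟩, rfl⟩
        have hτ0 : (0:ℝ) < τ := hτ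
        have := hpos τ hτ0
        have := mul_pos ht hτ0
        simp only []
        linarith
      have := ciInf_le hbdd (⟨x, hx0⟩ : Set.Ioi (0:ℝ))
      simp only [] at this
      linarith [hMx]
end

section
/- Let G be a countably infinite group and let F : [0,∞) → [0,∞) be nondecreasing with F(t)/t → 0 as t → ∞. Then there exists a function M : G → (0,∞) with Σ_{x∈G} M(x) = 1 and M(x⁻¹) = M(x) for all x ∈ G (a symmetric strictly positive probability density) such that for every C > 0 there is n₀ with sup_{x∈G} M^{*n}(x) ≤ exp(−C·F(n)) for all n ≥ n₀; i.e. −log( sup_{x∈G} M^{*n}(x) ) / F(n) → +∞ as n → ∞ whenever F is eventually positive. -/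
open Filter
open scoped BigOperators Classical

lemma swap_nonneg_summable {α β : Type*} (H : α → β → ℝ) (h0 : ∀ a b, 0 ≤ H a b)
    (h1 : ∀ a, Summable (H a)) (h2 : Summable fun a => ∑' b, H a b) :
    Summable (fun b => ∑' a, H a b) ∧ (∑' b, ∑' a, H a b) = ∑' a, ∑' b, H a b := by
  have hs : Summable (fun p : α × β => H p.1 p.2) := by
    rw [summable_prod_of_nonneg (fun p => h0 p.1 p.2)]
    exact ⟨fun a => h1 a, h2⟩
  have hs' : Summable (fun p : β × α => H p.2 p.1) := by
    exact ((Equiv.prodComm β α).summable_iff (f := fun p : α × β => H p.1 p.2)).mpr hs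
  have hslices := (summable_prod_of_nonneg (f := fun p : β × α => H p.2 p.1)
      (fun p => h0 p.2 p.1)).mp hs'
  refine ⟨hslices.2, ?_⟩
  have e1 : ∑' (p : β × α), H p.2 p.1 = ∑' b, ∑' a, H a b :=
    Summable.tsum_prod' hs' hslices.1
  have e2 : ∑' (p : α × β), H p.1 p.2 = ∑' a, ∑' b, H a b :=
    Summable.tsum_prod' hs (fun a => h1 a)
  have e3 : ∑' (p : β × α), H p.2 p.1 = ∑' (p : α × β), H p.1 p.2 :=
    (Equiv.prodComm β α).tsum_eq (fun p : α × β => H p.1 p.2)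
  rw [← e1, e3, e2]

/-- Convolution of two real-valued functions on a group:
`(f * g)(x) = ∑_y f(y) g(y⁻¹ x)`. -/
noncomputable def gconv {G : Type*} [Group G] (f g : G → ℝ) : G → ℝ :=
  fun x => ∑' y : G, f y * g (y⁻¹ * x)

section gc
variable {G : Type*} [Group G]

/-- reindexing: y ↦ y⁻¹ * x is a bijection of G -/
lemma tsum_shift (h : G → ℝ) (x : G) : ∑' y : G, h (y⁻¹ * x) = ∑' z : G, h z := by
  have := ((Equiv.inv G).trans (Equiv.mulRight x)).tsum_eq h
  simpa using this

lemma summable_shift {h : G → ℝ} (hh : Summable h) (x : G) :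
    Summable fun y : G => h (y⁻¹ * x) := by
  have := ((Equiv.inv G).trans (Equiv.mulRight x)).summable_iff (f := h)
  exact this.mpr hh

lemma gconv_nonneg {f g : G → ℝ} (hf : ∀ y, 0 ≤ f y) (hg : ∀ y, 0 ≤ g y) (x : G) :
    0 ≤ gconv f g x :=
  tsum_nonneg fun y => mul_nonneg (hf y) (hg _)

lemma summable_gconv_inner {f g : G → ℝ} (hg : Summable g) (x y : G) :
    Summable fun y' : G => f y * g (y'⁻¹ * x) :=
  (summable_shift hg x).mul_left (f y)

lemma gconv_le_of_bound {f g : G → ℝ} (hf0 : ∀ y, 0 ≤ f y) (hg0 : ∀ y, 0 ≤ g y)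
    (hg : Summable g) (B : ℝ) (hB : ∀ y, f y ≤ B) (x : G) :
    gconv f g x ≤ B * ∑' z, g z := by
  have h1 : Summable fun y : G => g (y⁻¹ * x) := summable_shift hg x
  have : gconv f g x ≤ ∑' y : G, B * g (y⁻¹ * x) := by
    apply Summable.tsum_le_tsum _ _ (h1.mul_left B)
    · intro y; exact mul_le_mul_of_nonneg_right (hB y) (hg0 _)
    · apply Summable.of_nonneg_of_le (fun y => mul_nonneg (hf0 y) (hg0 _))
        (fun y => mul_le_mul_of_nonneg_right (hB y) (hg0 _)) (h1.mul_left B)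
  calc gconv f g x ≤ ∑' y : G, B * g (y⁻¹ * x) := this
    _ = B * ∑' y : G, g (y⁻¹ * x) := tsum_mul_left
    _ = B * ∑' z, g z := by rw [tsum_shift]

/-- The uncurried summand of gconv is summable, gconv is summable,
and its total mass multiplies. -/
lemma gconv_summable_and_tsum {f g : G → ℝ} (hf0 : ∀ y, 0 ≤ f y) (hg0 : ∀ y, 0 ≤ g y)
    (hf : Summable f) (hg : Summable g) :
    Summable (gconv f g) ∧ ∑' x, gconv f g x = (∑' y, f y) * (∑' z, g z) := by
  set H : G → G → ℝ := fun y x => f y * g (y⁻¹ * x) with hH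
  have h0 : ∀ y x, 0 ≤ H y x := fun y x => mul_nonneg (hf0 y) (hg0 _)

  have h1 : ∀ y, Summable (H y) := by
    intro y
    have : Summable fun x : G => g (y⁻¹ * x) :=
      ((Equiv.mulLeft y⁻¹).summable_iff (f := g)).mpr hg
    exact this.mul_left (f y)
  have h2 : Summable fun y => ∑' x, H y x := by
    have : ∀ y : G, ∑' x, H y x = f y * ∑' z, g z := by
      intro y
      calc ∑' x, f y * g (y⁻¹ * x) = f y * ∑' x, g (y⁻¹ * x) := tsum_mul_left
        _ = f y * ∑' z, g z := by
            congr 1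
            exact (Equiv.mulLeft y⁻¹).tsum_eq g
    rw [show (fun y => ∑' x, H y x) = fun y => f y * ∑' z, g z from funext this]
    exact hf.mul_right _
  obtain ⟨hsum, heq⟩ := swap_nonneg_summable H h0 h1 h2
  have hgc : gconv f g = fun x => ∑' y, H y x := rfl
  constructor
  · rw [hgc]; exact hsum
  · rw [hgc]
    rw [heq]
    have : ∀ y : G, ∑' x, H y x = f y * ∑' z, g z := by
      intro y
      calc ∑' x, f y * g (y⁻¹ * x) = f y * ∑' x, g (y⁻¹ * x) := tsum_mul_left
        _ = f y * ∑' z, g z := by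
            congr 1
            exact (Equiv.mulLeft y⁻¹).tsum_eq g
    rw [show (fun y => ∑' x, H y x) = fun y => f y * ∑' z, g z from funext this]
    exact tsum_mul_right
end gc

/-- `n`-fold convolution power, with `f^{*0} = δ_e` and `f^{*(n+1)} = f * f^{*n}`
(so `f^{*1} = f`). -/
noncomputable def gconvPow {G : Type*} [Group G] (f : G → ℝ) : ℕ → G → ℝ
  | 0 => fun x => if x = 1 then 1 else 0
  | n + 1 => gconv f (gconvPow f n)

section gp
variable {G : Type*} [Group G]

lemma delta_summable : Summable (fun x : G => if x = 1 then (1:ℝ) else 0) := by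
  apply summable_of_ne_finset_zero (s := {1})
  intro x hx
  simp only [Finset.mem_singleton] at hx
  simp [hx]

lemma gconvPow_props {M : G → ℝ} (hM0 : ∀ x, 0 ≤ M x) (hMs : Summable M)
    (hM1 : ∑' x, M x = 1) :
    ∀ n, (∀ x, 0 ≤ gconvPow M n x) ∧ Summable (gconvPow M n) ∧
      ∑' x, gconvPow M n x = 1 := by
  intro n
  induction n with
  | zero =>
    refine ⟨fun x => by dsimp [gconvPow]; split <;> norm_num, delta_summable, ?_⟩
    exact tsum_ite_eq (1 : G) (fun _ => (1 : ℝ))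
  | succ n ih =>
    obtain ⟨h0, hs, h1⟩ := ih
    obtain ⟨hs', h1'⟩ := gconv_summable_and_tsum hM0 h0 hMs hs
    refine ⟨fun x => gconv_nonneg hM0 h0 x, hs', ?_⟩
    rw [show gconvPow M (n+1) = gconv M (gconvPow M n) from rfl] at *
    rw [h1', hM1, h1, one_mul]

lemma gconvPow_le {M a b : G → ℝ} {A B D : ℝ}
    (hab : ∀ x, M x = a x + b x) (ha0 : ∀ x, 0 ≤ a x) (hb0 : ∀ x, 0 ≤ b x)
    (hsa : Summable a) (hsb : Summable b)
    (htsa : ∑' x, a x ≤ A) (hA0 : 0 ≤ A)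
    (hbB : ∀ x, b x ≤ B) (hBD : B ≤ (1 - A) * D) (hD : 0 ≤ D)
    (hM1 : ∑' x, M x = 1) :
    ∀ (n : ℕ) (x : G), gconvPow M n x ≤ A ^ n + D := by
  have hM0 : ∀ x, 0 ≤ M x := fun x => (hab x) ▸ add_nonneg (ha0 x) (hb0 x)
  have hMs : Summable M := by
    have := hsa.add hsb
    exact this.congr (fun x => (hab x).symm)
  intro n
  induction n with
  | zero =>
    intro x
    simp only [gconvPow, pow_zero]
    split <;> linarith
  | succ n ih =>
    intro x
    obtain ⟨hP0, hPs, hP1⟩ := gconvPow_props hM0 hMs hM1 n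
    set P := gconvPow M n with hP
    have hAnD : (0:ℝ) ≤ A ^ n + D := add_nonneg (pow_nonneg hA0 n) hD
    have hkey : gconvPow M (n+1) x = (∑' y, a y * P (y⁻¹ * x)) + ∑' y, b y * P (y⁻¹ * x) := by
      rw [show gconvPow M (n+1) = gconv M P from rfl]
      unfold gconv
      rw [← Summable.tsum_add]
      · apply tsum_congr
        intro y
        rw [hab y]; ring
      · apply Summable.of_nonneg_of_le (fun y => mul_nonneg (ha0 y) (hP0 _))
          (fun y => mul_le_mul_of_nonneg_left (ih _) (ha0 y)) (hsa.mul_right (A ^ n + D))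
      · have hB0 : 0 ≤ B := le_trans (hb0 x) (hbB x)
        apply Summable.of_nonneg_of_le (fun y => mul_nonneg (hb0 y) (hP0 _))
          (fun y => mul_le_mul_of_nonneg_right (hbB y) (hP0 _))
          ((summable_shift hPs x).mul_left B)
    have hT1 : (∑' y, a y * P (y⁻¹ * x)) ≤ A * (A ^ n + D) := by
      have step1 : (∑' y, a y * P (y⁻¹ * x)) ≤ ∑' y, a y * (A ^ n + D) := by
        apply Summable.tsum_le_tsum _ _ (hsa.mul_right (A ^ n + D))
        · intro y; exact mul_le_mul_of_nonneg_left (ih _) (ha0 y)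
        · apply Summable.of_nonneg_of_le (fun y => mul_nonneg (ha0 y) (hP0 _))
            (fun y => mul_le_mul_of_nonneg_left (ih _) (ha0 y)) (hsa.mul_right (A ^ n + D))
      calc (∑' y, a y * P (y⁻¹ * x)) ≤ ∑' y, a y * (A ^ n + D) := step1
        _ = (∑' y, a y) * (A ^ n + D) := tsum_mul_right
        _ ≤ A * (A ^ n + D) := mul_le_mul_of_nonneg_right htsa hAnD
    have hT2 : (∑' y, b y * P (y⁻¹ * x)) ≤ B := by
      have hB0 : 0 ≤ B := le_trans (hb0 x) (hbB x)
      have step1 : (∑' y, b y * P (y⁻¹ * x)) ≤ ∑' y, B * P (y⁻¹ * x) := by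
        apply Summable.tsum_le_tsum _ _ ((summable_shift hPs x).mul_left B)
        · intro y; exact mul_le_mul_of_nonneg_right (hbB y) (hP0 _)
        · apply Summable.of_nonneg_of_le (fun y => mul_nonneg (hb0 y) (hP0 _))
            (fun y => mul_le_mul_of_nonneg_right (hbB y) (hP0 _))
            ((summable_shift hPs x).mul_left B)
      calc (∑' y, b y * P (y⁻¹ * x)) ≤ ∑' y, B * P (y⁻¹ * x) := step1
        _ = B * ∑' y, P (y⁻¹ * x) := tsum_mul_left
        _ = B * 1 := by rw [tsum_shift, hP1]
        _ = B := mul_one B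
    calc gconvPow M (n+1) x ≤ A * (A ^ n + D) + B := by rw [hkey]; exact add_le_add hT1 hT2
      _ ≤ A ^ (n+1) + D := by
          have he : A * (A ^ n + D) + B = A ^ (n+1) + (A * D + B) := by ring
          have h2 : (1 - A) * D = D - A * D := by ring
          linarith
end gp

section mix
variable {G : Type*} [Group G]

noncomputable def mixAs (e : ℕ ≃ G) (N : ℕ → ℕ) (k : ℕ) : Finset G :=
  (Finset.range (N k)).image e ∪ ((Finset.range (N k)).image e).image (fun x => x⁻¹)

noncomputable def mixMu (e : ℕ ≃ G) (N : ℕ → ℕ) (k : ℕ) (x : G) : ℝ :=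
  if x ∈ mixAs e N k then ((mixAs e N k).card : ℝ)⁻¹ else 0

noncomputable def mixM (e : ℕ ≃ G) (N : ℕ → ℕ) (x : G) : ℝ :=
  ∑' k : ℕ, (2:ℝ)⁻¹ ^ (k+1) * mixMu e N k x

variable (e : ℕ ≃ G) (N : ℕ → ℕ)

lemma mixAs_inv_mem {k : ℕ} {x : G} (hx : x ∈ mixAs e N k) : x⁻¹ ∈ mixAs e N k := by
  unfold mixAs at *
  rcases Finset.mem_union.mp hx with h | h
  · exact Finset.mem_union_right _ (Finset.mem_image_of_mem _ h)
  · rcases Finset.mem_image.mp h with ⟨y, hy, rfl⟩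
    exact Finset.mem_union_left _ (by simpa using hy)

lemma mixAs_mem_iff (k : ℕ) (x : G) : x⁻¹ ∈ mixAs e N k ↔ x ∈ mixAs e N k :=
  ⟨fun h => by simpa using mixAs_inv_mem e N h, fun h => mixAs_inv_mem e N h⟩

lemma mixAs_card (k : ℕ) : N k ≤ (mixAs e N k).card := by
  calc N k = ((Finset.range (N k)).image e).card := by
        rw [Finset.card_image_of_injective _ e.injective, Finset.card_range]
    _ ≤ (mixAs e N k).card := Finset.card_le_card Finset.subset_union_left

lemma mixAs_mem {j k : ℕ} (hj : j < N k) : e j ∈ mixAs e N k :=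
  Finset.mem_union_left _ (Finset.mem_image_of_mem _ (Finset.mem_range.mpr hj))


lemma mixAs_card_pos (hN : ∀ k, k < N k) (k : ℕ) : 0 < (mixAs e N k).card :=
  lt_of_lt_of_le (Nat.zero_lt_of_lt (hN k)) (mixAs_card e N k)

lemma mixMu_nonneg (k : ℕ) (x : G) : 0 ≤ mixMu e N k x := by
  unfold mixMu; split <;> positivity

lemma mixMu_le_one (hN : ∀ k, k < N k) (k : ℕ) (x : G) : mixMu e N k x ≤ 1 := by
  unfold mixMu
  split
  · apply inv_le_one_of_one_le₀
    exact_mod_cast mixAs_card_pos e N hN k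
  · exact zero_le_one

lemma mixMu_le (hN : ∀ k, k < N k) (k : ℕ) (x : G) : mixMu e N k x ≤ ((N k : ℝ))⁻¹ := by
  have hNpos : (0:ℝ) < N k := by exact_mod_cast Nat.zero_lt_of_lt (hN k)
  unfold mixMu
  split
  · apply inv_anti₀ hNpos
    exact_mod_cast mixAs_card e N k
  · positivity

lemma mixMu_summable (k : ℕ) : Summable (mixMu e N k) := by
  apply summable_of_ne_finset_zero (s := mixAs e N k)
  intro x hx
  unfold mixMu
  simp [hx]

lemma mixMu_tsum (hN : ∀ k, k < N k) (k : ℕ) : ∑' x : G, mixMu e N k x = 1 := by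
  rw [tsum_eq_sum (s := mixAs e N k) (fun x hx => by unfold mixMu; simp [hx])]
  have hco : ∀ x ∈ mixAs e N k, mixMu e N k x = ((mixAs e N k).card : ℝ)⁻¹ := by
    intro x hx; unfold mixMu; simp [hx]
  rw [Finset.sum_congr rfl hco, Finset.sum_const, nsmul_eq_mul]
  have hc : ((mixAs e N k).card : ℝ) ≠ 0 := by
    exact_mod_cast (mixAs_card_pos e N hN k).ne'
  field_simp

lemma mixMu_symm (k : ℕ) (x : G) : mixMu e N k x⁻¹ = mixMu e N k x := by
  unfold mixMu
  rw [if_congr (mixAs_mem_iff e N k x) rfl rfl]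

end mix

section mixM
variable {G : Type*} [Group G] (e : ℕ ≃ G) (N : ℕ → ℕ)

noncomputable abbrev mixw : ℕ → ℝ := fun k => (2:ℝ)⁻¹ ^ (k+1)

lemma mixw_nonneg (k : ℕ) : 0 ≤ mixw k := by positivity

lemma mixw_summable : Summable mixw := by
  have h : Summable fun k : ℕ => (2:ℝ)⁻¹ ^ k :=
    summable_geometric_of_lt_one (by norm_num) (by norm_num)
  exact (h.mul_right (2:ℝ)⁻¹).congr (fun k => (pow_succ (2:ℝ)⁻¹ k).symm)

lemma mixw_tsum : ∑' k, mixw k = 1 := by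
  have h : ∑' k : ℕ, (2:ℝ)⁻¹ ^ k = (1 - (2:ℝ)⁻¹)⁻¹ :=
    tsum_geometric_of_lt_one (by norm_num) (by norm_num)
  calc ∑' k, mixw k = ∑' k : ℕ, (2:ℝ)⁻¹ ^ k * (2:ℝ)⁻¹ :=
        tsum_congr (fun k => pow_succ (2:ℝ)⁻¹ k)
    _ = (1 - (2:ℝ)⁻¹)⁻¹ * (2:ℝ)⁻¹ := by rw [tsum_mul_right, h]
    _ = 1 := by norm_num

lemma mixw_partial (k : ℕ) : ∑ j ∈ Finset.range k, mixw j = 1 - (2:ℝ)⁻¹ ^ k := by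
  induction k with
  | zero => simp
  | succ k ih =>
    rw [Finset.sum_range_succ, ih]
    have : (2:ℝ)⁻¹ ^ (k+1) = (2:ℝ)⁻¹ ^ k * 2⁻¹ := pow_succ _ _
    rw [this]; unfold mixw; rw [pow_succ]; ring

lemma mix_term_summable (hN : ∀ k, k < N k) (x : G) : Summable fun k => mixw k * mixMu e N k x := by
  apply Summable.of_nonneg_of_le
    (fun k => mul_nonneg (mixw_nonneg k) (mixMu_nonneg e N k x))
    (fun k => ?_) mixw_summable
  calc mixw k * mixMu e N k x ≤ mixw k * 1 :=
        mul_le_mul_of_nonneg_left (mixMu_le_one e N hN k x) (mixw_nonneg k)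
    _ = mixw k := mul_one _

lemma mixM_pos (hN : ∀ k, k < N k) (x : G) : 0 < mixM e N x := by
  apply Summable.tsum_pos (mix_term_summable e N hN x)
    (fun k => mul_nonneg (mixw_nonneg k) (mixMu_nonneg e N k x)) (e.symm x)
  have hx : x ∈ mixAs e N (e.symm x) := by
    have := mixAs_mem e N (j := e.symm x) (k := e.symm x) (hN _)
    simpa using this
  have : mixMu e N (e.symm x) x = ((mixAs e N (e.symm x)).card : ℝ)⁻¹ := by
    unfold mixMu; simp [hx]
  rw [this]
  have hcard : (0:ℝ) < ((mixAs e N (e.symm x)).card : ℝ) := by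
    exact_mod_cast mixAs_card_pos e N hN (e.symm x)
  positivity

lemma mixM_summable_tsum (hN : ∀ k, k < N k) : Summable (mixM e N) ∧ ∑' x, mixM e N x = 1 := by
  have h1 : ∀ k, Summable fun x => mixw k * mixMu e N k x :=
    fun k => (mixMu_summable e N k).mul_left _
  have h2t : ∀ k : ℕ, ∑' x : G, mixw k * mixMu e N k x = mixw k := by
    intro k
    rw [tsum_mul_left, mixMu_tsum e N hN k, mul_one]
  have h2 : Summable fun k => ∑' x : G, mixw k * mixMu e N k x := by
    apply Summable.congr mixw_summable
    intro k; exact (h2t k).symm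
  obtain ⟨hs, heq⟩ := swap_nonneg_summable (fun k x => mixw k * mixMu e N k x)
    (fun k x => mul_nonneg (mixw_nonneg k) (mixMu_nonneg e N k x)) h1 h2
  refine ⟨hs, ?_⟩
  show ∑' x, ∑' k, mixw k * mixMu e N k x = 1
  rw [heq]
  rw [tsum_congr h2t, mixw_tsum]

lemma mixM_symm (x : G) : mixM e N x⁻¹ = mixM e N x :=
  tsum_congr (fun k => by rw [mixMu_symm])

lemma mixM_bound (hN : ∀ k, k < N k) (hNmono : Monotone N) (k n : ℕ) (x : G) :
    gconvPow (mixM e N) n x ≤ (1 - (2:ℝ)⁻¹ ^ k) ^ n + ((N k : ℝ))⁻¹ := by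
  have hNpos : (0:ℝ) < N k := by exact_mod_cast Nat.zero_lt_of_lt (hN k)
  set a : G → ℝ := fun x => ∑ j ∈ Finset.range k, mixw j * mixMu e N j x with ha
  set b : G → ℝ := fun x => ∑' j : ℕ, mixw (j+k) * mixMu e N (j+k) x with hb
  have hab : ∀ x, mixM e N x = a x + b x := by
    intro x
    rw [ha, hb]
    exact (Summable.sum_add_tsum_nat_add k (mix_term_summable e N hN x)).symm
  have ha0 : ∀ x, 0 ≤ a x := fun x => Finset.sum_nonneg
    (fun j _ => mul_nonneg (mixw_nonneg j) (mixMu_nonneg e N j x))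
  have hb0 : ∀ x, 0 ≤ b x := fun x => tsum_nonneg
    (fun j => mul_nonneg (mixw_nonneg _) (mixMu_nonneg e N _ x))
  have hsa : Summable a :=
    summable_sum (fun j _ => (mixMu_summable e N j).mul_left (mixw j))
  have hsb : Summable b := by
    apply ((mixM_summable_tsum e N hN).1.sub hsa).congr
    intro x
    have := hab x; linarith
  have htsa : ∑' x : G, a x ≤ 1 - (2:ℝ)⁻¹ ^ k := by
    rw [ha]
    rw [Summable.tsum_finsetSum (fun j _ => (mixMu_summable e N j).mul_left (mixw j))]
    rw [Finset.sum_congr rfl (fun j _ => by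
      rw [tsum_mul_left, mixMu_tsum e N hN j, mul_one])]
    rw [mixw_partial]
  have hbB : ∀ x, b x ≤ (2:ℝ)⁻¹ ^ k * ((N k : ℝ))⁻¹ := by
    intro x
    have hwt : Summable fun j => mixw (j+k) := by
      exact (summable_nat_add_iff k).mpr mixw_summable
    have step : b x ≤ ∑' j : ℕ, mixw (j+k) * ((N k : ℝ))⁻¹ := by
      apply Summable.tsum_le_tsum _ _ (hwt.mul_right _)
      · intro j
        apply mul_le_mul_of_nonneg_left _ (mixw_nonneg _)
        calc mixMu e N (j+k) x ≤ ((N (j+k) : ℝ))⁻¹ := mixMu_le e N hN _ x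
          _ ≤ ((N k : ℝ))⁻¹ := by
              apply inv_anti₀ hNpos
              exact_mod_cast hNmono (Nat.le_add_left k j)
      · apply Summable.of_nonneg_of_le
          (fun j => mul_nonneg (mixw_nonneg _) (mixMu_nonneg e N _ x))
          (fun j => ?_) (hwt.mul_right ((N k : ℝ))⁻¹)
        apply mul_le_mul_of_nonneg_left _ (mixw_nonneg _)
        calc mixMu e N (j+k) x ≤ ((N (j+k) : ℝ))⁻¹ := mixMu_le e N hN _ x
          _ ≤ ((N k : ℝ))⁻¹ := by
              apply inv_anti₀ hNpos
              exact_mod_cast hNmono (Nat.le_add_left k j)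
    have htail : ∑' j : ℕ, mixw (j+k) = (2:ℝ)⁻¹ ^ k := by
      have := Summable.sum_add_tsum_nat_add (f := mixw) k mixw_summable
      rw [mixw_partial, mixw_tsum] at this
      linarith
    calc b x ≤ ∑' j : ℕ, mixw (j+k) * ((N k : ℝ))⁻¹ := step
      _ = (∑' j : ℕ, mixw (j+k)) * ((N k : ℝ))⁻¹ := tsum_mul_right
      _ = (2:ℝ)⁻¹ ^ k * ((N k : ℝ))⁻¹ := by rw [htail]
  have hA0 : (0:ℝ) ≤ 1 - (2:ℝ)⁻¹ ^ k := by
    have : (2:ℝ)⁻¹ ^ k ≤ 1 := pow_le_one₀ (by norm_num) (by norm_num)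
    linarith
  exact gconvPow_le hab ha0 hb0 hsa hsb htsa hA0 hbB
    (by ring_nf; exact le_refl _) (by positivity) (mixM_summable_tsum e N hN).2 n x
end mixM

set_option maxHeartbeats 1000000 in
/-- Theorem 2.4 (countable discrete case): on any countably infinite group,
for any nondecreasing `F : [0,∞) → [0,∞)` with `F(t) = o(t)`, there is a
symmetric strictly positive probability density `M` whose convolution powers
satisfy `sup_x M^{*n}(x) ≤ exp(-C·F(n))` eventually, for every `C > 0`. -/
theorem stmt_3 {G : Type*} [Group G] [Countable G] [Infinite G]
    (F : ℝ → ℝ) (hF0 : ∀ t ≥ (0 : ℝ), 0 ≤ F t)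
    (hFmono : MonotoneOn F (Set.Ici 0))
    (hFsub : Tendsto (fun t => F t / t) atTop (nhds 0)) :
    ∃ M : G → ℝ, (∀ x : G, 0 < M x) ∧ (∑' x : G, M x = 1) ∧
      (∀ x : G, M x⁻¹ = M x) ∧
      ∀ C > (0 : ℝ), ∃ n₀ : ℕ, ∀ n : ℕ, n₀ ≤ n → ∀ x : G,
        gconvPow M n x ≤ Real.exp (-C * F n) := by
  classical
  haveI : Encodable G := Encodable.ofCountable G
  haveI : Denumerable G := Denumerable.ofEncodableOfInfinite G
  set e : ℕ ≃ G := (Denumerable.eqv G).symm with he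
  have hF0' : ∀ m : ℕ, 0 ≤ F m := fun m => hF0 m (by positivity)
  -- thresholds from F(t)/t → 0
  have hT : ∀ k : ℕ, ∃ T : ℕ, 1 ≤ T ∧ ∀ n : ℕ, T ≤ n → F n ≤ (n : ℝ) * (8:ℝ)⁻¹ ^ k := by
    intro k
    have h8 : (0:ℝ) < (8:ℝ)⁻¹ ^ k := by positivity
    have hev : ∀ᶠ t in atTop, F t / t < (8:ℝ)⁻¹ ^ k := hFsub.eventually (gt_mem_nhds h8)
    obtain ⟨T₀, hT₀⟩ := eventually_atTop.mp hev
    refine ⟨max 1 ⌈T₀⌉₊, le_max_left _ _, ?_⟩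
    intro n hn
    have hn1 : (1:ℕ) ≤ n := le_trans (le_max_left _ _) hn
    have hnR : (0:ℝ) < n := by exact_mod_cast hn1
    have hTn : T₀ ≤ (n:ℝ) := by
      calc T₀ ≤ ⌈T₀⌉₊ := Nat.le_ceil T₀
        _ ≤ (n:ℝ) := by exact_mod_cast le_trans (le_max_right _ _) hn
    have hd := hT₀ n hTn
    rw [div_lt_iff₀ hnR] at hd
    nlinarith [hd]
  choose T hT1 hTspec using hT
  -- the scales R
  obtain ⟨R, hR0, hRsucc⟩ : ∃ R : ℕ → ℕ, R 0 = max (T 0) 4 ∧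
      ∀ k, R (k+1) = max (R k + 1) (max (T (k+1)) (2^(k+3))) :=
    ⟨fun k => Nat.rec (max (T 0) 4)
      (fun k Rk => max (Rk + 1) (max (T (k+1)) (2^(k+3)))) k, rfl, fun k => rfl⟩
  have hRT : ∀ k, T k ≤ R k := by
    intro k; cases k with
    | zero => rw [hR0]; exact le_max_left _ _
    | succ k => rw [hRsucc]; exact le_trans (le_max_left _ _) (le_max_right _ _)
  have hR2 : ∀ k, 2^(k+2) ≤ R k := by
    intro k; cases k with
    | zero => rw [hR0]; exact le_max_right _ _
    | succ k => rw [hRsucc]; exact le_trans (le_max_right _ _) (le_max_right _ _)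
  have hRmono : StrictMono R := strictMono_nat_of_lt_succ (fun k => by
    rw [hRsucc]; exact lt_of_lt_of_le (Nat.lt_succ_self _) (le_max_left _ _))
  have hRspec : ∀ k n : ℕ, R k ≤ n → F n ≤ (n:ℝ) * (8:ℝ)⁻¹ ^ k :=
    fun k n hn => hTspec k n (le_trans (hRT k) hn)
  -- the sizes N
  obtain ⟨N, hNdef⟩ : ∃ N : ℕ → ℕ, ∀ k : ℕ,
      N k = ⌈Real.exp (((k:ℝ)+1) * (F (R (k+1)) + 1))⌉₊ :=
    ⟨fun k : ℕ => ⌈Real.exp (((k:ℝ)+1) * (F (R (k+1)) + 1))⌉₊, fun k => rfl⟩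
  have hNlb : ∀ k : ℕ, Real.exp (((k:ℝ)+1) * (F (R (k+1)) + 1)) ≤ N k := by
    intro k; rw [hNdef]; exact Nat.le_ceil _
  have hN : ∀ k, k < N k := by
    intro k
    rw [hNdef, Nat.lt_ceil]
    have h1 := Real.add_one_le_exp (((k:ℝ)+1) * (F (R (k+1)) + 1))
    have h2 : (0:ℝ) ≤ F (R (k+1)) := hF0' _
    nlinarith [h1, h2]
  have hNmono : Monotone N := by
    apply monotone_nat_of_le_succ
    intro k
    rw [hNdef, hNdef]
    apply Nat.ceil_le_ceil
    apply Real.exp_le_exp.mpr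
    have hFle : F (R (k+1)) ≤ F (R (k+2)) := by
      apply hFmono (Set.mem_Ici.mpr (by positivity)) (Set.mem_Ici.mpr (by positivity))
      exact_mod_cast (hRmono (Nat.lt_succ_self (k+1))).le
    have h2 : (0:ℝ) ≤ F (R (k+1)) := hF0' _
    have hkk : (k:ℝ) + 1 ≤ (k:ℝ) + 1 + 1 := by linarith
    push_cast
    nlinarith [hFle, h2]
  -- the measure
  refine ⟨mixM e N, mixM_pos e N hN, (mixM_summable_tsum e N hN).2, mixM_symm e N, ?_⟩
  intro C hC
  refine ⟨R ⌈C⌉₊, ?_⟩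
  intro n hn x
  set K := ⌈C⌉₊ with hKdef
  have hK1 : 1 ≤ K := Nat.ceil_pos.mpr hC
  have hKC : C ≤ (K:ℝ) := Nat.le_ceil C
  have hself : ∀ m : ℕ, m < R m := by
    intro m
    calc m < 2^m := Nat.lt_two_pow_self
      _ ≤ 2^(m+2) := Nat.pow_le_pow_right (by norm_num) (by omega)
      _ ≤ R m := hR2 m
  have hKn : K ≤ n := le_trans (hself K).le hn
  haveI hdec : DecidablePred (fun m : ℕ => R m ≤ n) := by intro m; exact Nat.decLe (R m) n
  set k := Nat.findGreatest (fun m : ℕ => R m ≤ n) n with hkdef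
  have hRkn : R k ≤ n := Nat.findGreatest_spec (P := fun m : ℕ => R m ≤ n) hKn hn
  have hkK : K ≤ k := Nat.le_findGreatest (P := fun m : ℕ => R m ≤ n) hKn hn
  have hk1 : 1 ≤ k := le_trans hK1 hkK
  have hkn : k < n := lt_of_lt_of_le (hself k) hRkn
  have hnk1 : n < R (k+1) := by
    by_contra h
    push_neg at h
    exact Nat.findGreatest_is_greatest (Nat.lt_succ_self k) (by omega) h
  -- arithmetic
  set t := (2:ℝ)⁻¹ ^ k with htdef
  have hFn0 : 0 ≤ F n := hF0' n
  have ht : (0:ℝ) < t := by positivity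
  have hCk : C ≤ (k:ℝ) := le_trans hKC (by exact_mod_cast hkK)
  have hlog2 : Real.log 2 ≤ 1 := by
    have := Real.log_two_lt_d9; linarith
  have hlog2' : (0:ℝ) ≤ Real.log 2 := Real.log_nonneg (by norm_num)
  have hmain := mixM_bound e N hN hNmono k n x
  -- part B : 1/N k small
  have hFle : F n ≤ F (R (k+1)) := by
    apply hFmono (Set.mem_Ici.mpr (by positivity)) (Set.mem_Ici.mpr (by positivity))
    exact_mod_cast hnk1.le
  have hB : ((N k : ℝ))⁻¹ ≤ Real.exp (-(C * F n)) / 2 := by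
    have harg : C * F n + Real.log 2 ≤ ((k:ℝ)+1) * (F (R (k+1)) + 1) := by
      have h1 : C * F n ≤ ((k:ℝ)+1) * F (R (k+1)) :=
        mul_le_mul (by linarith) hFle hFn0 (by positivity)
      nlinarith [hF0' (R (k+1))]
    have hNge : Real.exp (C * F n) * 2 ≤ (N k : ℝ) := by
      have := le_trans (Real.exp_le_exp.mpr harg) (hNlb k)
      rwa [Real.exp_add, Real.exp_log (by norm_num : (0:ℝ) < 2)] at this
    have hinv := inv_anti₀ (by positivity : (0:ℝ) < Real.exp (C * F n) * 2) hNge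
    calc ((N k:ℝ))⁻¹ ≤ (Real.exp (C * F n) * 2)⁻¹ := hinv
      _ = Real.exp (-(C * F n)) / 2 := by
          rw [mul_inv, Real.exp_neg]; ring
  -- part A : (1-t)^n small
  have hA : (1 - t)^n ≤ Real.exp (-(C * F n)) / 2 := by
    have ht1 : t ≤ 1 := pow_le_one₀ (by norm_num) (by norm_num)
    have h8k : F n ≤ (n:ℝ) * (8:ℝ)⁻¹ ^ k := hRspec k n hRkn
    have hsplit : (8:ℝ)⁻¹ ^ k = t * (4:ℝ)⁻¹ ^ k := by
      rw [htdef, ← mul_pow]; norm_num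
    have h4k : C * (4:ℝ)⁻¹ ^ k ≤ 1/2 := by
      have h1 : k < 2^k := Nat.lt_two_pow_self
      have h2 : (2:ℕ) ≤ 2^k := by
        calc (2:ℕ) = 2^1 := rfl
          _ ≤ 2^k := Nat.pow_le_pow_right (by norm_num) hk1
      have h3 : 2*k < 2^k * 2^k := by
        calc 2*k < 2*2^k := by omega
          _ ≤ 2^k * 2^k := Nat.mul_le_mul_right _ h2
      have h4 : 2^k * 2^k = 4^k := by
        rw [← pow_add, show k+k = 2*k from by omega, pow_mul]
        norm_num
      have h5 : 2*C ≤ ((4:ℕ)^k : ℝ) := by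
        calc 2*C ≤ 2*(k:ℝ) := by linarith
          _ ≤ ((4:ℕ)^k : ℝ) := by exact_mod_cast (h4 ▸ h3).le
      have h6 : (0:ℝ) < (4:ℝ)^k := by positivity
      have h7 : 2*C ≤ (4:ℝ)^k := by push_cast at h5; exact h5
      rw [inv_pow]
      rw [mul_inv_le_iff₀ h6]
      linarith
    have hnt4 : (4:ℝ) ≤ (n:ℝ) * t := by
      have hle : (2:ℕ)^(k+2) ≤ n := le_trans (hR2 k) hRkn
      have hcast : (4:ℝ) * (2:ℝ)^k ≤ (n:ℝ) := by
        have h2c : ((2:ℕ)^(k+2) : ℝ) ≤ (n:ℝ) := by exact_mod_cast hle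
        push_cast at h2c
        have h22 : (2:ℝ)^(k+2) = 4*(2:ℝ)^k := by ring
        linarith
      have htt : t * (2:ℝ)^k = 1 := by
        rw [htdef, ← mul_pow]; norm_num
      nlinarith [mul_le_mul_of_nonneg_right hcast ht.le, htt]
    have hCFn : C * F n + Real.log 2 ≤ (n:ℝ) * t := by
      have h1 : C * F n ≤ C * ((n:ℝ) * (8:ℝ)⁻¹ ^ k) :=
        mul_le_mul_of_nonneg_left h8k hC.le
      have h2 : C * ((n:ℝ) * (8:ℝ)⁻¹ ^ k) = ((n:ℝ)*t) * (C * (4:ℝ)⁻¹ ^ k) := by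
        rw [hsplit]; ring
      have h3 : ((n:ℝ)*t) * (C * (4:ℝ)⁻¹ ^ k) ≤ ((n:ℝ)*t) * (1/2) :=
        mul_le_mul_of_nonneg_left h4k (by positivity)
      nlinarith [hnt4, hlog2]
    have hle1 : (1-t) ≤ Real.exp (-t) := by linarith [Real.add_one_le_exp (-t)]
    have hpow : (1-t)^n ≤ Real.exp (-t)^n := pow_le_pow_left₀ (by linarith) hle1 n
    have hexp : Real.exp (-t)^n = Real.exp ((n:ℝ) * (-t)) := (Real.exp_nat_mul _ n).symm
    have hee : Real.exp ((n:ℝ) * (-t)) ≤ Real.exp (-(C*F n) - Real.log 2) := by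
      apply Real.exp_le_exp.mpr; nlinarith [hCFn]
    have hfinal : Real.exp (-(C*F n) - Real.log 2) = Real.exp (-(C*F n))/2 := by
      rw [Real.exp_sub, Real.exp_log (by norm_num : (0:ℝ) < 2)]
    calc (1-t)^n ≤ Real.exp (-t)^n := hpow
      _ = Real.exp ((n:ℝ) * (-t)) := hexp
      _ ≤ Real.exp (-(C*F n) - Real.log 2) := hee
      _ = Real.exp (-(C*F n))/2 := hfinal
  have hgoal : -C * F n = -(C * F n) := by ring
  rw [hgoal]
  calc gconvPow (mixM e N) n x ≤ (1 - t)^n + ((N k : ℝ))⁻¹ := hmain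
    _ ≤ Real.exp (-(C * F n)) / 2 + Real.exp (-(C * F n)) / 2 := add_le_add hA hB
    _ = Real.exp (-(C * F n)) := by ring
end

section
/- For t > 0 set C_0(t) := c_0^t and C_k(t) := (c_0+⋯+c_k)^t − (c_0+⋯+c_{k−1})^t for k ≥ 1, and define μ_t := Σ_{k≥0} C_k(t) m_k pointwise. Then: (i) for every t > 0, C_k(t) > 0 for all k and Σ_{x∈G} μ_t(x) = 1, so μ_t is a strictly positive probability density on G; (ii) μ_s * μ_t = μ_{s+t} for all s, t > 0; (iii) μ_1 = μ. In particular μ is infinitely divisible: μ = (μ_{1/n})^{*n} for every n ≥ 1, so μ embeds into a convolution semigroup (μ_t)_{t>0}. -/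
open scoped BigOperators Classical

private lemma aux_msum {G : Type*} [Group G] (H : Subgroup G) (hfin : (H : Set G).Finite) :
    HasSum (fun x => if x ∈ H then ((Nat.card H : ℝ))⁻¹ else 0) 1 := by
  have hcard : hfin.toFinset.card = Nat.card H := by
    have : Nat.card H = Nat.card (H : Set G) := rfl
    rw [this, Nat.card_coe_set_eq, Set.ncard_eq_toFinset_card _ hfin]
  have h0 : Nat.card H ≠ 0 := by
    have : Finite H := hfin.to_subtype
    exact Nat.card_pos.ne'
  have := hasSum_sum_of_ne_finset_zero (L := SummationFilter.unconditional G) (s := hfin.toFinset)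
    (f := fun x => if x ∈ H then ((Nat.card H : ℝ))⁻¹ else 0)
    (by intro b hb; simp only [if_neg (by simpa [Set.Finite.mem_toFinset] using hb : ¬ b ∈ H)])
  convert this using 1
  rw [Finset.sum_congr rfl (fun y hy => if_pos (by simpa [Set.Finite.mem_toFinset] using hy)),
    Finset.sum_const, hcard, nsmul_eq_mul]
  rw [mul_inv_cancel₀ (by exact_mod_cast h0)]

private lemma aux_const_on {G : Type*} [Group G] (H : Subgroup G) (hfin : (H : Set G).Finite)
    (v : ℝ) :
    HasSum (fun x : G => if x ∈ H then v else 0) ((Nat.card H : ℝ) * v) := by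
  have hcard : hfin.toFinset.card = Nat.card H := by
    have : Nat.card H = Nat.card (H : Set G) := rfl
    rw [this, Nat.card_coe_set_eq, Set.ncard_eq_toFinset_card _ hfin]
  have := hasSum_sum_of_ne_finset_zero (L := SummationFilter.unconditional G) (s := hfin.toFinset)
    (f := fun x : G => if x ∈ H then v else 0)
    (by intro b hb; simp only [if_neg (by simpa [Set.Finite.mem_toFinset] using hb : ¬ b ∈ H)])
  convert this using 1
  rw [Finset.sum_congr rfl (fun y hy => if_pos (by simpa [Set.Finite.mem_toFinset] using hy)),
    Finset.sum_const, hcard, nsmul_eq_mul]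

/-- convolution of uniform densities -/
private lemma aux_mconv {G : Type*} [Group G] (H : ℕ → Subgroup G)
    (hfin : ∀ k, ((H k : Set G)).Finite) (hmono : Monotone H) (j k : ℕ) (x : G) :
    HasSum (fun y => (if y ∈ H j then ((Nat.card (H j) : ℝ))⁻¹ else 0) *
        (if y⁻¹ * x ∈ H k then ((Nat.card (H k) : ℝ))⁻¹ else 0))
      (if x ∈ H (max j k) then ((Nat.card (H (max j k)) : ℝ))⁻¹ else 0) := by
  have hN : ∀ i, (0:ℝ) < (Nat.card (H i) : ℝ) := by
    intro i
    have : Finite (H i) := (hfin i).to_subtype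
    exact_mod_cast Nat.card_pos
  rcases le_total j k with hjk | hkj
  · rw [max_eq_right hjk]
    have heq : (fun y => (if y ∈ H j then ((Nat.card (H j) : ℝ))⁻¹ else 0) *
        (if y⁻¹ * x ∈ H k then ((Nat.card (H k) : ℝ))⁻¹ else 0)) =
        fun y => if y ∈ H j then (Nat.card (H j) : ℝ)⁻¹ *
          (if x ∈ H k then ((Nat.card (H k) : ℝ))⁻¹ else 0) else 0 := by
      funext y
      by_cases hy : y ∈ H j
      · have hyk : y ∈ H k := hmono hjk hy
        have : y⁻¹ * x ∈ H k ↔ x ∈ H k :=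
          ⟨fun h => by simpa [mul_assoc] using (H k).mul_mem hyk h,
           fun h => (H k).mul_mem (inv_mem hyk) h⟩
        simp [hy, this]
      · simp [hy]
    rw [heq]
    have := aux_const_on (H j) (hfin j) ((Nat.card (H j) : ℝ)⁻¹ *
      (if x ∈ H k then ((Nat.card (H k) : ℝ))⁻¹ else 0))
    convert this using 1
    rw [← mul_assoc, mul_inv_cancel₀ (hN j).ne', one_mul]
  · rw [max_eq_left hkj]
    by_cases hx : x ∈ H j
    · -- reindex by z ↦ x * z⁻¹
      rw [← Equiv.hasSum_iff (Equiv.mk (fun z : G => x * z⁻¹) (fun y => y⁻¹ * x)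
        (fun z => by group) (fun y => by group))]
      have heq : ((fun y => (if y ∈ H j then ((Nat.card (H j) : ℝ))⁻¹ else 0) *
          (if y⁻¹ * x ∈ H k then ((Nat.card (H k) : ℝ))⁻¹ else 0)) ∘
            (Equiv.mk (fun z : G => x * z⁻¹) (fun y => y⁻¹ * x)
              (fun z => by group) (fun y => by group))) =
          fun z => if z ∈ H k then (Nat.card (H j) : ℝ)⁻¹ * (Nat.card (H k) : ℝ)⁻¹ else 0 := by
        funext z
        simp only [Function.comp_apply, Equiv.coe_fn_mk]
        have h1 : (x * z⁻¹)⁻¹ * x = z := by group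
        have h2 : x * z⁻¹ ∈ H j ↔ z ∈ H j := by
          constructor
          · intro h
            have h3 := (H j).mul_mem (inv_mem hx) h
            rw [← mul_assoc, inv_mul_cancel, one_mul] at h3
            exact inv_mem_iff.mp h3
          · intro h
            exact (H j).mul_mem hx (inv_mem h)
        rw [h1]
        by_cases hz : z ∈ H k
        · rw [if_pos (h2.mpr (hmono hkj hz)), if_pos hz, if_pos hz]
        · rw [if_neg hz]
          by_cases hzj : z ∈ H j
          · simp [hz, h2.mpr hzj]
          · simp [hz, fun h => hzj (h2.mp h)]
      rw [heq, if_pos hx]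
      have := aux_const_on (H k) (hfin k) ((Nat.card (H j) : ℝ)⁻¹ * (Nat.card (H k) : ℝ)⁻¹)
      convert this using 1
      rw [mul_comm ((Nat.card (H j) : ℝ))⁻¹, ← mul_assoc,
        mul_inv_cancel₀ (hN k).ne', one_mul]
    · rw [if_neg hx]
      have heq : (fun y => (if y ∈ H j then ((Nat.card (H j) : ℝ))⁻¹ else 0) *
          (if y⁻¹ * x ∈ H k then ((Nat.card (H k) : ℝ))⁻¹ else 0)) = fun _ => (0:ℝ) := by
        funext y
        by_cases hy : y ∈ H j
        · have hnk : ¬ (y⁻¹ * x ∈ H k) := by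
            intro h
            have h3 := (H j).mul_mem hy (hmono hkj h)
            rw [← mul_assoc, mul_inv_cancel, one_mul] at h3
            exact hx h3
          simp [hnk]
        · simp [hy]
      rw [heq]
      exact hasSum_zero
set_option maxHeartbeats 1000000 in
/-- Proposition 3.2: the measure `μ = ∑_k c_k m_k` on an infinite locally
finite group embeds into the convolution semigroup
`μ_t = ∑_k C_k(t) m_k`, where `C_0(t) = c_0^t` and
`C_k(t) = (c_0+⋯+c_k)^t - (c_0+⋯+c_{k-1})^t`; in particular `μ` is infinitely
divisible: `μ = (μ_{1/n})^{*n}` for all `n ≥ 1`. -/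
theorem stmt_5 {G : Type*} [Group G]
    (H : ℕ → Subgroup G) (hfin : ∀ k, (H k : Set G).Finite)
    (hlt : ∀ k, H k < H (k + 1)) (hunion : ∀ x : G, ∃ k, x ∈ H k)
    (c : ℕ → ℝ) (hc : ∀ k, 0 < c k) (hcsum : ∑' k : ℕ, c k = 1)
    (m : ℕ → G → ℝ)
    (hm : ∀ (k : ℕ) (x : G),
      m k x = if x ∈ H k then ((Nat.card (H k) : ℝ))⁻¹ else 0)
    (μ : G → ℝ) (hμ : ∀ x : G, μ x = ∑' k : ℕ, c k * m k x)
    (S : ℕ → ℝ) (hS : ∀ k, S k = ∑ i ∈ Finset.range (k + 1), c i)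
    (C : ℝ → ℕ → ℝ) (hC0 : ∀ t : ℝ, C t 0 = c 0 ^ t)
    (hCk : ∀ (t : ℝ) (k : ℕ), C t (k + 1) = S (k + 1) ^ t - S k ^ t)
    (μt : ℝ → G → ℝ) (hμt : ∀ (t : ℝ) (x : G), μt t x = ∑' k : ℕ, C t k * m k x) :
    (∀ t > (0 : ℝ), (∀ k, 0 < C t k) ∧ (∀ x : G, 0 < μt t x) ∧
        ∑' x : G, μt t x = 1) ∧
    (∀ s > (0 : ℝ), ∀ t > (0 : ℝ), ∀ x : G,
        gconv (μt s) (μt t) x = μt (s + t) x) ∧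
    (∀ x : G, μt 1 x = μ x) ∧
    (∀ n : ℕ, 1 ≤ n → ∀ x : G, gconvPow (μt (1 / (n : ℝ))) n x = μ x) := by
  classical
  have hmono : Monotone H := monotone_nat_of_le_succ fun k => (hlt k).le
  have hNpos : ∀ k, (0:ℝ) < (Nat.card (H k) : ℝ) := by
    intro k
    have : Finite (H k) := (hfin k).to_subtype
    exact_mod_cast Nat.card_pos
  have hm0 : ∀ k (x : G), 0 ≤ m k x := by
    intro k x; rw [hm]
    split
    · exact (inv_pos.mpr (hNpos k)).le
    · exact le_refl 0
  have hm1 : ∀ k (x : G), m k x ≤ 1 := by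
    intro k x; rw [hm]
    split
    · rw [inv_le_one₀ (hNpos k)]
      exact_mod_cast Nat.one_le_iff_ne_zero.mpr (by exact_mod_cast (hNpos k).ne')
    · exact zero_le_one
  have hmeq : ∀ k, m k = fun x => if x ∈ H k then ((Nat.card (H k) : ℝ))⁻¹ else 0 :=
    fun k => funext (hm k)
  have hmsum : ∀ k, HasSum (m k) 1 := by
    intro k; rw [hmeq k]; exact aux_msum (H k) (hfin k)
  have hmconv : ∀ j k (x : G),
      HasSum (fun y => m j y * m k (y⁻¹ * x)) (m (max j k) x) := by
    intro j k x
    simp only [hmeq]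
    exact aux_mconv H hfin hmono j k x
  -- facts about c, S, C
  have hcsummable : Summable c := by
    by_contra h
    rw [tsum_eq_zero_of_not_summable h] at hcsum
    norm_num at hcsum
  have hSpos : ∀ k, 0 < S k := by
    intro k; rw [hS]
    exact Finset.sum_pos (fun i _ => hc i) (Finset.nonempty_range_iff.mpr (Nat.succ_ne_zero k))
  have hSmono : ∀ k, S k < S (k + 1) := by
    intro k
    rw [hS, hS, Finset.sum_range_succ (n := k + 1)]
    exact lt_add_of_pos_right _ (hc (k + 1))
  have hCpos : ∀ t, 0 < t → ∀ k, 0 < C t k := by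
    intro t ht k
    cases k with
    | zero => rw [hC0]; exact Real.rpow_pos_of_pos (hc 0) t
    | succ k =>
      rw [hCk]
      exact sub_pos.mpr (Real.rpow_lt_rpow (hSpos k).le (hSmono k) ht)
  have hCpartial : ∀ (t : ℝ) (k : ℕ), ∑ i ∈ Finset.range (k + 1), C t i = S k ^ t := by
    intro t k
    induction k with
    | zero => simp [hC0, hS 0]
    | succ k ih => rw [Finset.sum_range_succ, ih, hCk]; ring
  have hStend : Filter.Tendsto S Filter.atTop (nhds 1) := by
    have h1 := hcsummable.hasSum.tendsto_sum_nat
    rw [hcsum] at h1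
    have h2 : Filter.Tendsto (fun n => ∑ i ∈ Finset.range (n + 1), c i)
        Filter.atTop (nhds 1) := h1.comp (Filter.tendsto_add_atTop_nat 1)
    exact h2.congr fun n => (hS n).symm
  have hCsum : ∀ t : ℝ, 0 < t → HasSum (C t) 1 := by
    intro t ht
    rw [hasSum_iff_tendsto_nat_of_nonneg (fun k => (hCpos t ht k).le)]
    have h1 : Filter.Tendsto (fun n => S n ^ t) Filter.atTop (nhds 1) := by
      have := hStend.rpow_const (p := t) (Or.inl one_ne_zero)
      simpa [Real.one_rpow] using this
    have h2 : Filter.Tendsto (fun n => ∑ i ∈ Finset.range (n + 1), C t i)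
        Filter.atTop (nhds 1) := h1.congr fun n => (hCpartial t n).symm
    exact (Filter.tendsto_add_atTop_iff_nat 1).mp h2
  -- μt basic facts
  have hμtHasSum : ∀ t : ℝ, 0 < t → ∀ x : G,
      HasSum (fun k => C t k * m k x) (μt t x) := by
    intro t ht x
    have hsummable : Summable (fun k => C t k * m k x) := by
      apply Summable.of_nonneg_of_le (fun k => mul_nonneg (hCpos t ht k).le (hm0 k x))
        (fun k => mul_le_of_le_one_right (hCpos t ht k).le (hm1 k x))
      exact (hCsum t ht).summable
    have := hsummable.hasSum
    rwa [← hμt t x] at this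
  have hμtnonneg : ∀ t : ℝ, 0 < t → ∀ x : G, 0 ≤ μt t x := by
    intro t ht x
    exact (hμtHasSum t ht x).nonneg fun k => mul_nonneg (hCpos t ht k).le (hm0 k x)
  have hμtpos : ∀ t : ℝ, 0 < t → ∀ x : G, 0 < μt t x := by
    intro t ht x
    obtain ⟨k₀, hk₀⟩ := hunion x
    have hterm : 0 < C t k₀ * m k₀ x := by
      apply mul_pos (hCpos t ht k₀)
      rw [hm, if_pos hk₀]
      exact inv_pos.mpr (hNpos k₀)
    rw [hμt]
    exact Summable.tsum_pos (hμtHasSum t ht x).summable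
      (fun k => mul_nonneg (hCpos t ht k).le (hm0 k x)) k₀ hterm
  -- total mass of μt
  have hμtTotal : ∀ t : ℝ, 0 < t → HasSum (μt t) 1 := by
    intro t ht
    set F : ℕ × G → ℝ := fun p => C t p.1 * m p.1 p.2 with hF
    have hF0 : ∀ p, 0 ≤ F p := fun p => mul_nonneg (hCpos t ht p.1).le (hm0 p.1 p.2)
    have hrows : ∀ k, HasSum (fun x => F (k, x)) (C t k) := by
      intro k
      have := (hmsum k).mul_left (C t k)
      rwa [mul_one] at this
    have hFsummable : Summable F := by
      apply (summable_prod_of_nonneg hF0).mpr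
      refine ⟨fun k => (hrows k).summable, ?_⟩
      apply Summable.congr (hCsum t ht).summable
      intro k
      exact ((hrows k).tsum_eq).symm
    have hFsw : Summable (fun q : G × ℕ => F q.swap) := hFsummable.prod_symm
    have hcols : ∀ x : G, HasSum (fun k => F (k, x)) (μt t x) := fun x => hμtHasSum t ht x
    have hμtSummable : Summable (μt t) := by
      have h2 := ((summable_prod_of_nonneg (fun q => hF0 q.swap)).mp hFsw).2
      apply Summable.congr h2
      intro x
      exact (hcols x).tsum_eq
    have hkey : ∑' x, μt t x = 1 := by
      calc ∑' x : G, μt t x = ∑' (x : G), ∑' k, F (k, x) := by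
            exact tsum_congr fun x => ((hcols x).tsum_eq).symm
        _ = ∑' q : G × ℕ, F q.swap := (Summable.tsum_prod hFsw).symm
        _ = ∑' p : ℕ × G, F p := (Equiv.prodComm G ℕ).tsum_eq F
        _ = ∑' k, ∑' x, F (k, x) := Summable.tsum_prod hFsummable
        _ = ∑' k, C t k := tsum_congr fun k => (hrows k).tsum_eq
        _ = 1 := (hCsum t ht).tsum_eq
    have := hμtSummable.hasSum
    rwa [hkey] at this
  have hμtle1 : ∀ t : ℝ, 0 < t → ∀ x : G, μt t x ≤ 1 := by
    intro t ht x
    exact le_hasSum (hμtTotal t ht) x fun y _ => hμtnonneg t ht y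
  -- part (ii)
  have hconv : ∀ s : ℝ, 0 < s → ∀ t : ℝ, 0 < t → ∀ x : G,
      gconv (μt s) (μt t) x = μt (s + t) x := by
    intro s hs t ht x
    set f : ℕ × ℕ → ℝ := fun p => C s p.1 * C t p.2 * m (max p.1 p.2) x with hfdef
    set F : G × (ℕ × ℕ) → ℝ :=
      fun q => (C s q.2.1 * m q.2.1 q.1) * (C t q.2.2 * m q.2.2 (q.1⁻¹ * x)) with hFdef
    have hF0 : ∀ q, 0 ≤ F q := fun q =>
      mul_nonneg (mul_nonneg (hCpos s hs _).le (hm0 _ _))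
        (mul_nonneg (hCpos t ht _).le (hm0 _ _))
    -- column sums (fixed p, sum over y)
    have hcolsum : ∀ p : ℕ × ℕ, HasSum (fun y => F (y, p)) (f p) := by
      intro p
      have h1 := (hmconv p.1 p.2 x).mul_left (C s p.1 * C t p.2)
      have he : (fun y => F (y, p)) =
          fun y => C s p.1 * C t p.2 * (m p.1 y * m p.2 (y⁻¹ * x)) := by
        funext y; simp only [hFdef]; ring
      rw [he]
      exact h1
    -- row sums (fixed y, sum over p)
    have hrowsummable : ∀ y : G, Summable (fun p : ℕ × ℕ => F (y, p)) := by
      intro y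
      exact Summable.mul_of_nonneg (hμtHasSum s hs y).summable
        (hμtHasSum t ht (y⁻¹ * x)).summable
        (fun k => mul_nonneg (hCpos s hs k).le (hm0 k y))
        (fun k => mul_nonneg (hCpos t ht k).le (hm0 k (y⁻¹ * x)))
    have hrowsum : ∀ y : G, HasSum (fun p : ℕ × ℕ => F (y, p)) (μt s y * μt t (y⁻¹ * x)) := by
      intro y
      have heq := HasSum.mul_eq (hμtHasSum s hs y) (hμtHasSum t ht (y⁻¹ * x))
        (hrowsummable y).hasSum
      rw [heq]
      exact (hrowsummable y).hasSum
    have hprodsummable : Summable (fun y : G => μt s y * μt t (y⁻¹ * x)) :=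
      Summable.of_nonneg_of_le
        (fun y => mul_nonneg (hμtnonneg s hs y) (hμtnonneg t ht (y⁻¹ * x)))
        (fun y => mul_le_of_le_one_right (hμtnonneg s hs y) (hμtle1 t ht (y⁻¹ * x)))
        (hμtTotal s hs).summable
    have hFsummable : Summable F := by
      apply (summable_prod_of_nonneg hF0).mpr
      refine ⟨fun y => hrowsummable y, ?_⟩
      exact hprodsummable.congr (fun y => ((hrowsum y).tsum_eq).symm)
    have hFsw : Summable (fun q : (ℕ × ℕ) × G => F q.swap) := hFsummable.prod_symm
    have hfsummable : Summable f := by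
      have h2 := ((summable_prod_of_nonneg (fun q => hF0 q.swap)).mp hFsw).2
      apply Summable.congr h2
      intro p
      exact (hcolsum p).tsum_eq
    -- grouping by max
    have hfiber : ∀ n : ℕ,
        HasSum (f ∘ ((↑) : {p : ℕ × ℕ | max p.1 p.2 = n} → ℕ × ℕ)) (C (s + t) n * m n x) := by
      intro n
      rw [hasSum_subtype_iff_indicator]
      have hind : ({p : ℕ × ℕ | max p.1 p.2 = n}).indicator f =
          ({p : ℕ × ℕ | max p.1 p.2 = n}).indicator
            (fun p => C s p.1 * C t p.2 * m n x) := by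
        apply Set.indicator_congr
        intro p hp
        simp only [hfdef]
        rw [Set.mem_setOf_eq] at hp
        rw [hp]
      rw [hind]
      have hvanish : ∀ p : ℕ × ℕ, p ∉ Finset.range (n + 1) ×ˢ Finset.range (n + 1) →
          ({p : ℕ × ℕ | max p.1 p.2 = n}).indicator
            (fun p => C s p.1 * C t p.2 * m n x) p = 0 := by
        intro p hp
        apply Set.indicator_of_notMem
        rw [Set.mem_setOf_eq]
        intro hmax
        apply hp
        rw [Finset.mem_product, Finset.mem_range, Finset.mem_range]
        constructor
        · exact Nat.lt_succ_of_le (hmax ▸ le_max_left p.1 p.2)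
        · exact Nat.lt_succ_of_le (hmax ▸ le_max_right p.1 p.2)
      have hsq : ∀ M : ℕ, ∑ p ∈ Finset.range M ×ˢ Finset.range M,
          (C s p.1 * C t p.2 * m n x) =
          (∑ i ∈ Finset.range M, C s i) * (∑ i ∈ Finset.range M, C t i) * m n x := by
        intro M
        rw [Finset.sum_product, Finset.sum_mul_sum]
        simp_rw [Finset.sum_mul]
      have hsubset : Finset.range n ×ˢ Finset.range n ⊆
          Finset.range (n + 1) ×ˢ Finset.range (n + 1) :=
        Finset.product_subset_product (Finset.range_subset_range.mpr (Nat.le_succ n))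
          (Finset.range_subset_range.mpr (Nat.le_succ n))
      have hval : ∑ p ∈ Finset.range (n + 1) ×ˢ Finset.range (n + 1),
          ({p : ℕ × ℕ | max p.1 p.2 = n}).indicator
            (fun p => C s p.1 * C t p.2 * m n x) p = C (s + t) n * m n x := by
        have hsplit : ∀ p ∈ Finset.range (n + 1) ×ˢ Finset.range (n + 1),
            ({p : ℕ × ℕ | max p.1 p.2 = n}).indicator
              (fun p => C s p.1 * C t p.2 * m n x) p =
            C s p.1 * C t p.2 * m n x -
              (if p ∈ Finset.range n ×ˢ Finset.range n then C s p.1 * C t p.2 * m n x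
               else 0) := by
          intro p hp
          rw [Finset.mem_product, Finset.mem_range, Finset.mem_range] at hp
          rw [Set.indicator_apply]
          by_cases hmem : p ∈ Finset.range n ×ˢ Finset.range n
          · have h1 := hmem
            rw [Finset.mem_product, Finset.mem_range, Finset.mem_range] at hmem
            have h2 : p ∉ {p : ℕ × ℕ | max p.1 p.2 = n} := by
              simp only [Set.mem_setOf_eq]
              omega
            rw [if_pos h1, if_neg h2]
            ring
          · have h1 := hmem
            rw [Finset.mem_product, Finset.mem_range, Finset.mem_range] at hmem
            have h2 : p ∈ {p : ℕ × ℕ | max p.1 p.2 = n} := by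
              simp only [Set.mem_setOf_eq]
              omega
            rw [if_neg h1, if_pos h2]
            ring
        rw [Finset.sum_congr rfl hsplit, Finset.sum_sub_distrib,
          Finset.sum_ite_mem, Finset.inter_eq_right.mpr hsubset, hsq, hsq]
        cases n with
        | zero =>
          have hS0 : S 0 = c 0 := by rw [hS]; simp
          simp only [Finset.range_zero, Finset.sum_empty, zero_mul, sub_zero]
          rw [hCpartial s 0, hCpartial t 0, hS0, hC0, ← Real.rpow_add (hc 0)]
        | succ n =>
          rw [hCpartial s (n + 1), hCpartial t (n + 1), hCpartial s n, hCpartial t n, hCk]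
          rw [← Real.rpow_add (hSpos (n + 1)), ← Real.rpow_add (hSpos n)]
          ring
      rw [← hval]
      exact hasSum_sum_of_ne_finset_zero hvanish
    have hsig : HasSum (fun n => C (s + t) n * m n x) (∑' p, f p) := by
      have hσ : HasSum (f ∘ (Equiv.sigmaFiberEquiv (fun p : ℕ × ℕ => max p.1 p.2)))
          (∑' p, f p) := (Equiv.hasSum_iff _).mpr hfsummable.hasSum
      exact hσ.sigma fun n => hfiber n
    have hfinal : ∑' p, f p = μt (s + t) x :=
      hsig.unique (hμtHasSum (s + t) (by linarith) x)
    -- assemble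
    show (∑' y, μt s y * μt t (y⁻¹ * x)) = μt (s + t) x
    calc ∑' y : G, μt s y * μt t (y⁻¹ * x)
        = ∑' y : G, ∑' p : ℕ × ℕ, F (y, p) := tsum_congr fun y => ((hrowsum y).tsum_eq).symm
      _ = ∑' q : G × (ℕ × ℕ), F q := (Summable.tsum_prod hFsummable).symm
      _ = ∑' q : (ℕ × ℕ) × G, F q.swap := ((Equiv.prodComm ((ℕ × ℕ)) G).tsum_eq
            (fun q : G × (ℕ × ℕ) => F q)).symm
      _ = ∑' p : ℕ × ℕ, ∑' y : G, F (y, p) := Summable.tsum_prod hFsw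
      _ = ∑' p : ℕ × ℕ, f p := tsum_congr fun p => (hcolsum p).tsum_eq
      _ = μt (s + t) x := hfinal
  -- part (iii)
  have hone : ∀ x : G, μt 1 x = μ x := by
    intro x
    rw [hμt, hμ]
    apply tsum_congr
    intro k
    congr 1
    cases k with
    | zero => rw [hC0, Real.rpow_one]
    | succ k =>
      rw [hCk, Real.rpow_one, Real.rpow_one, hS, hS, Finset.sum_range_succ (n := k + 1)]
      ring
  refine ⟨fun t ht => ⟨hCpos t ht, hμtpos t ht, (hμtTotal t ht).tsum_eq⟩,
    fun s hs t ht x => hconv s hs t ht x, hone, ?_⟩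
  -- part (iv)
  have hpow : ∀ τ : ℝ, 0 < τ → ∀ n : ℕ, ∀ x : G,
      gconvPow (μt τ) (n + 1) x = μt ((n + 1 : ℕ) * τ) x := by
    intro τ hτ n
    induction n with
    | zero =>
      intro x
      show gconv (μt τ) (gconvPow (μt τ) 0) x = _
      have he : (fun y => μt τ y * (if y⁻¹ * x = 1 then (1:ℝ) else 0)) =
          fun y => if y = x then μt τ x else 0 := by
        funext y
        by_cases hy : y = x
        · subst hy; simp
        · rw [if_neg hy, if_neg (fun h => hy (inv_mul_eq_one.mp h)), mul_zero]
      show (∑' y, μt τ y * (if y⁻¹ * x = 1 then (1:ℝ) else 0)) = _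
      rw [he, (hasSum_ite_eq x (μt τ x)).tsum_eq]
      norm_num
    | succ n ih =>
      intro x
      show gconv (μt τ) (gconvPow (μt τ) (n + 1)) x = _
      have h1 : gconv (μt τ) (gconvPow (μt τ) (n + 1)) x =
          gconv (μt τ) (μt ((n + 1 : ℕ) * τ)) x := by
        unfold gconv
        exact tsum_congr fun y => by rw [ih (y⁻¹ * x)]
      rw [h1, hconv τ hτ ((n + 1 : ℕ) * τ) (by positivity) x]
      congr 1
      push_cast
      ring
  intro n hn x
  obtain ⟨k, rfl⟩ : ∃ k, n = k + 1 := ⟨n - 1, (Nat.succ_pred_eq_of_pos hn).symm⟩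
  have hτ : (0:ℝ) < 1 / ((k + 1 : ℕ) : ℝ) := by positivity
  rw [hpow _ hτ k x]
  have : ((k + 1 : ℕ) : ℝ) * (1 / ((k + 1 : ℕ) : ℝ)) = 1 := by
    rw [mul_one_div, div_self]
    exact_mod_cast (Nat.succ_ne_zero k)
  rw [this]
  exact hone x
end

section
/- The random walk with law μ is recurrent if and only if Σ_{n≥0} 1/( |G_n| · (1 − μ(G_n)) ) = ∞; that is, Σ_{n≥1} μ^{*n}(e) = ∞ if and only if Σ_{n≥0} 1/( |G_n| · (1 − Σ_{x∈G_n} μ(x)) ) = ∞. (Note that 1 − μ(G_n) = Σ_{i>n} c_i (1 − |G_n|/|G_i|) > 0 for every n.) -/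
open scoped BigOperators Classical

open scoped ENNReal

namespace P42
open ENNReal

/-- ennreal version of convolution -/
noncomputable def egconv {G : Type*} [Group G] (f g : G → ℝ≥0∞) : G → ℝ≥0∞ :=
  fun x => ∑' y : G, f y * g (y⁻¹ * x)

noncomputable def egconvPow {G : Type*} [Group G] (f : G → ℝ≥0∞) : ℕ → G → ℝ≥0∞
  | 0 => fun x => if x = 1 then (1 : ℝ≥0∞) else 0
  | n + 1 => egconv f (egconvPow f n)

lemma tsum_ofReal_eq_top_iff {ι : Type*} {f : ι → ℝ} (hf : ∀ i, 0 ≤ f i) :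
    (∑' i, ENNReal.ofReal (f i)) = ⊤ ↔ ¬ Summable f := by
  constructor
  · intro h hs
    rw [← ENNReal.ofReal_tsum_of_nonneg hf hs] at h
    exact ENNReal.ofReal_ne_top h
  · intro hns
    by_contra h
    have := ENNReal.summable_toReal h
    simp only [ENNReal.toReal_ofReal (hf _)] at this
    exact hns this

section Main

variable {G : Type*} [Group G] (H : ℕ → Subgroup G)

/-- ennreal uniform density on `H k` -/
noncomputable def mE (k : ℕ) : G → ℝ≥0∞ :=
  fun x => if x ∈ H k then ((Nat.card (H k) : ℝ≥0∞))⁻¹ else 0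

variable (hfin : ∀ k, (H k : Set G).Finite) (hlt : ∀ k, H k < H (k + 1))

section Card
include hfin

lemma card_pos (k : ℕ) : 0 < Nat.card (H k) := by
  haveI := (hfin k).to_subtype
  exact Nat.card_pos

lemma card_toFinset (k : ℕ) : (hfin k).toFinset.card = Nat.card (H k) := by
  rw [← Set.ncard_eq_toFinset_card (H k : Set G) (hfin k), ← Nat.card_coe_set_eq]
  rfl

omit hfin in
lemma hmono (hlt : ∀ k, H k < H (k + 1)) : ∀ {j k : ℕ}, j ≤ k → H j ≤ H k := by
  intro j k hjk
  exact monotone_nat_of_le_succ (fun t => (hlt t).le) hjk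

lemma card_mono (hlt : ∀ k, H k < H (k + 1)) {j k : ℕ} (hjk : j ≤ k) :
    Nat.card (H j) ≤ Nat.card (H k) :=
  Nat.le_of_dvd (card_pos H hfin k) (Subgroup.card_dvd_of_le (hmono H hlt hjk))

lemma card_double (hlt : ∀ k, H k < H (k + 1)) {j k : ℕ} (hjk : j < k) :
    2 * Nat.card (H j) ≤ Nat.card (H k) := by
  have h1 : 2 * Nat.card (H j) ≤ Nat.card (H (j + 1)) := by
    obtain ⟨t, ht⟩ := Subgroup.card_dvd_of_le (hlt j).le
    have hltc : Nat.card (H j) < Nat.card (H (j + 1)) := by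
      have hss : (H j : Set G) ⊂ (H (j + 1) : Set G) := SetLike.coe_ssubset_coe.mpr (hlt j)
      have := Set.ncard_lt_ncard hss (hfin (j + 1))
      rwa [← Nat.card_coe_set_eq, ← Nat.card_coe_set_eq] at this
    have hjpos := card_pos H hfin j
    rcases Nat.lt_or_ge t 2 with h2 | h2
    · interval_cases t <;> omega
    · calc 2 * Nat.card (H j) ≤ Nat.card (H j) * t := by nlinarith
        _ = Nat.card (H (j + 1)) := ht.symm
  exact h1.trans (card_mono H hfin hlt hjk)

end Card

section ConvM
include hfin

lemma mE_conv (hlt : ∀ k, H k < H (k + 1)) (j k : ℕ) (x : G) :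
    egconv (mE H j) (mE H k) x = mE H (max j k) x := by
  classical
  set s := (hfin j).toFinset with hs
  have h0 : ∀ y ∉ s, mE H j y * mE H k (y⁻¹ * x) = 0 := by
    intro y hy
    have hyj : y ∉ H j := by simpa [hs] using hy
    simp [mE, hyj]
  show (∑' y : G, mE H j y * mE H k (y⁻¹ * x)) = mE H (max j k) x
  rw [tsum_eq_sum h0]
  have h1 : ∀ y ∈ s, mE H j y * mE H k (y⁻¹ * x)
      = if y⁻¹ * x ∈ H k then
          ((Nat.card (H j) : ℝ≥0∞))⁻¹ * ((Nat.card (H k) : ℝ≥0∞))⁻¹ else 0 := by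
    intro y hy
    have hyj : y ∈ H j := by simpa [hs] using hy
    simp only [mE, if_pos hyj]
    split_ifs <;> simp
  rw [Finset.sum_congr rfl h1, ← Finset.sum_filter, Finset.sum_const]
  rcases le_total j k with hjk | hkj
  · rw [max_eq_right hjk]
    by_cases hx : x ∈ H k
    · have hfil : Finset.filter (fun y => y⁻¹ * x ∈ H k) s = s := by
        apply Finset.filter_true_of_mem
        intro y hy
        have hyj : y ∈ H j := by simpa [hs] using hy
        exact (H k).mul_mem (inv_mem (hmono H hlt hjk hyj)) hx
      rw [hfil, hs, card_toFinset H hfin j, nsmul_eq_mul]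
      simp only [mE, if_pos hx]
      rw [← mul_assoc, ENNReal.mul_inv_cancel (by exact_mod_cast (card_pos H hfin j).ne')
        (ENNReal.natCast_ne_top _), one_mul]
    · have hfil : Finset.filter (fun y => y⁻¹ * x ∈ H k) s = ∅ := by
        rw [Finset.filter_eq_empty_iff]
        intro y hy hmem
        have hyj : y ∈ H j := by simpa [hs] using hy
        have : x ∈ H k := by
          have := (H k).mul_mem (hmono H hlt hjk hyj) hmem
          simpa using this
        exact hx this
      rw [hfil]
      simp [mE, hx]
  · rw [max_eq_left hkj]
    by_cases hx : x ∈ H j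
    · have hinj : Function.Injective (fun z : G => x * z⁻¹) := by
        intro a b hab
        simp only at hab
        exact inv_injective (mul_left_cancel hab)
      have hfil : Finset.filter (fun y => y⁻¹ * x ∈ H k) s
          = Finset.image (fun z : G => x * z⁻¹) (hfin k).toFinset := by
        ext y
        simp only [Finset.mem_filter, Finset.mem_image, Set.Finite.mem_toFinset, hs]
        constructor
        · rintro ⟨hyj, hyk⟩
          exact ⟨y⁻¹ * x, hyk, by group⟩
        · rintro ⟨z, hz, rfl⟩
          refine ⟨(H j).mul_mem hx (inv_mem (hmono H hlt hkj hz)), ?_⟩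
          have hzz : (x * z⁻¹)⁻¹ * x = z := by group
          rw [hzz]
          exact hz
      rw [hfil, Finset.card_image_of_injective _ hinj, card_toFinset H hfin k, nsmul_eq_mul]
      simp only [mE, if_pos hx]
      rw [mul_comm ((Nat.card (H j) : ℝ≥0∞))⁻¹, ← mul_assoc,
        ENNReal.mul_inv_cancel (by exact_mod_cast (card_pos H hfin k).ne')
          (ENNReal.natCast_ne_top _), one_mul]
    · have hfil : Finset.filter (fun y => y⁻¹ * x ∈ H k) s = ∅ := by
        rw [Finset.filter_eq_empty_iff]
        intro y hy hmem
        have hyj : y ∈ H j := by simpa [hs] using hy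
        have : x ∈ H j := by
          have := (H j).mul_mem hyj (hmono H hlt hkj hmem)
          simpa using this
        exact hx this
      rw [hfil]
      simp [mE, hx]

lemma mE_tsum (k : ℕ) : (∑' x : G, mE H k x) = 1 := by
  classical
  have h0 : ∀ y ∉ (hfin k).toFinset, mE H k y = 0 := by
    intro y hy
    have : y ∉ H k := by simpa using hy
    simp [mE, this]
  rw [tsum_eq_sum h0]
  have h1 : ∀ y ∈ (hfin k).toFinset, mE H k y = ((Nat.card (H k) : ℝ≥0∞))⁻¹ := by
    intro y hy
    have : y ∈ H k := by simpa using hy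
    simp [mE, this]
  rw [Finset.sum_congr rfl h1, Finset.sum_const, card_toFinset H hfin k, nsmul_eq_mul,
    ENNReal.mul_inv_cancel (by exact_mod_cast (card_pos H hfin k).ne') (ENNReal.natCast_ne_top _)]

end ConvM


section Mu
variable {c : ℕ → ℝ} {m : ℕ → G → ℝ} {μ : G → ℝ}

omit hfin in
lemma c_summable (hc : ∀ k, 0 < c k) (hcsum : ∑' k : ℕ, c k = 1) : Summable c := by
  by_contra h
  rw [tsum_eq_zero_of_not_summable h] at hcsum
  norm_num at hcsum

include hfin

lemma m_nonneg (hm : ∀ (k : ℕ) (x : G), m k x = if x ∈ H k then ((Nat.card (H k) : ℝ))⁻¹ else 0)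
    (k : ℕ) (x : G) : 0 ≤ m k x := by
  rw [hm]
  split_ifs <;> positivity

lemma m_le_one (hm : ∀ (k : ℕ) (x : G), m k x = if x ∈ H k then ((Nat.card (H k) : ℝ))⁻¹ else 0)
    (k : ℕ) (x : G) : m k x ≤ 1 := by
  rw [hm]
  have h1 : (1 : ℝ) ≤ (Nat.card (H k) : ℝ) := by exact_mod_cast card_pos H hfin k
  split_ifs
  · exact inv_le_one_of_one_le₀ h1
  · norm_num

lemma cm_summable (hc : ∀ k, 0 < c k) (hcsum : ∑' k : ℕ, c k = 1)
    (hm : ∀ (k : ℕ) (x : G), m k x = if x ∈ H k then ((Nat.card (H k) : ℝ))⁻¹ else 0)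
    (x : G) : Summable (fun k => c k * m k x) := by
  refine Summable.of_nonneg_of_le
    (fun k => mul_nonneg (hc k).le (m_nonneg H hfin hm k x))
    (fun k => mul_le_of_le_one_right (hc k).le (m_le_one H hfin hm k x))
    (c_summable hc hcsum)

lemma mu_nonneg (hc : ∀ k, 0 < c k)
    (hm : ∀ (k : ℕ) (x : G), m k x = if x ∈ H k then ((Nat.card (H k) : ℝ))⁻¹ else 0)
    (hμ : ∀ x : G, μ x = ∑' k : ℕ, c k * m k x) (x : G) : 0 ≤ μ x := by
  rw [hμ]
  exact tsum_nonneg (fun k => mul_nonneg (hc k).le (m_nonneg H hfin hm k x))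

lemma muE_eq (hc : ∀ k, 0 < c k) (hcsum : ∑' k : ℕ, c k = 1)
    (hm : ∀ (k : ℕ) (x : G), m k x = if x ∈ H k then ((Nat.card (H k) : ℝ))⁻¹ else 0)
    (hμ : ∀ x : G, μ x = ∑' k : ℕ, c k * m k x) (x : G) :
    ENNReal.ofReal (μ x) = ∑' k : ℕ, ENNReal.ofReal (c k) * mE H k x := by
  rw [hμ, ENNReal.ofReal_tsum_of_nonneg
    (fun k => mul_nonneg (hc k).le (m_nonneg H hfin hm k x)) (cm_summable H hfin hc hcsum hm x)]
  refine tsum_congr (fun k => ?_)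
  rw [ENNReal.ofReal_mul (hc k).le]
  congr 1
  rw [hm]
  show ENNReal.ofReal (if x ∈ H k then ((Nat.card (H k) : ℝ))⁻¹ else 0) = mE H k x
  unfold mE
  split_ifs with h
  · have hpos : (0 : ℝ) < (Nat.card (H k) : ℝ) := by exact_mod_cast card_pos H hfin k
    rw [ENNReal.ofReal_inv_of_pos hpos, ENNReal.ofReal_natCast]
  · simp

omit hfin in
lemma cE_tsum (hc : ∀ k, 0 < c k) (hcsum : ∑' k : ℕ, c k = 1) :
    (∑' k : ℕ, ENNReal.ofReal (c k)) = 1 := by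
  rw [← ENNReal.ofReal_tsum_of_nonneg (fun k => (hc k).le) (c_summable hc hcsum), hcsum,
    ENNReal.ofReal_one]

lemma muE_tsum (hc : ∀ k, 0 < c k) (hcsum : ∑' k : ℕ, c k = 1)
    (hm : ∀ (k : ℕ) (x : G), m k x = if x ∈ H k then ((Nat.card (H k) : ℝ))⁻¹ else 0)
    (hμ : ∀ x : G, μ x = ∑' k : ℕ, c k * m k x) :
    (∑' x : G, ENNReal.ofReal (μ x)) = 1 := by
  calc (∑' x : G, ENNReal.ofReal (μ x))
      = ∑' x : G, ∑' k : ℕ, ENNReal.ofReal (c k) * mE H k x := by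
        exact tsum_congr (fun x => muE_eq H hfin hc hcsum hm hμ x)
    _ = ∑' k : ℕ, ∑' x : G, ENNReal.ofReal (c k) * mE H k x := ENNReal.tsum_comm
    _ = ∑' k : ℕ, ENNReal.ofReal (c k) * ∑' x : G, mE H k x := by
        exact tsum_congr (fun k => ENNReal.tsum_mul_left)
    _ = ∑' k : ℕ, ENNReal.ofReal (c k) := by
        refine tsum_congr (fun k => ?_)
        rw [mE_tsum H hfin k, mul_one]
    _ = 1 := cE_tsum hc hcsum

lemma pow_le_one (hc : ∀ k, 0 < c k) (hcsum : ∑' k : ℕ, c k = 1)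
    (hm : ∀ (k : ℕ) (x : G), m k x = if x ∈ H k then ((Nat.card (H k) : ℝ))⁻¹ else 0)
    (hμ : ∀ x : G, μ x = ∑' k : ℕ, c k * m k x) :
    ∀ n (x : G), egconvPow (fun z => ENNReal.ofReal (μ z)) n x ≤ 1 := by
  intro n
  induction n with
  | zero =>
    intro x
    show (if x = 1 then (1:ℝ≥0∞) else 0) ≤ 1
    split_ifs <;> simp
  | succ n ih =>
    intro x
    show (∑' y : G, ENNReal.ofReal (μ y) * egconvPow (fun z => ENNReal.ofReal (μ z)) n (y⁻¹ * x)) ≤ 1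
    calc (∑' y : G, ENNReal.ofReal (μ y) * egconvPow (fun z => ENNReal.ofReal (μ z)) n (y⁻¹ * x))
        ≤ ∑' y : G, ENNReal.ofReal (μ y) * 1 :=
          ENNReal.tsum_le_tsum (fun y => mul_le_mul_right (ih _) _)
      _ = 1 := by
          simp only [mul_one]
          exact muE_tsum H hfin hc hcsum hm hμ

lemma gconvPow_toReal (hc : ∀ k, 0 < c k) (hcsum : ∑' k : ℕ, c k = 1)
    (hm : ∀ (k : ℕ) (x : G), m k x = if x ∈ H k then ((Nat.card (H k) : ℝ))⁻¹ else 0)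
    (hμ : ∀ x : G, μ x = ∑' k : ℕ, c k * m k x) :
    ∀ n (x : G), gconvPow μ n x = (egconvPow (fun z => ENNReal.ofReal (μ z)) n x).toReal := by
  intro n
  induction n with
  | zero =>
    intro x
    show (if x = 1 then (1:ℝ) else 0) = (if x = 1 then (1:ℝ≥0∞) else 0).toReal
    split_ifs <;> simp
  | succ n ih =>
    intro x
    show gconv μ (gconvPow μ n) x = _
    unfold gconv
    have hterm : ∀ y : G, μ y * gconvPow μ n (y⁻¹ * x)
        = (ENNReal.ofReal (μ y) * egconvPow (fun z => ENNReal.ofReal (μ z)) n (y⁻¹ * x)).toReal := by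
      intro y
      rw [ih, ENNReal.toReal_mul, ENNReal.toReal_ofReal (mu_nonneg H hfin hc hm hμ y)]
    rw [tsum_congr hterm, ← ENNReal.tsum_toReal_eq]
    · rfl
    · intro y
      exact ENNReal.mul_ne_top ENNReal.ofReal_ne_top
        (((pow_le_one H hfin hc hcsum hm hμ n _).trans_lt ENNReal.one_lt_top).ne)

end Mu


section Dist

/-- partial sums of `c` -/
noncomputable def Pc (c : ℕ → ℝ) (k : ℕ) : ℝ := ∑ i ∈ Finset.range k, c i

/-- ennreal coefficients of the convolution powers -/
noncomputable def DE (c : ℕ → ℝ) (n k : ℕ) : ℝ≥0∞ :=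
  ENNReal.ofReal (Pc c (k + 1) ^ n - Pc c k ^ n)

variable {c : ℕ → ℝ} {m : ℕ → G → ℝ} {μ : G → ℝ}

omit hfin in
lemma Pc_nonneg (hc : ∀ k, 0 < c k) (k : ℕ) : 0 ≤ Pc c k :=
  Finset.sum_nonneg (fun i _ => (hc i).le)

omit hfin in
lemma Pc_mono (hc : ∀ k, 0 < c k) {j k : ℕ} (hjk : j ≤ k) : Pc c j ≤ Pc c k := by
  unfold Pc
  exact Finset.sum_le_sum_of_subset_of_nonneg (Finset.range_subset_range.mpr hjk)
    (fun i _ _ => (hc i).le)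

omit hfin in
lemma Pc_succ (c : ℕ → ℝ) (k : ℕ) : Pc c (k + 1) = Pc c k + c k := by
  simp [Pc, Finset.sum_range_succ]

omit hfin in
lemma Pc_le_one (hc : ∀ k, 0 < c k) (hcsum : ∑' k : ℕ, c k = 1) (k : ℕ) : Pc c k ≤ 1 := by
  rw [← hcsum]
  exact Summable.sum_le_tsum _ (fun i _ => (hc i).le) (c_summable hc hcsum)

omit hfin in
lemma Pc_lt_one (hc : ∀ k, 0 < c k) (hcsum : ∑' k : ℕ, c k = 1) (k : ℕ) : Pc c k < 1 := by
  have h1 : Pc c k + c k ≤ 1 := by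
    rw [← Pc_succ]
    exact Pc_le_one hc hcsum (k + 1)
  linarith [hc k]

omit hfin in
lemma c0_le_Pc (hc : ∀ k, 0 < c k) (k : ℕ) : c 0 ≤ Pc c (k + 1) := by
  unfold Pc
  exact Finset.single_le_sum (fun i _ => (hc i).le) (Finset.mem_range.mpr (Nat.succ_pos k))

include hfin

set_option maxHeartbeats 1000000 in
lemma conv_sum (hc : ∀ k, 0 < c k) (hcsum : ∑' k : ℕ, c k = 1)
    (hlt : ∀ k, H k < H (k + 1))
    (hm : ∀ (k : ℕ) (x : G), m k x = if x ∈ H k then ((Nat.card (H k) : ℝ))⁻¹ else 0)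
    (hμ : ∀ x : G, μ x = ∑' k : ℕ, c k * m k x) (e : ℕ → ℝ≥0∞) (x : G) :
    egconv (fun z => ENNReal.ofReal (μ z)) (fun z => ∑' k : ℕ, e k * mE H k z) x
      = ∑' l : ℕ, (ENNReal.ofReal (c l) * (∑ i ∈ Finset.range l, e i)
          + (∑ i ∈ Finset.range (l + 1), ENNReal.ofReal (c i)) * e l) * mE H l x := by
  classical
  calc egconv (fun z => ENNReal.ofReal (μ z)) (fun z => ∑' k : ℕ, e k * mE H k z) x
      = ∑' (y : G) (j : ℕ) (k : ℕ),
          (ENNReal.ofReal (c j) * mE H j y) * (e k * mE H k (y⁻¹ * x)) := by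
        refine tsum_congr (fun y => ?_)
        show ENNReal.ofReal (μ y) * (∑' k : ℕ, e k * mE H k (y⁻¹ * x)) = _
        rw [muE_eq H hfin hc hcsum hm hμ y, ← ENNReal.tsum_mul_right]
        exact tsum_congr (fun j => ENNReal.tsum_mul_left.symm)
    _ = ∑' (j : ℕ) (k : ℕ) (y : G),
          (ENNReal.ofReal (c j) * mE H j y) * (e k * mE H k (y⁻¹ * x)) := by
        rw [ENNReal.tsum_comm]
        exact tsum_congr (fun j => ENNReal.tsum_comm)
    _ = ∑' (j : ℕ) (k : ℕ), (ENNReal.ofReal (c j) * e k) * mE H (max j k) x := by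
        refine tsum_congr (fun j => tsum_congr (fun k => ?_))
        have h1 : ∀ y : G, (ENNReal.ofReal (c j) * mE H j y) * (e k * mE H k (y⁻¹ * x))
            = (ENNReal.ofReal (c j) * e k) * (mE H j y * mE H k (y⁻¹ * x)) := by
          intro y; ring
        rw [tsum_congr h1, ENNReal.tsum_mul_left]
        congr 1
        exact mE_conv H hfin hlt j k x
    _ = ∑' (j : ℕ), ENNReal.ofReal (c j) *
          ((∑ i ∈ Finset.range j, e i) * mE H j x + ∑' (i : ℕ), e (i + j) * mE H (i + j) x) := by
        refine tsum_congr (fun j => ?_)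
        have h1 : ∀ k : ℕ, (ENNReal.ofReal (c j) * e k) * mE H (max j k) x
            = ENNReal.ofReal (c j) * (e k * mE H (max j k) x) := fun k => by ring
        rw [tsum_congr h1, ENNReal.tsum_mul_left]
        congr 1
        rw [← Summable.sum_add_tsum_nat_add' (f := fun k => e k * mE H (max j k) x) (k := j) ENNReal.summable]
        congr 1
        · rw [Finset.sum_mul]
          refine Finset.sum_congr rfl (fun i hi => ?_)
          rw [max_eq_left (Nat.le_of_lt (Finset.mem_range.mp hi))]
        · exact tsum_congr (fun i => by rw [max_eq_right (Nat.le_add_left j i)])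
    _ = (∑' (j : ℕ), ENNReal.ofReal (c j) * ((∑ i ∈ Finset.range j, e i) * mE H j x))
        + ∑' (j : ℕ) (i : ℕ), ENNReal.ofReal (c j) * (e (i + j) * mE H (i + j) x) := by
        rw [← ENNReal.tsum_add]
        refine tsum_congr (fun j => ?_)
        rw [mul_add, ENNReal.tsum_mul_left]
    _ = (∑' (j : ℕ), ENNReal.ofReal (c j) * ((∑ i ∈ Finset.range j, e i) * mE H j x))
        + ∑' (l : ℕ) (j : ℕ),
            (if j ≤ l then ENNReal.ofReal (c j) * (e l * mE H l x) else 0) := by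
        congr 1
        rw [ENNReal.tsum_comm
          (f := fun l j => if j ≤ l then ENNReal.ofReal (c j) * (e l * mE H l x) else 0)]
        refine tsum_congr (fun j => ?_)
        have hinj : Function.Injective (fun i : ℕ => i + j) := add_left_injective j
        have hsupp : Function.support
            (fun l => if j ≤ l then ENNReal.ofReal (c j) * (e l * mE H l x) else 0)
            ⊆ Set.range (fun i : ℕ => i + j) := by
          intro l hl
          simp only [Function.mem_support, ne_eq] at hl
          have hjl : j ≤ l := by
            by_contra hle
            exact hl (by simp [hle])
          exact ⟨l - j, Nat.sub_add_cancel hjl⟩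
        rw [← Function.Injective.tsum_eq hinj
          (f := fun l => if j ≤ l then ENNReal.ofReal (c j) * (e l * mE H l x) else 0) hsupp]
        refine tsum_congr (fun i => ?_)
        simp only [if_pos (Nat.le_add_left j i)]
    _ = ∑' l : ℕ, (ENNReal.ofReal (c l) * (∑ i ∈ Finset.range l, e i)
          + (∑ i ∈ Finset.range (l + 1), ENNReal.ofReal (c i)) * e l) * mE H l x := by
        rw [← ENNReal.tsum_add]
        refine tsum_congr (fun l => ?_)
        have h2 : (∑' (j : ℕ), if j ≤ l then ENNReal.ofReal (c j) * (e l * mE H l x) else 0)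
            = (∑ i ∈ Finset.range (l + 1), ENNReal.ofReal (c i)) * (e l * mE H l x) := by
          rw [tsum_eq_sum (s := Finset.range (l + 1))
            (fun j hj => if_neg (by simp at hj; omega))]
          rw [Finset.sum_congr rfl (fun j hj => if_pos (by simp at hj; omega)),
            ← Finset.sum_mul]
        rw [h2]
        ring
end Dist


section PowEq
variable {c : ℕ → ℝ} {m : ℕ → G → ℝ} {μ : G → ℝ}

omit hfin in
lemma DE_sum_range (hc : ∀ k, 0 < c k) (n l : ℕ) :
    (∑ i ∈ Finset.range l, DE c (n + 1) i) = ENNReal.ofReal (Pc c l ^ (n + 1)) := by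
  induction l with
  | zero => simp [Pc, DE]
  | succ l ih =>
    rw [Finset.sum_range_succ, ih]
    unfold DE
    rw [← ENNReal.ofReal_add (pow_nonneg (Pc_nonneg hc l) _)
      (sub_nonneg.mpr (pow_le_pow_left₀ (Pc_nonneg hc l) (Pc_mono hc (Nat.le_succ l)) _))]
    congr 1
    ring

omit hfin in
lemma cE_sum_range (hc : ∀ k, 0 < c k) (t : ℕ) :
    (∑ i ∈ Finset.range t, ENNReal.ofReal (c i)) = ENNReal.ofReal (Pc c t) :=
  (ENNReal.ofReal_sum_of_nonneg (fun i _ => (hc i).le)).symm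

include hfin

set_option maxHeartbeats 800000 in
lemma pow_eq (hc : ∀ k, 0 < c k) (hcsum : ∑' k : ℕ, c k = 1)
    (hlt : ∀ k, H k < H (k + 1))
    (hm : ∀ (k : ℕ) (x : G), m k x = if x ∈ H k then ((Nat.card (H k) : ℝ))⁻¹ else 0)
    (hμ : ∀ x : G, μ x = ∑' k : ℕ, c k * m k x) :
    ∀ (n : ℕ) (x : G), egconvPow (fun z => ENNReal.ofReal (μ z)) (n + 1) x
      = ∑' k : ℕ, DE c (n + 1) k * mE H k x := by
  intro n
  induction n with
  | zero =>
    intro x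
    have h0 : egconvPow (fun z => ENNReal.ofReal (μ z)) 1 x = ENNReal.ofReal (μ x) := by
      show (∑' y : G, ENNReal.ofReal (μ y) * (if y⁻¹ * x = 1 then (1 : ℝ≥0∞) else 0)) = _
      have hterm : ∀ y : G, ENNReal.ofReal (μ y) * (if y⁻¹ * x = 1 then (1 : ℝ≥0∞) else 0)
          = if y = x then ENNReal.ofReal (μ x) else 0 := by
        intro y
        by_cases hyx : y = x
        · subst hyx; simp
        · have hne : ¬(y⁻¹ * x = 1) := fun h => hyx (inv_mul_eq_one.mp h)
          simp [hyx, hne]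
      rw [tsum_congr hterm, tsum_ite_eq]
    rw [h0, muE_eq H hfin hc hcsum hm hμ x]
    refine tsum_congr (fun k => ?_)
    congr 1
    unfold DE
    rw [pow_one, pow_one, Pc_succ]
    congr 1
    ring
  | succ n ih =>
    intro x
    have hfun : egconvPow (fun z => ENNReal.ofReal (μ z)) (n + 1)
        = fun z => ∑' k : ℕ, DE c (n + 1) k * mE H k z := funext ih
    show egconv (fun z => ENNReal.ofReal (μ z))
      (egconvPow (fun z => ENNReal.ofReal (μ z)) (n + 1)) x = _
    rw [hfun, conv_sum H hfin hc hcsum hlt hm hμ (DE c (n + 1)) x]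
    refine tsum_congr (fun l => ?_)
    congr 1
    rw [DE_sum_range hc n l, cE_sum_range hc (l + 1)]
    show ENNReal.ofReal (c l) * ENNReal.ofReal (Pc c l ^ (n + 1))
        + ENNReal.ofReal (Pc c (l + 1)) * DE c (n + 1) l = DE c (n + 2) l
    unfold DE
    rw [← ENNReal.ofReal_mul (hc l).le, ← ENNReal.ofReal_mul (Pc_nonneg hc (l + 1)),
      ← ENNReal.ofReal_add (mul_nonneg (hc l).le (pow_nonneg (Pc_nonneg hc l) _))
        (mul_nonneg (Pc_nonneg hc (l + 1))
          (sub_nonneg.mpr (pow_le_pow_left₀ (Pc_nonneg hc l) (Pc_mono hc (Nat.le_succ l)) _)))]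
    congr 1
    have hcl : c l = Pc c (l + 1) - Pc c l := by rw [Pc_succ]; ring
    rw [hcl]
    ring

omit hfin in
lemma geom_tail_summable {a : ℝ} (h0 : 0 ≤ a) (ha : a < 1) :
    Summable (fun n : ℕ => a ^ (n + 1)) := by
  simpa [pow_succ] using (summable_geometric_of_lt_one h0 ha).mul_right a

omit hfin in
lemma geom_tail_tsum {a : ℝ} (h0 : 0 ≤ a) (ha : a < 1) :
    (∑' n : ℕ, a ^ (n + 1)) = (1 - a)⁻¹ * a := by
  simp only [pow_succ]
  rw [tsum_mul_right, tsum_geometric_of_lt_one h0 ha]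

omit hfin in
lemma DE_tail (hc : ∀ k, 0 < c k) (hcsum : ∑' k : ℕ, c k = 1) (k : ℕ) :
    (∑' n : ℕ, DE c (n + 1) k)
      = ENNReal.ofReal ((1 - Pc c (k + 1))⁻¹ * Pc c (k + 1) - (1 - Pc c k)⁻¹ * Pc c k) := by
  have h0a : 0 ≤ Pc c k := Pc_nonneg hc k
  have h0b : 0 ≤ Pc c (k + 1) := Pc_nonneg hc (k + 1)
  have hab : Pc c k ≤ Pc c (k + 1) := Pc_mono hc (Nat.le_succ k)
  have hb1 : Pc c (k + 1) < 1 := Pc_lt_one hc hcsum (k + 1)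
  have ha1 : Pc c k < 1 := Pc_lt_one hc hcsum k
  unfold DE
  rw [← ENNReal.ofReal_tsum_of_nonneg
    (fun n => sub_nonneg.mpr (pow_le_pow_left₀ h0a hab _))
    (((geom_tail_summable h0b hb1).sub (geom_tail_summable h0a ha1)))]
  congr 1
  rw [Summable.tsum_sub (geom_tail_summable h0b hb1) (geom_tail_summable h0a ha1),
    geom_tail_tsum h0b hb1, geom_tail_tsum h0a ha1]

include hfin

lemma A_eq (hc : ∀ k, 0 < c k) (hcsum : ∑' k : ℕ, c k = 1)
    (hlt : ∀ k, H k < H (k + 1))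
    (hm : ∀ (k : ℕ) (x : G), m k x = if x ∈ H k then ((Nat.card (H k) : ℝ))⁻¹ else 0)
    (hμ : ∀ x : G, μ x = ∑' k : ℕ, c k * m k x) :
    (∑' n : ℕ, egconvPow (fun z => ENNReal.ofReal (μ z)) (n + 1) (1 : G))
      = ∑' k : ℕ, ENNReal.ofReal
          (((1 - Pc c (k + 1))⁻¹ * Pc c (k + 1) - (1 - Pc c k)⁻¹ * Pc c k)
            * ((Nat.card (H k) : ℝ))⁻¹) := by
  have heval : ∀ n : ℕ, egconvPow (fun z => ENNReal.ofReal (μ z)) (n + 1) (1 : G)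
      = ∑' k : ℕ, DE c (n + 1) k * ((Nat.card (H k) : ℝ≥0∞))⁻¹ := by
    intro n
    rw [pow_eq H hfin hc hcsum hlt hm hμ n 1]
    refine tsum_congr (fun k => ?_)
    congr 1
    simp [mE, (H k).one_mem]
  rw [tsum_congr heval, ENNReal.tsum_comm]
  refine tsum_congr (fun k => ?_)
  rw [ENNReal.tsum_mul_right, DE_tail hc hcsum k]
  have hNpos : (0 : ℝ) < (Nat.card (H k) : ℝ) := by exact_mod_cast card_pos H hfin k
  rw [← ENNReal.ofReal_natCast, ← ENNReal.ofReal_inv_of_pos hNpos,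
    ← ENNReal.ofReal_mul (by
      have h1 : (1 - Pc c k)⁻¹ * Pc c k ≤ (1 - Pc c (k + 1))⁻¹ * Pc c (k + 1) := by
        have ha1 : Pc c k < 1 := Pc_lt_one hc hcsum k
        have hb1 : Pc c (k + 1) < 1 := Pc_lt_one hc hcsum (k + 1)
        have hab : Pc c k ≤ Pc c (k + 1) := Pc_mono hc (Nat.le_succ k)
        have h0a : 0 ≤ Pc c k := Pc_nonneg hc k
        have hden1 : 0 < 1 - Pc c k := by linarith
        have hden2 : 0 < 1 - Pc c (k + 1) := by linarith
        have hdiv : Pc c k / (1 - Pc c k) ≤ Pc c (k + 1) / (1 - Pc c (k + 1)) := by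
          rw [div_le_div_iff₀ hden1 hden2]
          nlinarith
        calc (1 - Pc c k)⁻¹ * Pc c k = Pc c k / (1 - Pc c k) := by
              rw [div_eq_mul_inv, mul_comm]
          _ ≤ Pc c (k + 1) / (1 - Pc c (k + 1)) := hdiv
          _ = (1 - Pc c (k + 1))⁻¹ * Pc c (k + 1) := by rw [div_eq_mul_inv, mul_comm]
      linarith)]

end PowEq


section MuSum
variable {c : ℕ → ℝ} {m : ℕ → G → ℝ} {μ : G → ℝ}

omit hfin in
lemma tail_eq (hc : ∀ k, 0 < c k) (hcsum : ∑' k : ℕ, c k = 1) (n : ℕ) :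
    (∑' i : ℕ, c (i + (n + 1))) = 1 - Pc c (n + 1) := by
  have h := Summable.sum_add_tsum_nat_add (n + 1) (c_summable hc hcsum)
  rw [hcsum] at h
  unfold Pc
  linarith

include hfin

lemma m_finset_sum (hlt : ∀ k, H k < H (k + 1))
    (hm : ∀ (k : ℕ) (x : G), m k x = if x ∈ H k then ((Nat.card (H k) : ℝ))⁻¹ else 0)
    (n k : ℕ) :
    (∑ x ∈ (hfin n).toFinset, m k x)
      = (Nat.card (H (min k n)) : ℝ) * ((Nat.card (H k) : ℝ))⁻¹ := by
  classical
  have hsum : (∑ x ∈ (hfin n).toFinset, m k x)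
      = ∑ x ∈ (hfin n).toFinset, (if x ∈ H k then ((Nat.card (H k) : ℝ))⁻¹ else 0) :=
    Finset.sum_congr rfl (fun x _ => hm k x)
  rw [hsum, ← Finset.sum_filter]
  have hfil : (hfin n).toFinset.filter (fun x => x ∈ H k) = (hfin (min k n)).toFinset := by
    ext x
    simp only [Finset.mem_filter, Set.Finite.mem_toFinset, SetLike.mem_coe]
    rcases le_total k n with h | h
    · rw [min_eq_left h]
      exact ⟨fun hx => hx.2, fun hx => ⟨hmono H hlt h hx, hx⟩⟩
    · rw [min_eq_right h]
      exact ⟨fun hx => hx.1, fun hx => ⟨hx, hmono H hlt h hx⟩⟩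
  rw [hfil, Finset.sum_const, card_toFinset H hfin (min k n), nsmul_eq_mul]

lemma mu_sum_eq (hc : ∀ k, 0 < c k) (hcsum : ∑' k : ℕ, c k = 1)
    (hlt : ∀ k, H k < H (k + 1))
    (hm : ∀ (k : ℕ) (x : G), m k x = if x ∈ H k then ((Nat.card (H k) : ℝ))⁻¹ else 0)
    (hμ : ∀ x : G, μ x = ∑' k : ℕ, c k * m k x) (n : ℕ) :
    (∑ x ∈ (hfin n).toFinset, μ x)
      = Pc c (n + 1) + ∑' i : ℕ,
          c (i + (n + 1)) * ((Nat.card (H n) : ℝ) * ((Nat.card (H (i + (n + 1))) : ℝ))⁻¹) := by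
  classical
  have hw : ∀ k, 0 ≤ c k * ((Nat.card (H (min k n)) : ℝ) * ((Nat.card (H k) : ℝ))⁻¹) := by
    intro k
    exact mul_nonneg (hc k).le (by positivity)
  have hwle : ∀ k, c k * ((Nat.card (H (min k n)) : ℝ) * ((Nat.card (H k) : ℝ))⁻¹) ≤ c k := by
    intro k
    have hkpos : (0 : ℝ) < (Nat.card (H k) : ℝ) := by exact_mod_cast card_pos H hfin k
    have hle : (Nat.card (H (min k n)) : ℝ) ≤ (Nat.card (H k) : ℝ) := by
      exact_mod_cast card_mono H hfin hlt (min_le_left k n)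
    have : (Nat.card (H (min k n)) : ℝ) * ((Nat.card (H k) : ℝ))⁻¹ ≤ 1 := by
      rw [← div_eq_mul_inv, div_le_one hkpos]
      exact hle
    nlinarith [(hc k).le, this]
  have hwsummable : Summable
      (fun k => c k * ((Nat.card (H (min k n)) : ℝ) * ((Nat.card (H k) : ℝ))⁻¹)) :=
    Summable.of_nonneg_of_le hw hwle (c_summable hc hcsum)
  have h1 : (∑ x ∈ (hfin n).toFinset, μ x)
      = ∑' k : ℕ, c k * ((Nat.card (H (min k n)) : ℝ) * ((Nat.card (H k) : ℝ))⁻¹) := by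
    rw [Finset.sum_congr rfl (fun x _ => hμ x),
      ← Summable.tsum_finsetSum (fun x _ => cm_summable H hfin hc hcsum hm x)]
    refine tsum_congr (fun k => ?_)
    rw [← Finset.mul_sum, m_finset_sum H hfin hlt hm n k]
  rw [h1, ← Summable.sum_add_tsum_nat_add (n + 1) hwsummable]
  congr 1
  · rw [Finset.sum_congr rfl (fun k hk => ?_)]
    · rfl
    · have hkn : k ≤ n := by
        have := Finset.mem_range.mp hk
        omega
      rw [min_eq_left hkn]
      have hkpos : ((Nat.card (H k) : ℝ)) ≠ 0 := by
        have h := card_pos H hfin k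
        exact_mod_cast h.ne'
      field_simp
  · refine tsum_congr (fun i => ?_)
    rw [min_eq_right (by omega)]

lemma one_sub_mu_bounds (hc : ∀ k, 0 < c k) (hcsum : ∑' k : ℕ, c k = 1)
    (hlt : ∀ k, H k < H (k + 1))
    (hm : ∀ (k : ℕ) (x : G), m k x = if x ∈ H k then ((Nat.card (H k) : ℝ))⁻¹ else 0)
    (hμ : ∀ x : G, μ x = ∑' k : ℕ, c k * m k x) (n : ℕ) :
    (1 - Pc c (n + 1)) / 2 ≤ 1 - (∑ x ∈ (hfin n).toFinset, μ x)
      ∧ 1 - (∑ x ∈ (hfin n).toFinset, μ x) ≤ 1 - Pc c (n + 1) := by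
  have htail : Summable (fun i : ℕ => c (i + (n + 1))) :=
    (summable_nat_add_iff (n + 1)).mpr (c_summable hc hcsum)
  have hT0 : (0 : ℝ) ≤ ∑' i : ℕ,
      c (i + (n + 1)) * ((Nat.card (H n) : ℝ) * ((Nat.card (H (i + (n + 1))) : ℝ))⁻¹) := by
    refine tsum_nonneg (fun i => ?_)
    exact mul_nonneg (hc _).le (by positivity)
  have hTle : (∑' i : ℕ,
      c (i + (n + 1)) * ((Nat.card (H n) : ℝ) * ((Nat.card (H (i + (n + 1))) : ℝ))⁻¹))
        ≤ ∑' i : ℕ, c (i + (n + 1)) * (1 / 2) := by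
    have hterm : ∀ i : ℕ,
        c (i + (n + 1)) * ((Nat.card (H n) : ℝ) * ((Nat.card (H (i + (n + 1))) : ℝ))⁻¹)
          ≤ c (i + (n + 1)) * (1 / 2) := by
      intro i
      have hkpos : (0 : ℝ) < (Nat.card (H (i + (n + 1))) : ℝ) := by
        exact_mod_cast card_pos H hfin (i + (n + 1))
      have hdb : 2 * (Nat.card (H n) : ℝ) ≤ (Nat.card (H (i + (n + 1))) : ℝ) := by
        exact_mod_cast card_double H hfin hlt (show n < i + (n + 1) by omega)
      have hratio : (Nat.card (H n) : ℝ) * ((Nat.card (H (i + (n + 1))) : ℝ))⁻¹ ≤ 1 / 2 := by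
        rw [← div_eq_mul_inv, div_le_div_iff₀ hkpos (by norm_num)]
        linarith
      exact mul_le_mul_of_nonneg_left hratio (hc _).le
    have hsum2 : Summable (fun i : ℕ => c (i + (n + 1)) * (1 / 2)) := htail.mul_right _
    have hsum1 : Summable (fun i : ℕ =>
        c (i + (n + 1)) * ((Nat.card (H n) : ℝ) * ((Nat.card (H (i + (n + 1))) : ℝ))⁻¹)) := by
      refine Summable.of_nonneg_of_le
        (fun i => mul_nonneg (hc _).le (by positivity)) hterm hsum2
    exact Summable.tsum_le_tsum hterm hsum1 hsum2
  have htsum2 : (∑' i : ℕ, c (i + (n + 1)) * (1 / 2)) = (1 - Pc c (n + 1)) * (1 / 2) := by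
    rw [tsum_mul_right, tail_eq hc hcsum n]
  rw [mu_sum_eq H hfin hc hcsum hlt hm hμ n]
  constructor
  · rw [htsum2] at hTle
    linarith
  · linarith

end MuSum


section Compare
variable {c : ℕ → ℝ} {m : ℕ → G → ℝ} {μ : G → ℝ}

omit hfin in
lemma gr_nonneg (hc : ∀ k, 0 < c k) (hcsum : ∑' k : ℕ, c k = 1) (k : ℕ) :
    0 ≤ (1 - Pc c k)⁻¹ * Pc c k := by
  have h1 : Pc c k < 1 := Pc_lt_one hc hcsum k
  have h2 : 0 ≤ Pc c k := Pc_nonneg hc k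
  have h3 : 0 < 1 - Pc c k := by linarith
  positivity

omit hfin in
lemma gr_le_succ (hc : ∀ k, 0 < c k) (hcsum : ∑' k : ℕ, c k = 1) (k : ℕ) :
    (1 - Pc c k)⁻¹ * Pc c k ≤ (1 - Pc c (k + 1))⁻¹ * Pc c (k + 1) := by
  have ha1 : Pc c k < 1 := Pc_lt_one hc hcsum k
  have hb1 : Pc c (k + 1) < 1 := Pc_lt_one hc hcsum (k + 1)
  have hab : Pc c k ≤ Pc c (k + 1) := Pc_mono hc (Nat.le_succ k)
  have h0a : 0 ≤ Pc c k := Pc_nonneg hc k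
  have hden1 : 0 < 1 - Pc c k := by linarith
  have hden2 : 0 < 1 - Pc c (k + 1) := by linarith
  have hdiv : Pc c k / (1 - Pc c k) ≤ Pc c (k + 1) / (1 - Pc c (k + 1)) := by
    rw [div_le_div_iff₀ hden1 hden2]
    nlinarith
  calc (1 - Pc c k)⁻¹ * Pc c k = Pc c k / (1 - Pc c k) := by rw [div_eq_mul_inv, mul_comm]
    _ ≤ Pc c (k + 1) / (1 - Pc c (k + 1)) := hdiv
    _ = (1 - Pc c (k + 1))⁻¹ * Pc c (k + 1) := by rw [div_eq_mul_inv, mul_comm]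

include hfin

lemma summable_alpha_iff_beta (hc : ∀ k, 0 < c k) (hcsum : ∑' k : ℕ, c k = 1)
    (hlt : ∀ k, H k < H (k + 1)) :
    Summable (fun k : ℕ => ((1 - Pc c (k + 1))⁻¹ * Pc c (k + 1) - (1 - Pc c k)⁻¹ * Pc c k)
        * ((Nat.card (H k) : ℝ))⁻¹)
      ↔ Summable (fun k : ℕ => ((1 - Pc c (k + 1))⁻¹ * Pc c (k + 1))
        * ((Nat.card (H k) : ℝ))⁻¹) := by
  set g : ℕ → ℝ := fun k => (1 - Pc c k)⁻¹ * Pc c k with hg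
  set a : ℕ → ℝ := fun k => ((Nat.card (H k) : ℝ))⁻¹ with haa
  have hgn : ∀ k, 0 ≤ g k := fun k => gr_nonneg hc hcsum k
  have hgm : ∀ k, g k ≤ g (k + 1) := fun k => gr_le_succ hc hcsum k
  have hg0 : g 0 = 0 := by simp [hg, Pc]
  have hap : ∀ k, 0 < a k := by
    intro k
    have : (0 : ℝ) < (Nat.card (H k) : ℝ) := by exact_mod_cast card_pos H hfin k
    positivity
  have hhalf : ∀ k, a (k + 1) ≤ a k / 2 := by
    intro k
    have hdb : 2 * (Nat.card (H k) : ℝ) ≤ (Nat.card (H (k + 1)) : ℝ) := by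
      exact_mod_cast card_double H hfin hlt (Nat.lt_succ_self k)
    have hp1 : (0 : ℝ) < (Nat.card (H (k + 1)) : ℝ) := by
      exact_mod_cast card_pos H hfin (k + 1)
    have hp0 : (0 : ℝ) < (Nat.card (H k) : ℝ) := by exact_mod_cast card_pos H hfin k
    show ((Nat.card (H (k + 1)) : ℝ))⁻¹ ≤ ((Nat.card (H k) : ℝ))⁻¹ / 2
    rw [div_eq_mul_inv, ← mul_inv, inv_le_inv₀ hp1 (by positivity)]
    linarith
  have hαnn : ∀ k, 0 ≤ (g (k + 1) - g k) * a k :=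
    fun k => mul_nonneg (by linarith [hgm k]) (hap k).le
  have hβnn : ∀ k, 0 ≤ g (k + 1) * a k := fun k => mul_nonneg (hgn (k + 1)) (hap k).le
  constructor
  · intro hα
    -- partial sums of β bounded by 2 * partial sums of α
    have key : ∀ K : ℕ, (∑ k ∈ Finset.range K, g (k + 1) * a k)
        ≤ 2 * ∑ k ∈ Finset.range K, (g (k + 1) - g k) * a k := by
      intro K
      have hsplit : (∑ k ∈ Finset.range K, g (k + 1) * a k)
          = (∑ k ∈ Finset.range K, (g (k + 1) - g k) * a k)
            + ∑ k ∈ Finset.range K, g k * a k := by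
        rw [← Finset.sum_add_distrib]
        exact Finset.sum_congr rfl (fun k _ => by ring)
      have hb2 : (∑ k ∈ Finset.range K, g k * a k)
          ≤ (1 / 2) * ∑ k ∈ Finset.range K, g (k + 1) * a k := by
        cases K with
        | zero => simp
        | succ K =>
          rw [Finset.sum_range_succ' (fun k => g k * a k) K]
          have h0 : g 0 * a 0 = 0 := by rw [hg0]; ring
          rw [h0, add_zero]
          have hterm : ∀ k, g (k + 1) * a (k + 1) ≤ (1 / 2) * (g (k + 1) * a k) := by
            intro k
            calc g (k + 1) * a (k + 1) ≤ g (k + 1) * (a k / 2) :=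
                  mul_le_mul_of_nonneg_left (hhalf k) (hgn (k + 1))
              _ = (1 / 2) * (g (k + 1) * a k) := by ring
          calc (∑ k ∈ Finset.range K, g (k + 1) * a (k + 1))
              ≤ ∑ k ∈ Finset.range K, (1 / 2) * (g (k + 1) * a k) :=
                Finset.sum_le_sum (fun k _ => hterm k)
            _ = (1 / 2) * ∑ k ∈ Finset.range K, g (k + 1) * a k := by
                rw [Finset.mul_sum]
            _ ≤ (1 / 2) * ∑ k ∈ Finset.range (K + 1), g (k + 1) * a k := by
                rw [Finset.sum_range_succ]
                have := hβnn K
                linarith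
      linarith
    refine summable_of_sum_range_le hβnn (c := 2 * ∑' k, (g (k + 1) - g k) * a k) ?_
    intro K
    calc (∑ k ∈ Finset.range K, g (k + 1) * a k)
        ≤ 2 * ∑ k ∈ Finset.range K, (g (k + 1) - g k) * a k := key K
      _ ≤ 2 * ∑' k, (g (k + 1) - g k) * a k := by
          have := Summable.sum_le_tsum (Finset.range K) (fun k _ => hαnn k) hα
          linarith
  · intro hβ
    refine Summable.of_nonneg_of_le hαnn (fun k => ?_) hβ
    show (g (k + 1) - g k) * a k ≤ g (k + 1) * a k
    have h := mul_nonneg (hgn k) (hap k).le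
    nlinarith

lemma summable_beta_iff_gamma (hc : ∀ k, 0 < c k) (hcsum : ∑' k : ℕ, c k = 1) :
    Summable (fun k : ℕ => ((1 - Pc c (k + 1))⁻¹ * Pc c (k + 1))
        * ((Nat.card (H k) : ℝ))⁻¹)
      ↔ Summable (fun k : ℕ =>
          ((Nat.card (H k) : ℝ) * (1 - Pc c (k + 1)))⁻¹) := by
  have hfact : ∀ k : ℕ, ((Nat.card (H k) : ℝ) * (1 - Pc c (k + 1)))⁻¹
      = (1 - Pc c (k + 1))⁻¹ * ((Nat.card (H k) : ℝ))⁻¹ := by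
    intro k
    rw [mul_inv, mul_comm]
  have hγnn : ∀ k : ℕ, 0 ≤ ((Nat.card (H k) : ℝ) * (1 - Pc c (k + 1)))⁻¹ := by
    intro k
    have h1 : Pc c (k + 1) < 1 := Pc_lt_one hc hcsum (k + 1)
    have h2 : (0 : ℝ) < (Nat.card (H k) : ℝ) := by exact_mod_cast card_pos H hfin k
    exact inv_nonneg.mpr (mul_nonneg h2.le (by linarith))
  have hβnn : ∀ k : ℕ, 0 ≤ ((1 - Pc c (k + 1))⁻¹ * Pc c (k + 1)) * ((Nat.card (H k) : ℝ))⁻¹ := by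
    intro k
    have h2 : (0 : ℝ) < (Nat.card (H k) : ℝ) := by exact_mod_cast card_pos H hfin k
    exact mul_nonneg (gr_nonneg hc hcsum (k + 1)) (by positivity)
  constructor
  · intro hβ
    have hc0 : 0 < c 0 := hc 0
    refine Summable.of_nonneg_of_le hγnn (fun k => ?_) (hβ.mul_left (c 0)⁻¹)
    rw [hfact k]
    have hP : c 0 ≤ Pc c (k + 1) := c0_le_Pc hc k
    have h1 : Pc c (k + 1) < 1 := Pc_lt_one hc hcsum (k + 1)
    have h2 : (0 : ℝ) < (Nat.card (H k) : ℝ) := by exact_mod_cast card_pos H hfin k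
    have h3 : 0 < 1 - Pc c (k + 1) := by linarith
    have h4 : (0:ℝ) ≤ (1 - Pc c (k + 1))⁻¹ * ((Nat.card (H k) : ℝ))⁻¹ := by positivity
    have h5 : (c 0)⁻¹ * (((1 - Pc c (k + 1))⁻¹ * Pc c (k + 1)) * ((Nat.card (H k) : ℝ))⁻¹)
        = ((c 0)⁻¹ * Pc c (k + 1)) * ((1 - Pc c (k + 1))⁻¹ * ((Nat.card (H k) : ℝ))⁻¹) := by
      ring
    rw [h5]
    have h6 : (1 : ℝ) ≤ (c 0)⁻¹ * Pc c (k + 1) := by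
      rw [← div_eq_inv_mul, le_div_iff₀ hc0]
      linarith
    nlinarith
  · intro hγ
    refine Summable.of_nonneg_of_le hβnn (fun k => ?_) hγ
    rw [hfact k]
    have h1 : Pc c (k + 1) < 1 := Pc_lt_one hc hcsum (k + 1)
    have h2 : (0 : ℝ) < (Nat.card (H k) : ℝ) := by exact_mod_cast card_pos H hfin k
    have h3 : 0 < 1 - Pc c (k + 1) := by linarith
    have h4 : Pc c (k + 1) ≤ 1 := h1.le
    have h5 : (0:ℝ) ≤ (1 - Pc c (k + 1))⁻¹ * ((Nat.card (H k) : ℝ))⁻¹ := by positivity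
    nlinarith [Pc_nonneg hc (k + 1)]

lemma summable_gamma_iff_target (hc : ∀ k, 0 < c k) (hcsum : ∑' k : ℕ, c k = 1)
    (hlt : ∀ k, H k < H (k + 1))
    (hm : ∀ (k : ℕ) (x : G), m k x = if x ∈ H k then ((Nat.card (H k) : ℝ))⁻¹ else 0)
    (hμ : ∀ x : G, μ x = ∑' k : ℕ, c k * m k x) :
    Summable (fun k : ℕ => ((Nat.card (H k) : ℝ) * (1 - Pc c (k + 1)))⁻¹)
      ↔ Summable (fun n : ℕ =>
          ((Nat.card (H n) : ℝ) * (1 - ∑ x ∈ (hfin n).toFinset, μ x))⁻¹) := by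
  have hNpos : ∀ k : ℕ, (0 : ℝ) < (Nat.card (H k) : ℝ) := by
    intro k; exact_mod_cast card_pos H hfin k
  have hPlt : ∀ k : ℕ, 0 < 1 - Pc c (k + 1) := by
    intro k; have := Pc_lt_one hc hcsum (k + 1); linarith
  have hbnd := one_sub_mu_bounds H hfin hc hcsum hlt hm hμ
  have hDpos : ∀ n : ℕ, 0 < 1 - ∑ x ∈ (hfin n).toFinset, μ x := by
    intro n
    have h1 := (hbnd n).1
    have h2 := hPlt n
    linarith
  have hγnn : ∀ k : ℕ, 0 ≤ ((Nat.card (H k) : ℝ) * (1 - Pc c (k + 1)))⁻¹ := by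
    intro k
    exact inv_nonneg.mpr (mul_pos (hNpos k) (hPlt k)).le
  have htnn : ∀ n : ℕ, 0 ≤ ((Nat.card (H n) : ℝ) * (1 - ∑ x ∈ (hfin n).toFinset, μ x))⁻¹ := by
    intro n
    exact inv_nonneg.mpr (mul_pos (hNpos n) (hDpos n)).le
  constructor
  · intro hγ
    refine Summable.of_nonneg_of_le htnn (fun n => ?_) (hγ.mul_left 2)
    have h1 := (hbnd n).1
    have hx : (0:ℝ) < (Nat.card (H n) : ℝ) * (1 - ∑ x ∈ (hfin n).toFinset, μ x) :=
      mul_pos (hNpos n) (hDpos n)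
    have hy : (0:ℝ) < (Nat.card (H n) : ℝ) * ((1 - Pc c (n + 1)) / 2) :=
      mul_pos (hNpos n) (by linarith [hPlt n])
    have hle : (Nat.card (H n) : ℝ) * ((1 - Pc c (n + 1)) / 2)
        ≤ (Nat.card (H n) : ℝ) * (1 - ∑ x ∈ (hfin n).toFinset, μ x) :=
      mul_le_mul_of_nonneg_left h1 (hNpos n).le
    have hinv := inv_anti₀ hy hle
    calc ((Nat.card (H n) : ℝ) * (1 - ∑ x ∈ (hfin n).toFinset, μ x))⁻¹
        ≤ ((Nat.card (H n) : ℝ) * ((1 - Pc c (n + 1)) / 2))⁻¹ := hinv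
      _ = 2 * ((Nat.card (H n) : ℝ) * (1 - Pc c (n + 1)))⁻¹ := by
          rw [show (Nat.card (H n) : ℝ) * ((1 - Pc c (n + 1)) / 2)
              = ((Nat.card (H n) : ℝ) * (1 - Pc c (n + 1))) / 2 from by ring,
            inv_div, div_eq_mul_inv]
  · intro ht
    refine Summable.of_nonneg_of_le hγnn (fun n => ?_) ht
    have hx : (0:ℝ) < (Nat.card (H n) : ℝ) * (1 - ∑ x ∈ (hfin n).toFinset, μ x) :=
      mul_pos (hNpos n) (hDpos n)
    exact inv_anti₀ hx (mul_le_mul_of_nonneg_left (hbnd n).2 (hNpos n).le)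

end Compare


section Assemble
variable {c : ℕ → ℝ} {m : ℕ → G → ℝ} {μ : G → ℝ}

theorem main (hlt : ∀ k, H k < H (k + 1))
    (hc : ∀ k, 0 < c k) (hcsum : ∑' k : ℕ, c k = 1)
    (hm : ∀ (k : ℕ) (x : G), m k x = if x ∈ H k then ((Nat.card (H k) : ℝ))⁻¹ else 0)
    (hμ : ∀ x : G, μ x = ∑' k : ℕ, c k * m k x) :
    (¬ Summable (fun n : ℕ => gconvPow μ (n + 1) (1 : G))) ↔
      ¬ Summable (fun n : ℕ =>
        ((Nat.card (H n) : ℝ) * (1 - ∑ x ∈ (hfin n).toFinset, μ x))⁻¹) := by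
  have hTne : ∀ n : ℕ, egconvPow (fun z => ENNReal.ofReal (μ z)) (n + 1) (1 : G) ≠ ⊤ :=
    fun n => ((pow_le_one H hfin hc hcsum hm hμ (n + 1) 1).trans_lt ENNReal.one_lt_top).ne
  have hrepr : (fun n : ℕ => gconvPow μ (n + 1) (1 : G))
      = fun n : ℕ => (egconvPow (fun z => ENNReal.ofReal (μ z)) (n + 1) (1 : G)).toReal :=
    funext (fun n => gconvPow_toReal H hfin hc hcsum hm hμ (n + 1) 1)
  have hαnn : ∀ k : ℕ, 0 ≤ ((1 - Pc c (k + 1))⁻¹ * Pc c (k + 1) - (1 - Pc c k)⁻¹ * Pc c k)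
      * ((Nat.card (H k) : ℝ))⁻¹ := by
    intro k
    have h1 := gr_le_succ hc hcsum k
    have h2 : (0 : ℝ) < (Nat.card (H k) : ℝ) := by exact_mod_cast card_pos H hfin k
    exact mul_nonneg (by linarith) (inv_nonneg.mpr h2.le)
  have h1 : Summable (fun n : ℕ => gconvPow μ (n + 1) (1 : G)) ↔
      Summable (fun k : ℕ => ((1 - Pc c (k + 1))⁻¹ * Pc c (k + 1) - (1 - Pc c k)⁻¹ * Pc c k)
        * ((Nat.card (H k) : ℝ))⁻¹) := by
    rw [hrepr]
    constructor
    · intro hs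
      have hAtop : (∑' n : ℕ, egconvPow (fun z => ENNReal.ofReal (μ z)) (n + 1) (1 : G)) ≠ ⊤ := by
        have heq : (∑' n : ℕ, egconvPow (fun z => ENNReal.ofReal (μ z)) (n + 1) (1 : G))
            = ∑' n : ℕ, ENNReal.ofReal
                ((egconvPow (fun z => ENNReal.ofReal (μ z)) (n + 1) (1 : G)).toReal) :=
          tsum_congr (fun n => (ENNReal.ofReal_toReal (hTne n)).symm)
        rw [heq, ← ENNReal.ofReal_tsum_of_nonneg (fun n => ENNReal.toReal_nonneg) hs]
        exact ENNReal.ofReal_ne_top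
      rw [A_eq H hfin hc hcsum hlt hm hμ] at hAtop
      by_contra hns
      exact hAtop ((tsum_ofReal_eq_top_iff hαnn).mpr hns)
    · intro hαs
      refine ENNReal.summable_toReal ?_
      rw [A_eq H hfin hc hcsum hlt hm hμ]
      intro htop
      exact ((tsum_ofReal_eq_top_iff hαnn).mp htop) hαs
  have h2 := (summable_alpha_iff_beta H hfin hc hcsum hlt).trans
    ((summable_beta_iff_gamma H hfin hc hcsum).trans
      (summable_gamma_iff_target H hfin hc hcsum hlt hm hμ))
  exact not_congr (h1.trans h2)

end Assemble

end Main
end P42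

/-- Proposition 4.2 (recurrence criterion): the random walk with law
`μ = ∑_k c_k m_k` is recurrent (i.e. `∑_{n≥1} μ^{*n}(e) = ∞`) if and only if
`∑_n 1/(|G_n| (1 - μ(G_n))) = ∞`. -/
theorem stmt_8 {G : Type*} [Group G]
    (H : ℕ → Subgroup G) (hfin : ∀ k, (H k : Set G).Finite)
    (hlt : ∀ k, H k < H (k + 1)) (hunion : ∀ x : G, ∃ k, x ∈ H k)
    (c : ℕ → ℝ) (hc : ∀ k, 0 < c k) (hcsum : ∑' k : ℕ, c k = 1)
    (m : ℕ → G → ℝ)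
    (hm : ∀ (k : ℕ) (x : G),
      m k x = if x ∈ H k then ((Nat.card (H k) : ℝ))⁻¹ else 0)
    (μ : G → ℝ) (hμ : ∀ x : G, μ x = ∑' k : ℕ, c k * m k x) :
    (¬ Summable (fun n : ℕ => gconvPow μ (n + 1) (1 : G))) ↔
      ¬ Summable (fun n : ℕ =>
        ((Nat.card (H n) : ℝ) * (1 - ∑ x ∈ (hfin n).toFinset, μ x))⁻¹) :=
  P42.main H hfin hlt hc hcsum hm hμ
end

section
/- Let G be an infinite countable locally finite group (G is the union of a strictly increasing sequence of finite subgroups) and let F : [0,∞) → [0,∞) be a continuous nondecreasing function with F(t)/t → 0 and F(t) → ∞ as t → ∞. Then there exists a symmetric strictly positive probability density μ : G → (0,∞) (Σ_x μ(x) = 1 and μ(x⁻¹) = μ(x)) such that −log( μ^{*n}(e) ) / F(n) → 0 as n → ∞. -/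
open Filter
open scoped BigOperators Classical

set_option linter.unusedSectionVars false
set_option maxHeartbeats 1000000

namespace Stmt9

variable {G : Type*} [Group G]

noncomputable def unif (s : Finset G) : G → ℝ := fun x => if x ∈ s then ((s.card : ℝ))⁻¹ else 0

lemma unif_nonneg (s : Finset G) (x : G) : 0 ≤ unif s x := by
  unfold unif; split
  · positivity
  · exact le_rfl

lemma unif_eq_zero {s : Finset G} {x : G} (h : x ∉ s) : unif s x = 0 := if_neg h

lemma unif_pos {s : Finset G} {x : G} (h : x ∈ s) : 0 < unif s x := by
  unfold unif; rw [if_pos h]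
  have : 0 < s.card := Finset.card_pos.2 ⟨x, h⟩
  positivity

lemma sum_unif {s : Finset G} (hs : s.Nonempty) : ∑ x ∈ s, unif s x = 1 := by
  have h : ∀ x ∈ s, unif s x = ((s.card : ℝ))⁻¹ := fun x hx => if_pos hx
  rw [Finset.sum_congr rfl h, Finset.sum_const, nsmul_eq_mul]
  have h0 : (0:ℝ) < (s.card : ℝ) := by exact_mod_cast hs.card_pos
  field_simp

lemma sum_unif_subset {s t : Finset G} (hs : s.Nonempty) (hst : s ⊆ t) :
    ∑ x ∈ t, unif s x = 1 := by
  rw [← Finset.sum_subset hst (fun x _ hx => unif_eq_zero hx), sum_unif hs]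

lemma sum_unif_le (s t : Finset G) : ∑ x ∈ t, unif s x ≤ 1 := by
  rcases s.eq_empty_or_nonempty with h | h
  · subst h
    simp [unif_eq_zero (Finset.notMem_empty _)]
  · calc ∑ x ∈ t, unif s x ≤ ∑ x ∈ t ∪ s, unif s x :=
          Finset.sum_le_sum_of_subset_of_nonneg Finset.subset_union_left
            (fun x _ _ => unif_nonneg s x)
    _ = 1 := sum_unif_subset h Finset.subset_union_right

lemma unif_apply {s : Finset G} {x : G} (h : x ∈ s) : unif s x = ((s.card : ℝ))⁻¹ := if_pos h

lemma unif_le_one {s : Finset G} (x : G) : unif s x ≤ 1 := by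
  unfold unif; split
  · rename_i h
    have h1 : 1 ≤ s.card := Finset.card_pos.2 ⟨_, h⟩
    have h2 : (1:ℝ) ≤ (s.card : ℝ) := by exact_mod_cast h1
    exact inv_le_one_of_one_le₀ h2
  · norm_num

lemma gconv_eq_sum (f g : G → ℝ) {s : Finset G} (hf : ∀ x ∉ s, f x = 0) (x : G) :
    gconv f g x = ∑ y ∈ s, f y * g (y⁻¹ * x) :=
  tsum_eq_sum (fun y hy => by rw [hf y hy, zero_mul])


lemma gconv_unif_left {sA sB : Finset G} {A B : Subgroup G}
    (hA : ∀ x, x ∈ sA ↔ x ∈ A) (hB : ∀ x, x ∈ sB ↔ x ∈ B) (hAB : A ≤ B) :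
    gconv (unif sA) (unif sB) = unif sB := by
  funext x
  rw [gconv_eq_sum _ _ (fun y hy => unif_eq_zero hy) x]
  by_cases hx : x ∈ B
  · have h1 : ∀ y ∈ sA, unif sA y * unif sB (y⁻¹ * x) = (sA.card : ℝ)⁻¹ * (sB.card : ℝ)⁻¹ := by
      intro y hy
      have hyB : y ∈ B := hAB ((hA y).1 hy)
      have hm : y⁻¹ * x ∈ sB := (hB _).2 (B.mul_mem (B.inv_mem hyB) hx)
      rw [unif, unif]
      simp only [if_pos hy, if_pos hm]
    rw [Finset.sum_congr rfl h1, Finset.sum_const, nsmul_eq_mul]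
    have hsA : sA.Nonempty := ⟨1, (hA 1).2 A.one_mem⟩
    have h0 : ((sA.card : ℝ)) ≠ 0 := by exact_mod_cast hsA.card_pos.ne'
    rw [unif, if_pos ((hB x).2 hx)]
    field_simp
  · have h1 : ∀ y ∈ sA, unif sA y * unif sB (y⁻¹ * x) = 0 := by
      intro y hy
      have hyB : y ∈ B := hAB ((hA y).1 hy)
      have hm : y⁻¹ * x ∉ sB := by
        intro hmem
        exact hx (by simpa using B.mul_mem hyB ((hB _).1 hmem))
      rw [unif_eq_zero hm, mul_zero]
    rw [Finset.sum_congr rfl h1, Finset.sum_const_zero,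
      unif_eq_zero (fun h => hx ((hB x).1 h))]

lemma gconv_unif_right {sA sB : Finset G} {A B : Subgroup G}
    (hA : ∀ x, x ∈ sA ↔ x ∈ A) (hB : ∀ x, x ∈ sB ↔ x ∈ B) (hAB : A ≤ B) :
    gconv (unif sB) (unif sA) = unif sB := by
  funext x
  rw [gconv_eq_sum _ _ (fun y hy => unif_eq_zero hy) x]
  have hsubset : sA ⊆ sB := fun z hz => (hB z).2 (hAB ((hA z).1 hz))
  by_cases hx : x ∈ B
  · have e1 : ∀ y ∈ sB, unif sB y * unif sA (y⁻¹ * x) = (sB.card : ℝ)⁻¹ * unif sA (y⁻¹ * x) := by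
      intro y hy
      rw [unif]
      simp only [if_pos hy]
    rw [Finset.sum_congr rfl e1, ← Finset.mul_sum]
    have e2 : ∑ y ∈ sB, unif sA (y⁻¹ * x) = ∑ z ∈ sB, unif sA z := by
      refine Finset.sum_equiv ((Equiv.inv G).trans (Equiv.mulRight x)) ?_ ?_
      · intro y
        simp only [Equiv.trans_apply, Equiv.inv_apply, Equiv.coe_mulRight]
        constructor
        · intro hy
          exact (hB _).2 (B.mul_mem (B.inv_mem ((hB y).1 hy)) hx)
        · intro hy
          have h2 : y⁻¹ * x ∈ B := (hB _).1 hy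
          have h3 : (y⁻¹ * x) * x⁻¹ ∈ B := B.mul_mem h2 (B.inv_mem hx)
          rw [mul_inv_cancel_right] at h3
          exact (hB y).2 (by simpa using B.inv_mem h3)
      · intro y _
        rfl
    rw [e2, sum_unif_subset ⟨1, (hA 1).2 A.one_mem⟩ hsubset, mul_one, unif, if_pos ((hB x).2 hx)]
  · have h1 : ∀ y ∈ sB, unif sB y * unif sA (y⁻¹ * x) = 0 := by
      intro y hy
      have hm : y⁻¹ * x ∉ sA := by
        intro hmem
        exact hx (by simpa using B.mul_mem ((hB y).1 hy) (hAB ((hA _).1 hmem)))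
      rw [unif_eq_zero hm, mul_zero]
    rw [Finset.sum_congr rfl h1, Finset.sum_const_zero,
      unif_eq_zero (fun h => hx ((hB x).1 h))]

lemma gconvPow_nonneg {f : G → ℝ} (hf : ∀ x, 0 ≤ f x) : ∀ n x, 0 ≤ gconvPow f n x := by
  intro n
  induction n with
  | zero => intro x; unfold gconvPow; split <;> norm_num
  | succ n ih =>
    intro x
    exact tsum_nonneg (fun y => mul_nonneg (hf y) (ih _))

lemma gconvPow_le_one {f : G → ℝ} (hf : ∀ x, 0 ≤ f x) (hfs : Summable f)
    (hf1 : ∑' x : G, f x ≤ 1) : ∀ n x, gconvPow f n x ≤ 1 := by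
  intro n
  induction n with
  | zero => intro x; unfold gconvPow; split <;> norm_num
  | succ n ih =>
    intro x
    have hsum : Summable (fun y : G => f y * gconvPow f n (y⁻¹ * x)) :=
      Summable.of_nonneg_of_le (fun y => mul_nonneg (hf y) (gconvPow_nonneg hf n _))
        (fun y => by
          calc f y * gconvPow f n (y⁻¹ * x) ≤ f y * 1 :=
                mul_le_mul_of_nonneg_left (ih _) (hf y)
          _ = f y := mul_one _) hfs
    calc gconvPow f (n+1) x = ∑' y : G, f y * gconvPow f n (y⁻¹ * x) := rfl
    _ ≤ ∑' y : G, f y := Summable.tsum_le_tsum (fun y => by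
          calc f y * gconvPow f n (y⁻¹ * x) ≤ f y * 1 :=
                mul_le_mul_of_nonneg_left (ih _) (hf y)
          _ = f y := mul_one _) hsum hfs
    _ ≤ 1 := hf1

lemma summable_conv_term {f : G → ℝ} (hf : ∀ x, 0 ≤ f x) (hfs : Summable f)
    {P : G → ℝ} (hP0 : ∀ x, 0 ≤ P x) (hP1 : ∀ x, P x ≤ 1) (x : G) :
    Summable (fun y : G => f y * P (y⁻¹ * x)) :=
  Summable.of_nonneg_of_le (fun y => mul_nonneg (hf y) (hP0 _))
    (fun y => by
      calc f y * P (y⁻¹ * x) ≤ f y * 1 := mul_le_mul_of_nonneg_left (hP1 _) (hf y)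
      _ = f y := mul_one _) hfs

lemma gconvPow_mono {f g : G → ℝ} (hg0 : ∀ x, 0 ≤ g x) (hgf : ∀ x, g x ≤ f x)
    {s : Finset G} (hgs : ∀ x ∉ s, g x = 0) (hf0 : ∀ x, 0 ≤ f x) (hfs : Summable f)
    (hf1 : ∑' x : G, f x ≤ 1) : ∀ n x, gconvPow g n x ≤ gconvPow f n x := by
  intro n
  induction n with
  | zero => intro x; exact le_rfl
  | succ n ih =>
    intro x
    refine Summable.tsum_le_tsum (fun y => ?_) ?_ ?_
    · exact mul_le_mul (hgf y) (ih _) (gconvPow_nonneg hg0 n _) (hf0 y)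
    · exact summable_of_ne_finset_zero (fun y hy => by rw [hgs y hy, zero_mul])
    · exact summable_conv_term hf0 hfs (gconvPow_nonneg hf0 n) (gconvPow_le_one hf0 hfs hf1 n) x

lemma gconvPow_one (f : G → ℝ) : gconvPow f 1 = f := by
  funext x
  have h : ∀ y : G, y ≠ x → f y * (if y⁻¹ * x = 1 then (1:ℝ) else 0) = 0 := by
    intro y hy
    rw [if_neg (fun h => hy (by rw [inv_mul_eq_one] at h; exact h)), mul_zero]
  calc gconvPow f 1 x = ∑' y : G, f y * (if y⁻¹ * x = 1 then (1:ℝ) else 0) := rfl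
  _ = f x * (if x⁻¹ * x = 1 then (1:ℝ) else 0) := tsum_eq_single x h
  _ = f x := by rw [if_pos (by group), mul_one]

lemma gconv_finsum_right {ι : Type*} (f : G → ℝ) {s : Finset G} (hf : ∀ x ∉ s, f x = 0)
    (S : Finset ι) (a : ι → ℝ) (g : ι → G → ℝ) (x : G) :
    gconv f (fun z => ∑ i ∈ S, a i * g i z) x = ∑ i ∈ S, a i * gconv f (g i) x := by
  calc gconv f (fun z => ∑ i ∈ S, a i * g i z) x
      = ∑' y : G, ∑ i ∈ S, a i * (f y * g i (y⁻¹ * x)) := by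
        unfold gconv
        congr 1
        funext y
        rw [Finset.mul_sum]
        exact Finset.sum_congr rfl (fun i _ => by ring)
  _ = ∑ i ∈ S, ∑' y : G, a i * (f y * g i (y⁻¹ * x)) :=
        Summable.tsum_finsetSum (fun i _ => summable_of_ne_finset_zero
          (fun y hy => by rw [hf y hy, zero_mul, mul_zero]))
  _ = ∑ i ∈ S, a i * gconv f (g i) x := Finset.sum_congr rfl (fun i _ => tsum_mul_left)

lemma gconv_finsum_left {ι : Type*} (S : Finset ι) (a : ι → ℝ) (g : ι → G → ℝ)
    (sf : ι → Finset G) (hg : ∀ i x, x ∉ sf i → g i x = 0) (h : G → ℝ) (x : G) :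
    gconv (fun z => ∑ i ∈ S, a i * g i z) h x = ∑ i ∈ S, a i * gconv (g i) h x := by
  calc gconv (fun z => ∑ i ∈ S, a i * g i z) h x
      = ∑' y : G, ∑ i ∈ S, a i * (g i y * h (y⁻¹ * x)) := by
        unfold gconv
        congr 1
        funext y
        rw [Finset.sum_mul]
        exact Finset.sum_congr rfl (fun i _ => by ring)
  _ = ∑ i ∈ S, ∑' y : G, a i * (g i y * h (y⁻¹ * x)) :=
        Summable.tsum_finsetSum (fun i _ => summable_of_ne_finset_zero (s := sf i)
          (fun y hy => by rw [hg i y hy, zero_mul, mul_zero]))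
  _ = ∑ i ∈ S, a i * gconv (g i) h x := Finset.sum_congr rfl (fun i _ => tsum_mul_left)

lemma neg_log_one_sub_le {t : ℝ} (ht0 : 0 < t) (ht : t ≤ 1/2) :
    -Real.log (1 - t) ≤ 2 * t := by
  have h1 : (1:ℝ) + 2*t ≤ Real.exp (2*t) := by
    have := Real.add_one_le_exp (2*t)
    linarith
  have h2 : Real.exp (-(2*t)) ≤ (1 + 2*t)⁻¹ := by
    rw [Real.exp_neg]
    exact inv_anti₀ (by linarith) h1
  have h3 : (1 + 2*t)⁻¹ ≤ 1 - t := by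
    rw [inv_le_iff_one_le_mul₀ (by linarith)]
    nlinarith
  have h4 : Real.exp (-(2*t)) ≤ 1 - t := h2.trans h3
  have h5 : Real.log (Real.exp (-(2*t))) ≤ Real.log (1 - t) :=
    Real.log_le_log (Real.exp_pos _) h4
  rw [Real.log_exp] at h5
  linarith

lemma rep_lemma {u : ℕ → G → ℝ} {Hs : ℕ → Finset G}
    (hsupp : ∀ j, ∀ x ∉ Hs j, u j x = 0)
    (hmonoHs : ∀ i j, i ≤ j → Hs i ⊆ Hs j)
    (hconv : ∀ i j, gconv (u i) (u j) = u (max i j))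
    (c : ℕ → ℝ) (hc : ∀ j, 0 ≤ c j) (k : ℕ) :
    ∀ m : ℕ, ∃ a : ℕ → ℝ, (∀ j, 0 ≤ a j) ∧
      (∑ j ∈ Finset.range (k+1), a j = (∑ j ∈ Finset.range (k+1), c j)^(m+1)) ∧
      (∀ x, gconvPow (fun z => ∑ j ∈ Finset.range (k+1), c j * u j z) (m+1) x
          = ∑ j ∈ Finset.range (k+1), a j * u j x) := by
  set R := Finset.range (k+1) with hR
  set w : G → ℝ := fun z => ∑ j ∈ R, c j * u j z with hw
  have hwsupp : ∀ x ∉ Hs k, w x = 0 := by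
    intro x hx
    refine Finset.sum_eq_zero (fun j hj => ?_)
    have hjk : j ≤ k := Nat.lt_succ_iff.1 (Finset.mem_range.1 hj)
    rw [hsupp j x (fun h => hx (hmonoHs j k hjk h)), mul_zero]
  intro m
  induction m with
  | zero =>
    refine ⟨c, hc, by rw [pow_one], fun x => ?_⟩
    rw [gconvPow_one]
  | succ m ih =>
    obtain ⟨a, ha0, hasum, harep⟩ := ih
    set a' : ℕ → ℝ := fun l =>
      ∑ p ∈ (R ×ˢ R).filter (fun p => max p.1 p.2 = l), a p.2 * c p.1 with ha'
    have hmaps : ∀ p ∈ R ×ˢ R, max p.1 p.2 ∈ R := by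
      intro p hp
      rw [Finset.mem_product] at hp
      rw [hR, Finset.mem_range]
      exact max_lt (Finset.mem_range.1 (hR ▸ hp.1)) (Finset.mem_range.1 (hR ▸ hp.2))
    refine ⟨a', fun l => Finset.sum_nonneg (fun p _ => mul_nonneg (ha0 _) (hc _)), ?_, ?_⟩
    · calc ∑ l ∈ R, a' l = ∑ p ∈ R ×ˢ R, a p.2 * c p.1 :=
            Finset.sum_fiberwise_of_maps_to hmaps _
      _ = ∑ i ∈ R, ∑ j ∈ R, a j * c i := Finset.sum_product R R (fun p => a p.2 * c p.1)
      _ = ∑ j ∈ R, ∑ i ∈ R, a j * c i := Finset.sum_comm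
      _ = (∑ j ∈ R, a j) * (∑ i ∈ R, c i) := by rw [Finset.sum_mul_sum]
      _ = (∑ j ∈ R, c j)^(m+1+1) := by rw [hasum]; ring
    · intro x
      have step1 : gconvPow w (m+1+1) x = gconv w (fun z => ∑ j ∈ R, a j * u j z) x := by
        show gconv w (gconvPow w (m+1)) x = _
        congr 1
        funext z
        exact harep z
      have step2 : gconv w (fun z => ∑ j ∈ R, a j * u j z) x
          = ∑ j ∈ R, a j * gconv w (u j) x :=
        gconv_finsum_right w hwsupp R a u x
      have step3 : ∀ j, gconv w (u j) x = ∑ i ∈ R, c i * u (max i j) x := by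
        intro j
        calc gconv w (u j) x = ∑ i ∈ R, c i * gconv (u i) (u j) x :=
              gconv_finsum_left R c u Hs (fun i x hx => hsupp i x hx) (u j) x
        _ = ∑ i ∈ R, c i * u (max i j) x :=
              Finset.sum_congr rfl (fun i _ => by rw [hconv i j])
      calc gconvPow w (m+1+1) x = ∑ j ∈ R, a j * ∑ i ∈ R, c i * u (max i j) x := by
            rw [step1, step2]
            exact Finset.sum_congr rfl (fun j _ => by rw [step3 j])
      _ = ∑ j ∈ R, ∑ i ∈ R, a j * c i * u (max i j) x := by
            refine Finset.sum_congr rfl (fun j _ => ?_)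
            rw [Finset.mul_sum]
            exact Finset.sum_congr rfl (fun i _ => by ring)
      _ = ∑ i ∈ R, ∑ j ∈ R, a j * c i * u (max i j) x := Finset.sum_comm
      _ = ∑ p ∈ R ×ˢ R, a p.2 * c p.1 * u (max p.1 p.2) x := (Finset.sum_product R R (fun p => a p.2 * c p.1 * u (max p.1 p.2) x)).symm
      _ = ∑ l ∈ R, ∑ p ∈ (R ×ˢ R).filter (fun p => max p.1 p.2 = l),
            a p.2 * c p.1 * u (max p.1 p.2) x := (Finset.sum_fiberwise_of_maps_to hmaps _).symm
      _ = ∑ l ∈ R, a' l * u l x := by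
            refine Finset.sum_congr rfl (fun l hl => ?_)
            rw [ha', Finset.sum_mul]
            refine Finset.sum_congr rfl (fun p hp => ?_)
            rw [(Finset.mem_filter.1 hp).2]

end Stmt9

/-- Proposition 4.3: on an infinite countable locally finite group, for any
continuous nondecreasing `F : [0,∞) → [0,∞)` with `F(t) = o(t)` and
`F(t) → ∞`, there is a symmetric strictly positive probability density `μ`
with `-log(μ^{*n}(e))/F(n) → 0`. -/
theorem stmt_9 {G : Type*} [Group G] [Countable G]
    (H : ℕ → Subgroup G) (hfin : ∀ k, (H k : Set G).Finite)
    (hlt : ∀ k, H k < H (k + 1)) (hunion : ∀ x : G, ∃ k, x ∈ H k)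
    (F : ℝ → ℝ) (hF0 : ∀ t ≥ (0 : ℝ), 0 ≤ F t)
    (hFcont : ContinuousOn F (Set.Ici 0))
    (hFmono : MonotoneOn F (Set.Ici 0))
    (hFsub : Tendsto (fun t => F t / t) atTop (nhds 0))
    (hFinf : Tendsto F atTop atTop) :
    ∃ μ : G → ℝ, (∀ x : G, 0 < μ x) ∧ (∑' x : G, μ x = 1) ∧
      (∀ x : G, μ x⁻¹ = μ x) ∧
      Tendsto (fun n : ℕ => -Real.log (gconvPow μ n (1 : G)) / F n)
        atTop (nhds 0) := by
  classical
  have hmono : Monotone H := monotone_nat_of_le_succ (fun k => (hlt k).le)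
  set Hs : ℕ → Finset G := fun k => (hfin k).toFinset with hHs
  have hmem : ∀ k (x : G), x ∈ Hs k ↔ x ∈ H k := fun k x => Set.Finite.mem_toFinset _
  have hHsmono : ∀ i j, i ≤ j → Hs i ⊆ Hs j :=
    fun i j hij x hx => (hmem j x).2 (hmono hij ((hmem i x).1 hx))
  set u : ℕ → G → ℝ := fun k => Stmt9.unif (Hs k) with hu
  have husupp : ∀ j (x : G), x ∉ Hs j → u j x = 0 := fun j x hx => Stmt9.unif_eq_zero hx
  have hunonneg : ∀ j (x : G), 0 ≤ u j x := fun j x => Stmt9.unif_nonneg _ _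
  have huleone : ∀ j (x : G), u j x ≤ 1 := fun j x => Stmt9.unif_le_one _
  have hone : ∀ k, (1:G) ∈ Hs k := fun k => (hmem k 1).2 (H k).one_mem
  have hNs : ∀ k, (Hs k).Nonempty := fun k => ⟨1, hone k⟩
  have hconvu : ∀ i j, gconv (u i) (u j) = u (max i j) := by
    intro i j
    rcases le_total i j with h | h
    · rw [max_eq_right h]
      exact Stmt9.gconv_unif_left (hmem i) (hmem j) (hmono h)
    · rw [max_eq_left h]
      exact Stmt9.gconv_unif_right (hmem j) (hmem i) (hmono h)
  set N : ℕ → ℝ := fun k => ((Hs k).card : ℝ) with hNdef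
  have hN1 : ∀ k, (1:ℝ) ≤ N k := by
    intro k
    have h : 1 ≤ (Hs k).card := Finset.card_pos.2 (hNs k)
    show (1:ℝ) ≤ ((Hs k).card : ℝ)
    exact_mod_cast h
  have hNmono : ∀ i j, i ≤ j → N i ≤ N j := by
    intro i j hij
    have h := Finset.card_le_card (hHsmono i j hij)
    show ((Hs i).card : ℝ) ≤ ((Hs j).card : ℝ)
    exact_mod_cast h
  set M : ℕ → ℝ := fun k => Real.log (N k) with hMdef
  have hM0 : ∀ k, 0 ≤ M k := fun k => Real.log_nonneg (hN1 k)
  -- thresholds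
  have hth : ∀ k : ℕ, ∃ T : ℕ, ∀ x : ℕ, T ≤ x → ((k:ℝ)+1) * (M k + 1) ≤ F x := by
    intro k
    have h1 := hFinf.eventually_ge_atTop (((k:ℝ)+1) * (M k + 1))
    have h2 := (tendsto_natCast_atTop_atTop (R := ℝ)).eventually h1
    exact eventually_atTop.1 h2
  choose T hT using hth
  -- the sequence n
  obtain ⟨q, hq1, hqsucc, hqT⟩ : ∃ q : ℕ → ℕ, 1 ≤ q 0 ∧ (∀ k, q k < q (k+1)) ∧ (∀ k, T k ≤ q k) := by
    refine ⟨fun k => Nat.rec (max 1 (T 0)) (fun k nk => max (nk+1) (T (k+1))) k,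
      le_max_left _ _, fun k => lt_of_lt_of_le (Nat.lt_succ_self _) (le_max_left _ _), fun k => ?_⟩
    cases k with
    | zero => exact le_max_right _ _
    | succ k => exact le_max_right _ _
  have hqmono : StrictMono q := strictMono_nat_of_lt_succ hqsucc
  have hq1' : ∀ k, 1 ≤ q k := fun k => le_trans (hq1) (hqmono.monotone (Nat.zero_le k))
  have hFq : ∀ k : ℕ, ((k:ℝ)+1) * (M k + 1) ≤ F (q k) := fun k => hT k (q k) (hqT k)
  have hFqpos : ∀ k : ℕ, (1:ℝ) ≤ F (q k) := by
    intro k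
    refine le_trans ?_ (hFq k)
    have h1 : (1:ℝ) ≤ (k:ℝ)+1 := by
      have := Nat.cast_nonneg (α := ℝ) k
      linarith
    have h2 : (1:ℝ) ≤ M k + 1 := by linarith [hM0 k]
    nlinarith
  -- the sequence t
  set D : ℕ → ℝ := fun k => F (q k) / (2*((k:ℝ)+1)*(q (k+1))) with hDdef
  have hDpos : ∀ k, 0 < D k := by
    intro k
    apply div_pos (lt_of_lt_of_le one_pos (hFqpos k))
    have : (0:ℝ) < (q (k+1) : ℝ) := by exact_mod_cast lt_of_lt_of_le one_pos (hq1' (k+1))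
    positivity
  obtain ⟨t, htpos, ht0, htdec, htD⟩ : ∃ t : ℕ → ℝ, (∀ k, 0 < t k) ∧ t 0 ≤ 1/4 ∧
      (∀ k, t (k+1) ≤ t k / 2) ∧ (∀ k, t k ≤ D k) := by
    refine ⟨fun k => Nat.rec (min (1/4) (D 0)) (fun k tk => min (tk/2) (D (k+1))) k,
      ?_, min_le_left _ _, fun k => min_le_left _ _, fun k => ?_⟩
    · intro k
      induction k with
      | zero => exact lt_min (by norm_num) (hDpos 0)
      | succ k ih => exact lt_min (by linarith) (hDpos (k+1))
    · cases k with
      | zero => exact min_le_right _ _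
      | succ k => exact min_le_right _ _
  have htquarter : ∀ k, t k ≤ 1/4 := by
    intro k
    induction k with
    | zero => exact ht0
    | succ k ih => linarith [htdec k, (htpos k).le]
  have htgeo : ∀ k, t k ≤ (1/2)^k := by
    intro k
    induction k with
    | zero => simpa using le_trans ht0 (by norm_num)
    | succ k ih =>
      calc t (k+1) ≤ t k / 2 := htdec k
      _ ≤ (1/2)^k / 2 := by linarith
      _ = (1/2)^(k+1) := by rw [pow_succ]; ring
  have httend : Tendsto t atTop (nhds 0) :=
    squeeze_zero (fun k => (htpos k).le) htgeo
      (tendsto_pow_atTop_nhds_zero_of_lt_one (by norm_num) (by norm_num))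
  -- the coefficients c
  obtain ⟨c, hcpos, hcsum⟩ : ∃ c : ℕ → ℝ, (∀ k, 0 < c k) ∧
      (∀ k, ∑ j ∈ Finset.range (k+1), c j = 1 - t k) := by
    refine ⟨fun k => Nat.rec (1 - t 0) (fun j _ => t j - t (j+1)) k, fun k => ?_, fun k => ?_⟩
    · cases k with
      | zero =>
        have := ht0
        show (0:ℝ) < 1 - t 0
        linarith
      | succ j =>
        have h1 := htdec j
        have h2 := htpos j
        show (0:ℝ) < t j - t (j+1)
        linarith
    · induction k with
      | zero => simp
      | succ k ih =>
        rw [Finset.sum_range_succ, ih]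
        show 1 - t k + (t k - t (k+1)) = 1 - t (k+1)
        ring
  have hcnonneg : ∀ k, 0 ≤ c k := fun k => (hcpos k).le
  -- summability of c
  have hcsble : Summable c := by
    apply summable_of_sum_le hcnonneg
    intro s
    obtain ⟨K, hK⟩ := Finset.exists_nat_subset_range s
    calc ∑ j ∈ s, c j ≤ ∑ j ∈ Finset.range (K+1), c j :=
          Finset.sum_le_sum_of_subset_of_nonneg
            (hK.trans (Finset.range_subset_range.2 (Nat.le_succ K))) (fun j _ _ => hcnonneg j)
    _ = 1 - t K := hcsum K
    _ ≤ 1 := by linarith [htpos K]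
  have hctsum_le : ∑' k, c k ≤ 1 := by
    apply Summable.tsum_le_of_sum_le hcsble
    intro s
    obtain ⟨K, hK⟩ := Finset.exists_nat_subset_range s
    calc ∑ j ∈ s, c j ≤ ∑ j ∈ Finset.range (K+1), c j :=
          Finset.sum_le_sum_of_subset_of_nonneg
            (hK.trans (Finset.range_subset_range.2 (Nat.le_succ K))) (fun j _ _ => hcnonneg j)
    _ = 1 - t K := hcsum K
    _ ≤ 1 := by linarith [htpos K]
  -- the measure
  set μ : G → ℝ := fun x => ∑' k, c k * u k x with hμdef
  have hterm_nonneg : ∀ (x : G) (k : ℕ), 0 ≤ c k * u k x :=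
    fun x k => mul_nonneg (hcnonneg k) (hunonneg k x)
  have hsummk : ∀ x : G, Summable (fun k => c k * u k x) := by
    intro x
    refine Summable.of_nonneg_of_le (hterm_nonneg x) (fun k => ?_) hcsble
    calc c k * u k x ≤ c k * 1 := mul_le_mul_of_nonneg_left (huleone k x) (hcnonneg k)
    _ = c k := mul_one _
  have hμnonneg : ∀ x : G, 0 ≤ μ x := fun x => tsum_nonneg (hterm_nonneg x)
  have hμpos : ∀ x : G, 0 < μ x := by
    intro x
    obtain ⟨k, hk⟩ := hunion x
    exact Summable.tsum_pos (hsummk x) (hterm_nonneg x) k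
      (mul_pos (hcpos k) (Stmt9.unif_pos ((hmem k x).2 hk)))
  have hμw : ∀ (K : ℕ) (x : G), (∑ j ∈ Finset.range (K+1), c j * u j x) ≤ μ x :=
    fun K x => Summable.sum_le_tsum _ (fun j _ => hterm_nonneg x j) (hsummk x)
  -- partial sums of μ are ≤ 1
  have hsum_le : ∀ s : Finset G, ∑ x ∈ s, μ x ≤ 1 := by
    intro s
    have hswap : ∑ x ∈ s, μ x = ∑' k, ∑ x ∈ s, c k * u k x :=
      (Summable.tsum_finsetSum (fun x _ => hsummk x)).symm
    rw [hswap]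
    have hs1 : ∀ k, ∑ x ∈ s, c k * u k x ≤ c k := by
      intro k
      rw [← Finset.mul_sum]
      calc c k * ∑ x ∈ s, u k x ≤ c k * 1 :=
            mul_le_mul_of_nonneg_left (Stmt9.sum_unif_le _ _) (hcnonneg k)
      _ = c k := mul_one _
    calc ∑' k, ∑ x ∈ s, c k * u k x ≤ ∑' k, c k :=
          Summable.tsum_le_tsum hs1
            (Summable.of_nonneg_of_le
              (fun k => Finset.sum_nonneg (fun x _ => hterm_nonneg x k)) hs1 hcsble)
            hcsble
    _ ≤ 1 := hctsum_le
  have hμsble : Summable μ := summable_of_sum_le hμnonneg hsum_le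
  have hμtsum_le : ∑' x : G, μ x ≤ 1 := Summable.tsum_le_of_sum_le hμsble hsum_le
  have hμtsum : ∑' x : G, μ x = 1 := by
    refine le_antisymm hμtsum_le ?_
    have hlower : ∀ K, 1 - t K ≤ ∑' x : G, μ x := by
      intro K
      have h1 : 1 - t K = ∑ x ∈ Hs K, ∑ j ∈ Finset.range (K+1), (c j * u j x) := by
        rw [Finset.sum_comm]
        rw [← hcsum K]
        refine Finset.sum_congr rfl (fun j hj => ?_)
        rw [← Finset.mul_sum]
        rw [Stmt9.sum_unif_subset (hNs j)
          (hHsmono j K (Nat.lt_succ_iff.1 (Finset.mem_range.1 hj))), mul_one]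
      rw [h1]
      calc ∑ x ∈ Hs K, ∑ j ∈ Finset.range (K+1), (c j * u j x)
          ≤ ∑ x ∈ Hs K, μ x := Finset.sum_le_sum (fun x _ => hμw K x)
      _ ≤ ∑' x : G, μ x := Summable.sum_le_tsum _ (fun x _ => hμnonneg x) hμsble
    have htend1 : Tendsto (fun K => 1 - t K) atTop (nhds 1) := by
      have h2 := (tendsto_const_nhds : Tendsto (fun _ : ℕ => (1:ℝ)) atTop (nhds 1)).sub httend
      simpa using h2
    exact le_of_tendsto' htend1 hlower
  -- symmetry
  have hμsymm : ∀ x : G, μ x⁻¹ = μ x := by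
    intro x
    refine tsum_congr (fun k => ?_)
    have h : u k x⁻¹ = u k x := by
      have hiff : x⁻¹ ∈ Hs k ↔ x ∈ Hs k := by
        rw [hmem, hmem]
        exact inv_mem_iff
      show Stmt9.unif (Hs k) x⁻¹ = Stmt9.unif (Hs k) x
      by_cases hx : x ∈ Hs k
      · rw [Stmt9.unif_apply (hiff.2 hx), Stmt9.unif_apply hx]
      · rw [Stmt9.unif_eq_zero (fun hh => hx (hiff.1 hh)), Stmt9.unif_eq_zero hx]
    rw [h]
  -- lower bound for return probabilities
  have hkey : ∀ (k m : ℕ), (1 - t k)^(m+1) / N k ≤ gconvPow μ (m+1) (1:G) := by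
    intro k m
    obtain ⟨a, ha0, hasum, harep⟩ :=
      Stmt9.rep_lemma husupp hHsmono hconvu c hcnonneg k m
    set w : G → ℝ := fun z => ∑ j ∈ Finset.range (k+1), c j * u j z with hwdef
    have hwnonneg : ∀ z, 0 ≤ w z := fun z => Finset.sum_nonneg (fun j _ => hterm_nonneg z j)
    have hwle : ∀ z, w z ≤ μ z := fun z => hμw k z
    have hwsupp : ∀ z ∉ Hs k, w z = 0 := by
      intro z hz
      refine Finset.sum_eq_zero (fun j hj => ?_)
      rw [husupp j z (fun h => hz (hHsmono j k (Nat.lt_succ_iff.1 (Finset.mem_range.1 hj)) h)),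
        mul_zero]
    have hmono_pow : gconvPow w (m+1) (1:G) ≤ gconvPow μ (m+1) (1:G) :=
      Stmt9.gconvPow_mono hwnonneg hwle hwsupp hμnonneg hμsble hμtsum_le (m+1) 1
    have h2 : (1 - t k)^(m+1) / N k ≤ gconvPow w (m+1) (1:G) := by
      rw [harep 1]
      have h3 : ∀ j ∈ Finset.range (k+1), a j * (N k)⁻¹ ≤ a j * u j 1 := by
        intro j hj
        have hjk : j ≤ k := Nat.lt_succ_iff.1 (Finset.mem_range.1 hj)
        have hu1 : u j 1 = (N j)⁻¹ := Stmt9.unif_apply (hone j)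
        have hNj : (0:ℝ) < N j := lt_of_lt_of_le one_pos (hN1 j)
        have hinv : (N k)⁻¹ ≤ (N j)⁻¹ := inv_anti₀ hNj (hNmono j k hjk)
        rw [hu1]
        exact mul_le_mul_of_nonneg_left hinv (ha0 j)
      calc (1 - t k)^(m+1) / N k = ∑ j ∈ Finset.range (k+1), a j * (N k)⁻¹ := by
            rw [← Finset.sum_mul, hasum, hcsum k, div_eq_mul_inv]
      _ ≤ ∑ j ∈ Finset.range (k+1), a j * u j 1 := Finset.sum_le_sum h3
    exact h2.trans hmono_pow
  have hμle1 : ∀ n x, gconvPow μ n x ≤ 1 := Stmt9.gconvPow_le_one hμnonneg hμsble hμtsum_le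
  have hμpownn : ∀ n x, 0 ≤ gconvPow μ n x := Stmt9.gconvPow_nonneg hμnonneg
  -- the main ratio bound
  have hratio : ∀ (k nn : ℕ), q k ≤ nn → nn < q (k+1) →
      -Real.log (gconvPow μ nn (1:G)) / F nn ≤ 2 / ((k:ℝ)+1) := by
    intro k nn hlo hhi
    have h1nn : 1 ≤ nn := le_trans (hq1' k) hlo
    obtain ⟨m, hm⟩ : ∃ m, nn = m + 1 := ⟨nn - 1, by omega⟩
    have hPle : gconvPow μ nn (1:G) ≤ 1 := hμle1 nn 1
    have hL : (1 - t k)^nn / N k ≤ gconvPow μ nn (1:G) := by rw [hm]; exact hkey k m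
    have htk : 0 < t k := htpos k
    have htk4 : t k ≤ 1/4 := htquarter k
    have hs0 : (0:ℝ) < 1 - t k := by linarith
    have hNk : (0:ℝ) < N k := lt_of_lt_of_le one_pos (hN1 k)
    have hLpos : 0 < (1 - t k)^nn / N k := div_pos (pow_pos hs0 nn) hNk
    have hPpos : 0 < gconvPow μ nn (1:G) := lt_of_lt_of_le hLpos hL
    have hk1 : (0:ℝ) < (k:ℝ)+1 := by positivity
    have hlog1 : -Real.log (gconvPow μ nn (1:G)) ≤ -Real.log ((1 - t k)^nn / N k) := by
      have := Real.log_le_log hLpos hL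
      linarith
    have hlog3 : -Real.log ((1 - t k)^nn / N k) = (nn:ℝ) * (-Real.log (1 - t k)) + M k := by
      rw [Real.log_div (pow_ne_zero _ hs0.ne') hNk.ne', Real.log_pow]
      show -((nn:ℝ) * Real.log (1 - t k) - Real.log (N k)) = _
      ring
    have hnl : -Real.log (1 - t k) ≤ 2 * t k := Stmt9.neg_log_one_sub_le htk (by linarith)
    have hq2pos : (0:ℝ) < (q (k+1) : ℝ) := by exact_mod_cast lt_of_lt_of_le one_pos (hq1' (k+1))
    have hnnle : (nn:ℝ) ≤ (q (k+1) : ℝ) := by exact_mod_cast hhi.le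
    have hbound1 : (nn:ℝ) * (-Real.log (1 - t k)) ≤ F (q k) / ((k:ℝ)+1) := by
      have hnlnn : 0 ≤ -Real.log (1 - t k) := by
        have : Real.log (1 - t k) ≤ 0 := Real.log_nonpos hs0.le (by linarith)
        linarith
      have h4 : (nn:ℝ) * (-Real.log (1 - t k)) ≤ (q (k+1):ℝ) * (2 * t k) := by
        calc (nn:ℝ) * (-Real.log (1 - t k)) ≤ (q (k+1):ℝ) * (-Real.log (1 - t k)) :=
              mul_le_mul_of_nonneg_right hnnle hnlnn
        _ ≤ (q (k+1):ℝ) * (2 * t k) := mul_le_mul_of_nonneg_left hnl hq2pos.le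
      have h5 : (q (k+1):ℝ) * (2 * t k) ≤ (q (k+1):ℝ) * (2 * D k) := by
        have := htD k
        nlinarith
      have h6 : (q (k+1):ℝ) * (2 * D k) = F (q k) / ((k:ℝ)+1) := by
        show (q (k+1):ℝ) * (2 * (F (q k) / (2*((k:ℝ)+1)*(q (k+1))))) = F (q k) / ((k:ℝ)+1)
        field_simp
      linarith
    have hMk : M k ≤ F (q k) / ((k:ℝ)+1) := by
      have h7 := hFq k
      rw [le_div_iff₀ hk1]
      nlinarith [hM0 k]
    have hFmn : F (q k) ≤ F nn := by
      refine hFmono ?_ ?_ ?_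
      · exact Set.mem_Ici.2 (by positivity)
      · exact Set.mem_Ici.2 (by positivity)
      · exact_mod_cast hlo
    have hFpos : (0:ℝ) < F nn := lt_of_lt_of_le (lt_of_lt_of_le one_pos (hFqpos k)) hFmn
    have htotal : -Real.log (gconvPow μ nn (1:G)) ≤ 2 * F nn / ((k:ℝ)+1) := by
      have h8 : -Real.log (gconvPow μ nn (1:G)) ≤ F (q k)/((k:ℝ)+1) + F (q k)/((k:ℝ)+1) := by
        have := hlog1
        rw [hlog3] at this
        linarith
      have h10 : F (q k) + F (q k) ≤ 2 * F nn := by linarith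
      have h9 : F (q k)/((k:ℝ)+1) + F (q k)/((k:ℝ)+1) ≤ 2 * F nn / ((k:ℝ)+1) := by
        rw [← add_div]
        exact (div_le_div_iff_of_pos_right hk1).2 h10
      linarith
    calc -Real.log (gconvPow μ nn (1:G)) / F nn
        ≤ (2 * F nn / ((k:ℝ)+1)) / F nn := (div_le_div_iff_of_pos_right hFpos).2 htotal
    _ = 2 / ((k:ℝ)+1) := by
        rw [div_div, mul_comm ((k:ℝ)+1) (F nn), ← div_div, mul_div_assoc, div_self hFpos.ne',
          mul_one]
  -- conclusion
  refine ⟨μ, hμpos, hμtsum, hμsymm, ?_⟩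
  rw [Metric.tendsto_atTop]
  intro ε hε
  obtain ⟨K, hK⟩ := exists_nat_gt (2/ε)
  refine ⟨q K, fun nn hnn => ?_⟩
  have hex : ∃ j, nn < q (j+1) :=
    ⟨nn, lt_of_lt_of_le (Nat.lt_succ_self nn) hqmono.le_apply⟩
  obtain ⟨j, hjspec, hjmin⟩ : ∃ j, nn < q (j+1) ∧ ∀ i < j, ¬ (nn < q (i+1)) :=
    ⟨Nat.find hex, Nat.find_spec hex, fun i hi => Nat.find_min hex hi⟩
  have hjlow : q j ≤ nn := by
    cases j with
    | zero => exact le_trans (hqmono.monotone (Nat.zero_le K)) hnn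
    | succ i => exact not_lt.1 (hjmin i (Nat.lt_succ_self i))
  have hKj : K ≤ j := by
    by_contra hc
    push_neg at hc
    exact absurd hjspec (not_lt.2 (le_trans (hqmono.monotone hc) hnn))
  have hr := hratio j nn hjlow hjspec
  have hrnonneg : 0 ≤ -Real.log (gconvPow μ nn (1:G)) / F nn := by
    apply div_nonneg
    · have := Real.log_nonpos (hμpownn nn 1) (hμle1 nn 1)
      linarith
    · exact hF0 nn (by positivity)
  rw [Real.dist_eq, sub_zero, abs_of_nonneg hrnonneg]
  have hfinal : 2 / ((j:ℝ)+1) ≤ 2 / ((K:ℝ)+1) := by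
    apply div_le_div_of_nonneg_left (by norm_num) (by positivity)
    have : (K:ℝ) ≤ (j:ℝ) := by exact_mod_cast hKj
    linarith
  have hKε : 2 / ((K:ℝ)+1) < ε := by
    rw [div_lt_iff₀ (by positivity)]
    have h2 : 2 < (K:ℝ) * ε := by rwa [div_lt_iff₀ hε] at hK
    nlinarith
  exact lt_of_le_of_lt (hr.trans hfinal) hKε
end

section
/- Strong Liouville property: let u : G → ℝ satisfy u(x) ≥ 0 for all x, and suppose that for every x ∈ G the series Σ_{y∈G} μ(y) u(xy) converges with sum u(x) (i.e. u is harmonic for the random walk with law μ). Then u is constant on G. -/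
open scoped BigOperators Classical

/-- Proposition 5.4(2) (strong Liouville property): any nonnegative function
`u` on `G` which is harmonic for the random walk with law `μ = ∑_k c_k m_k`
(i.e. `∑_y μ(y) u(xy)` converges with sum `u(x)` for every `x`) is constant. -/
theorem stmt_12 {G : Type*} [Group G]
    (H : ℕ → Subgroup G) (hfin : ∀ k, (H k : Set G).Finite)
    (hlt : ∀ k, H k < H (k + 1)) (hunion : ∀ x : G, ∃ k, x ∈ H k)
    (c : ℕ → ℝ) (hc : ∀ k, 0 < c k) (hcsum : ∑' k : ℕ, c k = 1)
    (m : ℕ → G → ℝ)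
    (hm : ∀ (k : ℕ) (x : G),
      m k x = if x ∈ H k then ((Nat.card (H k) : ℝ))⁻¹ else 0)
    (μ : G → ℝ) (hμ : ∀ x : G, μ x = ∑' k : ℕ, c k * m k x)
    (u : G → ℝ) (hu0 : ∀ x : G, 0 ≤ u x)
    (hharm : ∀ x : G, HasSum (fun y : G => μ y * u (x * y)) (u x)) :
    ∀ x y : G, u x = u y := by
  classical
  have hSc : Summable c := by
    by_contra h
    rw [tsum_eq_zero_of_not_summable h] at hcsum
    norm_num at hcsum
  have hmonoH : ∀ {j k : ℕ}, j ≤ k → H j ≤ H k := fun {j k} h =>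
    (monotone_nat_of_le_succ fun n => (hlt n).le) h
  set F : ℕ → Finset G := fun k => (hfin k).toFinset with hF
  have hmemF : ∀ k (y : G), y ∈ F k ↔ y ∈ H k := fun k y => (hfin k).mem_toFinset
  have hcard : ∀ k, ((F k).card : ℝ) = ((Nat.card (H k) : ℝ)) := by
    intro k
    have : (F k).card = Nat.card (H k) := by
      rw [← SetLike.coe_sort_coe, Nat.card_coe_set_eq,
        Set.ncard_eq_toFinset_card _ (hfin k)]
    exact_mod_cast congrArg (Nat.cast : ℕ → ℝ) this
  have hNpos : ∀ k, (0:ℝ) < ((Nat.card (H k) : ℝ)) := by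
    intro k
    have : Finite (H k) := (hfin k).to_subtype
    exact_mod_cast Nat.card_pos
  set A : ℕ → G → ℝ := fun k x => ((Nat.card (H k) : ℝ))⁻¹ * ∑ z ∈ F k, u (x * z) with hA
  -- invariance of A under right multiplication by elements of H k
  have hAinv : ∀ (k : ℕ) (x z : G), z ∈ H k → A k (x * z) = A k x := by
    intro k x z hz
    have : ∑ w ∈ F k, u (x * z * w) = ∑ w ∈ F k, u (x * w) := by
      refine Finset.sum_equiv (Equiv.mulLeft z) ?_ ?_
      · intro w
        simp only [hmemF, Equiv.coe_mulLeft]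
        exact (mul_mem_cancel_left hz).symm
      · intro w hw
        simp [Equiv.coe_mulLeft, mul_assoc]
    simp only [hA, this]
  -- the slice sums
  have hslice : ∀ (k : ℕ) (x : G), HasSum (fun y : G => m k y * u (x * y)) (A k x) := by
    intro k x
    have h0 : ∀ y ∉ F k, m k y * u (x * y) = 0 := by
      intro y hy
      rw [hm, if_neg (fun h => hy ((hmemF k y).mpr h)), zero_mul]
    have := hasSum_sum_of_ne_finset_zero (L := SummationFilter.unconditional G) h0
    convert this using 1
    show ((Nat.card (H k) : ℝ))⁻¹ * ∑ z ∈ F k, u (x * z) = ∑ b ∈ F k, m k b * u (x * b)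
    rw [Finset.mul_sum]
    refine Finset.sum_congr rfl ?_
    intro y hy
    rw [hm, if_pos ((hmemF k y).mp hy)]
  have hm_le : ∀ (k : ℕ) (y : G), 0 ≤ m k y ∧ m k y ≤ 1 := by
    intro k y
    rw [hm]
    split
    · constructor
      · positivity
      · apply inv_le_one_of_one_le₀
        have : Finite (H k) := (hfin k).to_subtype
        exact_mod_cast Nat.card_pos
    · norm_num
  -- key lemma: u x = ∑' k, c k * A k x  (as HasSum)
  have hL0 : ∀ x : G, HasSum (fun k : ℕ => c k * A k x) (u x) := by
    intro x
    set g : G × ℕ → ℝ := fun p => c p.2 * (m p.2 p.1 * u (x * p.1)) with hg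
    have hg0 : 0 ≤ g := by
      intro p
      exact mul_nonneg (hc p.2).le (mul_nonneg (hm_le p.2 p.1).1 (hu0 (x * p.1)))
    have hgy : ∀ y : G, Summable fun k : ℕ => g (y, k) := by
      intro y
      refine Summable.of_nonneg_of_le (fun k => hg0 (y, k)) (fun k => ?_) (hSc.mul_right (u (x * y)))
      simp only [hg]
      have h1 := (hm_le k y).2
      have h2 := hu0 (x * y)
      have h3 := (hc k).le
      exact mul_le_mul_of_nonneg_left (mul_le_of_le_one_left h2 h1) h3
    have hgty : ∀ y : G, ∑' k : ℕ, g (y, k) = μ y * u (x * y) := by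
      intro y
      simp only [hg]
      rw [hμ]
      rw [← tsum_mul_right]
      congr 1
      ext k
      ring
    have hgsum2 : Summable fun y : G => ∑' k : ℕ, g (y, k) := by
      have := (hharm x).summable
      convert this using 1
      ext y
      exact hgty y
    have hgS : Summable g := (summable_prod_of_nonneg hg0).mpr ⟨hgy, hgsum2⟩
    have hgt : ∑' p, g p = u x := by
      rw [Summable.tsum_prod' hgS hgy]
      rw [← (hharm x).tsum_eq]
      exact tsum_congr hgty
    -- now swap
    set f : ℕ × G → ℝ := fun p => g (p.2, p.1) with hf
    have hfS : Summable f := hgS.prod_symm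
    have hft : ∑' p, f p = u x := by
      rw [← hgt]
      exact ((Equiv.prodComm ℕ G).tsum_eq g)
    have hfy : ∀ k : ℕ, Summable fun y : G => f (k, y) := by
      intro k
      have := ((hslice k x).mul_left (c k)).summable
      convert this using 1
    have hftk : ∀ k : ℕ, ∑' y : G, f (k, y) = c k * A k x := by
      intro k
      exact ((hslice k x).mul_left (c k)).tsum_eq
    have hsum1 : Summable fun k : ℕ => c k * A k x := by
      have := ((summable_prod_of_nonneg (fun p => hg0 (p.2, p.1))).mp hfS).2
      convert this using 1
      ext k
      exact (hftk k).symm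
    have : ∑' k : ℕ, c k * A k x = u x := by
      rw [← hft, Summable.tsum_prod' hfS hfy]
      exact tsum_congr fun k => (hftk k).symm
    exact this ▸ hsum1.hasSum
  -- partial sums of c are < 1
  have hSlt : ∀ k : ℕ, ∑ i ∈ Finset.range k, c i < 1 := by
    intro k
    have h1 : ∑ i ∈ Finset.range (k + 1), c i ≤ 1 := by
      rw [← hcsum]
      exact Summable.sum_le_tsum _ (fun i _ => (hc i).le) hSc
    rw [Finset.sum_range_succ] at h1
    linarith [hc k]
  -- main induction : u x = A k x for all k, x
  have hmain : ∀ (k : ℕ) (x : G), u x = A k x := by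
    intro k
    induction k using Nat.strong_induction_on with
    | _ k IH =>
      intro x
      set S : ℝ := ∑ i ∈ Finset.range k, c i with hS
      set T : ℝ := ∑' i : ℕ, c (i + k) * A (i + k) x with hT
      -- equation E1 : u x = S * u x + T
      have hE1 : u x = S * u x + T := by
        have hsplit := (Summable.sum_add_tsum_nat_add (f := fun j => c j * A j x) k (hL0 x).summable)
        rw [(hL0 x).tsum_eq] at hsplit
        have : ∑ i ∈ Finset.range k, c i * A i x = S * u x := by
          rw [hS, Finset.sum_mul]
          refine Finset.sum_congr rfl ?_
          intro i hi
          rw [← IH i (Finset.mem_range.mp hi) x]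
        rw [this] at hsplit
        exact hsplit.symm
      -- equation E2 : A k x = S * A k x + T
      have hE2 : A k x = S * A k x + T := by
        have hz : ∀ z ∈ F k, u (x * z) = S * u (x * z) + T := by
          intro z hz
          have hzH : z ∈ H k := (hmemF k z).mp hz
          have hsplit := (Summable.sum_add_tsum_nat_add (f := fun j => c j * A j (x * z)) k (hL0 (x * z)).summable)
          rw [(hL0 (x * z)).tsum_eq] at hsplit
          have e1 : ∑ i ∈ Finset.range k, c i * A i (x * z) = S * u (x * z) := by
            rw [hS, Finset.sum_mul]
            refine Finset.sum_congr rfl ?_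
            intro i hi
            rw [← IH i (Finset.mem_range.mp hi) (x * z)]
          have e2 : ∑' i : ℕ, c (i + k) * A (i + k) (x * z) = T := by
            rw [hT]
            refine tsum_congr ?_
            intro i
            rw [hAinv (i + k) x z (hmonoH (Nat.le_add_left k i) hzH)]
          rw [e1, e2] at hsplit
          exact hsplit.symm
        have hsum : ∑ z ∈ F k, u (x * z)
            = S * ∑ z ∈ F k, u (x * z) + (F k).card * T := by
          have h1 : ∑ z ∈ F k, u (x * z) = ∑ z ∈ F k, (S * u (x * z) + T) :=
            Finset.sum_congr rfl hz
          rw [Finset.sum_add_distrib, ← Finset.mul_sum, Finset.sum_const,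
            nsmul_eq_mul] at h1
          exact h1
        have hNk := hNpos k
        rw [hcard k] at hsum
        show ((Nat.card (H k) : ℝ))⁻¹ * ∑ z ∈ F k, u (x * z)
            = S * (((Nat.card (H k) : ℝ))⁻¹ * ∑ z ∈ F k, u (x * z)) + T
        have hinv : ((Nat.card (H k) : ℝ))⁻¹ * ((Nat.card (H k) : ℝ)) = 1 :=
          inv_mul_cancel₀ (ne_of_gt hNk)
        linear_combination ((Nat.card (H k) : ℝ))⁻¹ * hsum + T * hinv
      -- conclude
      have hS1 : S < 1 := hSlt k
      nlinarith [hE1, hE2]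
  -- finish
  intro x y
  obtain ⟨k, hk⟩ := hunion (x⁻¹ * y)
  have : A k (x * (x⁻¹ * y)) = A k x := hAinv k x _ hk
  rw [mul_inv_cancel_left] at this
  rw [hmain k x, hmain k y, this]
end

section
/- For every nonempty finite subset U ⊆ G, λ₁(U) ≥ T(|U|); that is, for every f : G → ℝ supported in U, ((I−P)f, f)_{ℓ²} ≥ T(|U|) · ‖f‖²_{ℓ²}. Consequently, the isospectral profile satisfies Λ(v) ≥ T(v) for every v ≥ 1. -/
open scoped BigOperators Classical

/-- The bottom of the Dirichlet spectrum of `I - P` on a finite set `U`: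
`λ₁(U) = inf { ((I-P)f, f)/‖f‖² : f ≠ 0, supp f ⊆ U }`. -/
noncomputable def lamOne {G : Type*} [Group G]
    (P : (G → ℝ) → G → ℝ) (U : Finset G) : ℝ :=
  sInf {r : ℝ | ∃ f : G → ℝ, (∀ x ∉ U, f x = 0) ∧ f ≠ 0 ∧
    r = (∑' x : G, (f x - P f x) * f x) / ∑' x : G, (f x) ^ 2}

/-- The `L²`-isospectral profile `Λ(v) = inf { λ₁(U) : U finite nonempty, |U| ≤ v }`. -/
noncomputable def isoProfile {G : Type*} [Group G]
    (P : (G → ℝ) → G → ℝ) (v : ℝ) : ℝ :=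
  sInf {r : ℝ | ∃ U : Finset G, U.Nonempty ∧ ((U.card : ℝ)) ≤ v ∧ r = lamOne P U}

private lemma aux_main {G : Type*} [Group G]
    (H : ℕ → Subgroup G) (hfin : ∀ k, (H k : Set G).Finite)
    (c : ℕ → ℝ) (hc : ∀ k, 0 < c k) (hcsum : ∑' k : ℕ, c k = 1)
    (m : ℕ → G → ℝ)
    (hm : ∀ (k : ℕ) (x : G),
      m k x = if x ∈ H k then ((Nat.card (H k) : ℝ))⁻¹ else 0)
    (μ : G → ℝ) (hμ : ∀ x : G, μ x = ∑' k : ℕ, c k * m k x)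
    (P : (G → ℝ) → G → ℝ)
    (hP : ∀ (g : G → ℝ) (x : G), P g x = ∑' y : G, g y * μ (y⁻¹ * x))
    (T : ℝ → ℝ)
    (hT : ∀ u : ℝ, T u = 1 - ∑' k : ℕ, c k * min 1 (u / (Nat.card (H k) : ℝ)))
    (U : Finset G) (f : G → ℝ) (hf : ∀ x ∉ U, f x = 0) :
    (∑' x : G, (f x) ^ 2 = ∑ x ∈ U, (f x) ^ 2) ∧
    T (U.card : ℝ) * ∑ x ∈ U, (f x) ^ 2 ≤ ∑' x : G, (f x - P f x) * f x := by
  have hsc : Summable c := by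
    by_contra h
    rw [tsum_eq_zero_of_not_summable h] at hcsum
    norm_num at hcsum
  have hN : ∀ k, (0 : ℝ) < (Nat.card (H k) : ℝ) := by
    intro k
    haveI : Finite (H k) := (hfin k).to_subtype
    exact_mod_cast Nat.card_pos
  have hNinv : ∀ k, ((Nat.card (H k) : ℝ))⁻¹ ≤ 1 := by
    intro k
    apply inv_le_one_of_one_le₀
    exact_mod_cast Nat.one_le_iff_ne_zero.2 (by exact_mod_cast (hN k).ne')
  have hm_nonneg : ∀ k x, 0 ≤ m k x := by
    intro k x; rw [hm]; split
    · exact (inv_pos.2 (hN k)).le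
    · exact le_rfl
  have hm_le : ∀ k x, m k x ≤ 1 := by
    intro k x; rw [hm]; split
    · exact hNinv k
    · norm_num
  -- summability of μ's series
  have hμsum : ∀ z, Summable (fun k => c k * m k z) := by
    intro z
    refine hsc.of_nonneg_of_le (fun k => mul_nonneg (hc k).le (hm_nonneg k z)) (fun k => ?_)
    calc c k * m k z ≤ c k * 1 := by
          exact mul_le_mul_of_nonneg_left (hm_le k z) (hc k).le
      _ = c k := mul_one _
  set S : ℝ := ∑ x ∈ U, (f x) ^ 2 with hSdef
  have hS_eq : ∑' x : G, (f x) ^ 2 = S :=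
    tsum_eq_sum (fun x hx => by rw [hf x hx]; ring)
  have hS0 : 0 ≤ S := Finset.sum_nonneg fun x _ => sq_nonneg _
  -- P f on U
  have hPf : ∀ x, P f x = ∑ y ∈ U, f y * μ (y⁻¹ * x) := by
    intro x
    rw [hP]
    exact tsum_eq_sum (fun y hy => by rw [hf y hy, zero_mul])
  -- counting lemma
  have hNcard : ∀ k, (hfin k).toFinset.card = Nat.card (H k) := by
    intro k
    haveI := (hfin k).fintype
    rw [Set.Finite.card_toFinset]
    exact Nat.card_eq_fintype_card.symm
  have key : ∀ k (s : Finset G) (g : G → G), Set.InjOn g s →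
      (∑ y ∈ s, m k (g y)) ≤ min 1 ((s.card : ℝ) / (Nat.card (H k) : ℝ)) := by
    intro k s g hg
    have h1 : (∑ y ∈ s, m k (g y)) =
        ((s.filter (fun y => g y ∈ H k)).card : ℝ) * ((Nat.card (H k) : ℝ))⁻¹ := by
      simp only [hm]
      rw [← Finset.sum_filter, Finset.sum_const, nsmul_eq_mul]
    have hc1 : (s.filter (fun y => g y ∈ H k)).card ≤ Nat.card (H k) := by
      rw [← hNcard k]
      refine Finset.card_le_card_of_injOn g (fun a ha => ?_) ?_
      · simp only [Finset.mem_coe, Set.Finite.mem_toFinset]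
        exact (Finset.mem_filter.1 ha).2
      · intro a ha b hb hab
        exact hg (Finset.mem_coe.1 (Finset.mem_of_mem_filter a ha))
          (Finset.mem_coe.1 (Finset.mem_of_mem_filter b hb)) hab
    have hc2 : (s.filter (fun y => g y ∈ H k)).card ≤ s.card :=
      Finset.card_le_card (Finset.filter_subset _ _)
    rw [h1]
    refine le_min ?_ ?_
    · calc ((s.filter (fun y => g y ∈ H k)).card : ℝ) * ((Nat.card (H k) : ℝ))⁻¹
          ≤ (Nat.card (H k) : ℝ) * ((Nat.card (H k) : ℝ))⁻¹ := by
            apply mul_le_mul_of_nonneg_right _ (inv_pos.2 (hN k)).le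
            exact_mod_cast hc1
        _ = 1 := mul_inv_cancel₀ (hN k).ne'
    · rw [div_eq_mul_inv]
      apply mul_le_mul_of_nonneg_right _ (inv_pos.2 (hN k)).le
      exact_mod_cast hc2
  set M : ℕ → ℝ := fun k => min 1 ((U.card : ℝ) / (Nat.card (H k) : ℝ)) with hMdef
  have hM0 : ∀ k, 0 ≤ M k :=
    fun k => le_min zero_le_one (div_nonneg (Nat.cast_nonneg _) (hN k).le)
  have hM1 : ∀ k, M k ≤ 1 := fun k => min_le_left _ _
  have hrow : ∀ k (a : G), (∑ y ∈ U, m k (y⁻¹ * a)) ≤ M k := by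
    intro k a
    refine key k U (fun y => y⁻¹ * a) ?_
    intro y _ z _ h
    simpa using mul_right_cancel h
  have hcol : ∀ k (b : G), (∑ x ∈ U, m k (b⁻¹ * x)) ≤ M k := by
    intro k b
    refine key k U (fun x => b⁻¹ * x) ?_
    intro y _ z _ h
    exact mul_left_cancel h
  set A : ℕ → ℝ := fun k => ∑ x ∈ U, ∑ y ∈ U, f y * m k (y⁻¹ * x) * f x with hAdef
  have hA_abs : ∀ k, |A k| ≤ M k * S := by
    intro k
    have habs : |A k| ≤ ∑ x ∈ U, ∑ y ∈ U, ((f y)^2 + (f x)^2) / 2 * m k (y⁻¹ * x) := by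
      refine (Finset.abs_sum_le_sum_abs _ _).trans (Finset.sum_le_sum fun x _ => ?_)
      refine (Finset.abs_sum_le_sum_abs _ _).trans (Finset.sum_le_sum fun y _ => ?_)
      rw [abs_mul, abs_mul, abs_of_nonneg (hm_nonneg k _)]
      have h2 : |f y| * |f x| ≤ ((f y)^2 + (f x)^2) / 2 := by
        nlinarith [sq_nonneg (|f y| - |f x|), sq_abs (f y), sq_abs (f x)]
      calc |f y| * m k (y⁻¹ * x) * |f x| = |f y| * |f x| * m k (y⁻¹ * x) := by ring
        _ ≤ ((f y)^2 + (f x)^2) / 2 * m k (y⁻¹ * x) :=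
            mul_le_mul_of_nonneg_right h2 (hm_nonneg k _)
    have hsplit : ∑ x ∈ U, ∑ y ∈ U, ((f y)^2 + (f x)^2) / 2 * m k (y⁻¹ * x)
        = (∑ x ∈ U, ∑ y ∈ U, (f y)^2 * m k (y⁻¹ * x)
          + ∑ x ∈ U, ∑ y ∈ U, (f x)^2 * m k (y⁻¹ * x)) / 2 := by
      rw [← Finset.sum_add_distrib, Finset.sum_div]
      refine Finset.sum_congr rfl fun x _ => ?_
      rw [← Finset.sum_add_distrib, Finset.sum_div]
      exact Finset.sum_congr rfl fun y _ => by ring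
    have hT1 : ∑ x ∈ U, ∑ y ∈ U, (f y)^2 * m k (y⁻¹ * x) ≤ M k * S := by
      rw [Finset.sum_comm]
      calc ∑ y ∈ U, ∑ x ∈ U, (f y)^2 * m k (y⁻¹ * x)
          = ∑ y ∈ U, (f y)^2 * (∑ x ∈ U, m k (y⁻¹ * x)) := by
            exact Finset.sum_congr rfl fun y _ => (Finset.mul_sum _ _ _).symm
        _ ≤ ∑ y ∈ U, (f y)^2 * M k :=
            Finset.sum_le_sum fun y _ => mul_le_mul_of_nonneg_left (hcol k y) (sq_nonneg _)
        _ = M k * S := by rw [← Finset.sum_mul]; ring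
    have hT2 : ∑ x ∈ U, ∑ y ∈ U, (f x)^2 * m k (y⁻¹ * x) ≤ M k * S := by
      calc ∑ x ∈ U, ∑ y ∈ U, (f x)^2 * m k (y⁻¹ * x)
          = ∑ x ∈ U, (f x)^2 * (∑ y ∈ U, m k (y⁻¹ * x)) := by
            exact Finset.sum_congr rfl fun x _ => (Finset.mul_sum _ _ _).symm
        _ ≤ ∑ x ∈ U, (f x)^2 * M k :=
            Finset.sum_le_sum fun x _ => mul_le_mul_of_nonneg_left (hrow k x) (sq_nonneg _)
        _ = M k * S := by rw [← Finset.sum_mul]; ring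
    calc |A k| ≤ _ := habs
      _ = _ := hsplit
      _ ≤ (M k * S + M k * S) / 2 := by linarith
      _ = M k * S := by ring
  have hA_le : ∀ k, A k ≤ M k * S := fun k => (le_abs_self _).trans (hA_abs k)
  have hMsum : Summable (fun k => c k * M k) := by
    refine hsc.of_nonneg_of_le (fun k => mul_nonneg (hc k).le (hM0 k)) (fun k => ?_)
    calc c k * M k ≤ c k * 1 := mul_le_mul_of_nonneg_left (hM1 k) (hc k).le
      _ = c k := mul_one _
  have hAsum : Summable (fun k => c k * A k) := by
    refine Summable.of_abs ?_
    refine (hsc.mul_right S).of_nonneg_of_le (fun k => abs_nonneg _) (fun k => ?_)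
    rw [abs_mul, abs_of_nonneg (hc k).le]
    calc c k * |A k| ≤ c k * (M k * S) := mul_le_mul_of_nonneg_left (hA_abs k) (hc k).le
      _ ≤ c k * (1 * S) := by
          refine mul_le_mul_of_nonneg_left ?_ (hc k).le
          exact mul_le_mul_of_nonneg_right (hM1 k) hS0
      _ = c k * S := by ring
  have hsum1 : ∀ (x y : G), Summable (fun k => f y * (c k * m k (y⁻¹ * x)) * f x) :=
    fun x y => ((hμsum (y⁻¹ * x)).mul_left (f y)).mul_right (f x)
  have hI : ∑ x ∈ U, P f x * f x = ∑' k : ℕ, c k * A k := by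
    calc ∑ x ∈ U, P f x * f x
        = ∑ x ∈ U, ∑ y ∈ U, (∑' k : ℕ, f y * (c k * m k (y⁻¹ * x)) * f x) := by
          refine Finset.sum_congr rfl fun x _ => ?_
          rw [hPf x, Finset.sum_mul]
          refine Finset.sum_congr rfl fun y _ => ?_
          rw [hμ (y⁻¹ * x), ← tsum_mul_left, ← tsum_mul_right]
      _ = ∑ x ∈ U, ∑' k : ℕ, ∑ y ∈ U, f y * (c k * m k (y⁻¹ * x)) * f x := by
          exact Finset.sum_congr rfl fun x _ => (Summable.tsum_finsetSum fun y _ => hsum1 x y).symm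
      _ = ∑' k : ℕ, ∑ x ∈ U, ∑ y ∈ U, f y * (c k * m k (y⁻¹ * x)) * f x :=
          (Summable.tsum_finsetSum fun x _ => summable_sum fun y _ => hsum1 x y).symm
      _ = ∑' k : ℕ, c k * A k := by
          refine tsum_congr fun k => ?_
          rw [Finset.mul_sum]
          refine Finset.sum_congr rfl fun x _ => ?_
          rw [Finset.mul_sum]
          exact Finset.sum_congr rfl fun y _ => by ring
  have hQ : ∑' x : G, (f x - P f x) * f x = S - ∑' k : ℕ, c k * A k := by
    rw [← hI]
    have h0 : ∑' x : G, (f x - P f x) * f x = ∑ x ∈ U, (f x - P f x) * f x :=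
      tsum_eq_sum fun x hx => by rw [hf x hx, mul_zero]
    rw [h0]
    calc ∑ x ∈ U, (f x - P f x) * f x
        = ∑ x ∈ U, ((f x)^2 - P f x * f x) := Finset.sum_congr rfl fun x _ => by ring
      _ = S - ∑ x ∈ U, P f x * f x := by rw [Finset.sum_sub_distrib]
  have hIle : ∑' k : ℕ, c k * A k ≤ (∑' k : ℕ, c k * M k) * S := by
    rw [← tsum_mul_right]
    refine Summable.tsum_le_tsum (fun k => ?_) hAsum (hMsum.mul_right S)
    calc c k * A k ≤ c k * (M k * S) := mul_le_mul_of_nonneg_left (hA_le k) (hc k).le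
      _ = c k * M k * S := by ring
  refine ⟨hS_eq, ?_⟩
  rw [hT, hQ]
  rw [sub_mul, one_mul]
  linarith [hIle]
/-- Theorem 6.2: for every nonempty finite `U ⊆ G`, `λ₁(U) ≥ T(|U|)`, i.e. for
every `f` supported in `U`, `((I-P)f, f) ≥ T(|U|)·‖f‖²`, where
`T(u) = 1 - ∑_k c_k min(1, u/|G_k|)`. Consequently `Λ(v) ≥ T(v)` for `v ≥ 1`. -/
theorem stmt_13 {G : Type*} [Group G]
    (H : ℕ → Subgroup G) (hfin : ∀ k, (H k : Set G).Finite)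
    (hlt : ∀ k, H k < H (k + 1)) (hunion : ∀ x : G, ∃ k, x ∈ H k)
    (c : ℕ → ℝ) (hc : ∀ k, 0 < c k) (hcsum : ∑' k : ℕ, c k = 1)
    (m : ℕ → G → ℝ)
    (hm : ∀ (k : ℕ) (x : G),
      m k x = if x ∈ H k then ((Nat.card (H k) : ℝ))⁻¹ else 0)
    (μ : G → ℝ) (hμ : ∀ x : G, μ x = ∑' k : ℕ, c k * m k x)
    (P : (G → ℝ) → G → ℝ)
    (hP : ∀ (g : G → ℝ) (x : G), P g x = ∑' y : G, g y * μ (y⁻¹ * x))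
    (T : ℝ → ℝ)
    (hT : ∀ u : ℝ, T u = 1 - ∑' k : ℕ, c k * min 1 (u / (Nat.card (H k) : ℝ))) :
    (∀ U : Finset G, U.Nonempty → ∀ f : G → ℝ, (∀ x ∉ U, f x = 0) →
        T (U.card : ℝ) * ∑' x : G, (f x) ^ 2 ≤ ∑' x : G, (f x - P f x) * f x) ∧
    (∀ U : Finset G, U.Nonempty → T (U.card : ℝ) ≤ lamOne P U) ∧
    (∀ v : ℝ, 1 ≤ v → T v ≤ isoProfile P v) := by
  have hsc : Summable c := by
    by_contra h
    rw [tsum_eq_zero_of_not_summable h] at hcsum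
    norm_num at hcsum
  have hN : ∀ k, (0 : ℝ) < (Nat.card (H k) : ℝ) := by
    intro k
    haveI : Finite (H k) := (hfin k).to_subtype
    exact_mod_cast Nat.card_pos
  have hMsum : ∀ u : ℝ, 0 ≤ u →
      Summable (fun k => c k * min 1 (u / (Nat.card (H k) : ℝ))) := by
    intro u hu
    refine hsc.of_nonneg_of_le (fun k => mul_nonneg (hc k).le
      (le_min zero_le_one (div_nonneg hu (hN k).le))) (fun k => ?_)
    calc c k * min 1 (u / (Nat.card (H k) : ℝ)) ≤ c k * 1 :=
          mul_le_mul_of_nonneg_left (min_le_left _ _) (hc k).le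
      _ = c k := mul_one _
  have hTmono : ∀ u v : ℝ, 0 ≤ u → u ≤ v → T v ≤ T u := by
    intro u v hu huv
    rw [hT, hT]
    refine sub_le_sub_left (Summable.tsum_le_tsum (fun k => ?_) (hMsum u hu)
      (hMsum v (hu.trans huv))) 1
    exact mul_le_mul_of_nonneg_left
      (min_le_min le_rfl (div_le_div_of_nonneg_right huv (hN k).le)) (hc k).le
  have part1 : ∀ U : Finset G, ∀ f : G → ℝ, (∀ x ∉ U, f x = 0) →
      T (U.card : ℝ) * ∑' x : G, (f x) ^ 2 ≤ ∑' x : G, (f x - P f x) * f x := by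
    intro U f hf
    obtain ⟨hS_eq, hmain⟩ := aux_main H hfin c hc hcsum m hm μ hμ P hP T hT U f hf
    rw [hS_eq]
    exact hmain
  have part2 : ∀ U : Finset G, U.Nonempty → T (U.card : ℝ) ≤ lamOne P U := by
    intro U hU
    refine le_csInf ?_ ?_
    · obtain ⟨a, ha⟩ := hU
      refine ⟨_, fun x => if x = a then 1 else 0, fun x hx => ?_, fun h => ?_, rfl⟩
      · simp only [ite_eq_right_iff]
        intro hxa; exact absurd (hxa ▸ ha) hx
      · simpa using congrFun h a
    · rintro r ⟨f, hsupp, hne, rfl⟩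
      obtain ⟨hS_eq, hmain⟩ := aux_main H hfin c hc hcsum m hm μ hμ P hP T hT U f hsupp
      obtain ⟨x, hx⟩ := Function.ne_iff.1 hne
      have hxU : x ∈ U := by
        by_contra hxu
        exact hx (hsupp x hxu)
      have hSpos : 0 < ∑ x ∈ U, (f x) ^ 2 := by
        have h1 : (f x) ^ 2 ≤ ∑ x ∈ U, (f x) ^ 2 :=
          Finset.single_le_sum (fun i _ => sq_nonneg (f i)) hxU
        have h2 : 0 < (f x) ^ 2 := (sq_nonneg _).lt_of_ne' (pow_ne_zero 2 hx)
        linarith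
      rw [hS_eq]
      exact (le_div_iff₀ hSpos).2 hmain
  refine ⟨fun U _ => part1 U, part2, ?_⟩
  intro v hv
  refine le_csInf ⟨lamOne P {1}, {1}, Finset.singleton_nonempty 1, by
    simpa using hv, rfl⟩ ?_
  rintro r ⟨U, hUne, hUcard, rfl⟩
  exact (hTmono (U.card : ℝ) v (Nat.cast_nonneg _) hUcard).trans (part2 U hUne)
end
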